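/- arXiv:1212.1815 — 4 statements merged into one kernel-verified Lean document; each statement's English description precedes it below -/
import Mathlib

section
/- Let n ≥ 1 and let K ⊂ ℝ^n be a nonempty convex polyhedron. Then ℝ^n \ K is disconnected (that is, nonempty and not a preconnected subspace) if and only if K is a layer, i.e., there exist an affine automorphism T of ℝ^n and a real number a ≥ 0 such that T(K) = [−a,a] × ℝ^{n−1}. -/
open Bornology Pointwise

/-- A convex polyhedron in `ℝ^n`: a finite intersection of closed half-spaces
`{x | ℓ x ≤ c}` with `ℓ` a nonzero linear functional (the empty intersection,
i.e. all of `ℝ^n`, is allowed). -/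
def IsConvexPolyhedron (n : ℕ) (K : Set (Fin n → ℝ)) : Prop :=
  ∃ (m : ℕ) (L : Fin m → ((Fin n → ℝ) →ₗ[ℝ] ℝ)) (c : Fin m → ℝ),
    (∀ i, L i ≠ 0) ∧ K = {x | ∀ i, L i x ≤ c i}

/-- The dimension of a subset of `ℝ^n`: the dimension of its affine span. -/
noncomputable def polyDim (n : ℕ) (K : Set (Fin n → ℝ)) : ℕ :=
  Module.finrank ℝ (affineSpan ℝ K).direction

/-- `F` is a face of `K`: the intersection of `K` with a supporting hyperplane,
i.e. an affine hyperplane meeting `K` such that `K` lies in one of the two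
closed half-spaces it bounds. -/
def IsFaceOf (n : ℕ) (K F : Set (Fin n → ℝ)) : Prop :=
  ∃ (L : (Fin n → ℝ) →ₗ[ℝ] ℝ) (c : ℝ), L ≠ 0 ∧
    (K ∩ {x | L x = c}).Nonempty ∧ (∀ x ∈ K, L x ≤ c) ∧ F = K ∩ {x | L x = c}

/-- `p` is a vertex of `K`: the singleton `{p}` is a face of `K`. -/
def IsVertexOf (n : ℕ) (K : Set (Fin n → ℝ)) (p : Fin n → ℝ) : Prop :=
  IsFaceOf n K {p}

/-- An edge of `K` is a face of dimension `1`. -/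
def IsEdgeOf (n : ℕ) (K A : Set (Fin n → ℝ)) : Prop :=
  IsFaceOf n K A ∧ polyDim n A = 1

/-- A facet of `K` is a face of dimension `dim K - 1`. -/
def IsFacetOf (n : ℕ) (K F : Set (Fin n → ℝ)) : Prop :=
  IsFaceOf n K F ∧ polyDim n F + 1 = polyDim n K

/-- `A` is an unbounded edge of `K` with direction vector `v`,
i.e. `A = q + ℝ≥0·v` for some vertex `q` of `K` and `v ≠ 0`. -/
def IsUnboundedEdgeWithDir (n : ℕ) (K A : Set (Fin n → ℝ)) (v : Fin n → ℝ) : Prop :=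
  IsEdgeOf n K A ∧ ¬ IsBounded A ∧ v ≠ 0 ∧
    ∃ q, IsVertexOf n K q ∧ A = {x | ∃ t : ℝ, 0 ≤ t ∧ x = q + t • v}

/-- The recession cone of `K`. -/
def recCone (n : ℕ) (K : Set (Fin n → ℝ)) : Set (Fin n → ℝ) :=
  {v | ∀ x ∈ K, ∀ t : ℝ, 0 ≤ t → x + t • v ∈ K}

/-- The projection `π_n : ℝ^n → ℝ^n`, `(x₁,…,x_n) ↦ (x₁,…,x_{n-1},0)`. -/
def projLast (n : ℕ) (x : Fin n → ℝ) : Fin n → ℝ :=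
  fun i => if (i : ℕ) = n - 1 then 0 else x i

/-- The set `A_K`, realized inside the hyperplane `{x_n = 0}` of `ℝ^n`:
points `y = (a,0)` such that the fiber `I_a = π_n⁻¹(a,0) ∩ K` is nonempty
but does not contain `(a,0)`. -/
def AKset (n : ℕ) (K : Set (Fin n → ℝ)) : Set (Fin n → ℝ) :=
  {y | (∀ i : Fin n, (i : ℕ) = n - 1 → y i = 0) ∧
    ({x | projLast n x = y} ∩ K).Nonempty ∧ y ∉ K}

/-- `K` is in first trimming position with respect to its facet `F`. -/
def FirstTrimmingPosition (n : ℕ) (K F : Set (Fin n → ℝ)) : Prop :=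
  IsFacetOf n K F ∧
  (∀ x ∈ F, ∀ i : Fin n, (i : ℕ) = n - 2 → x i = 0) ∧
  (∀ x ∈ K, ∀ i : Fin n, (i : ℕ) = n - 2 → x i ≤ 0) ∧
  (∀ y : Fin n → ℝ, IsBounded ({x | projLast n x = y} ∩ K)) ∧
  IsBounded (AKset n K)

/-- `K` is in second trimming position with respect to its facet `F`. -/
def SecondTrimmingPosition (n : ℕ) (K F : Set (Fin n → ℝ)) : Prop :=
  IsFacetOf n K F ∧
  (∀ x ∈ F, ∀ i : Fin n, (i : ℕ) = n - 1 → x i = 0) ∧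
  (∀ x ∈ K, ∀ i : Fin n, (i : ℕ) = n - 1 → x i ≤ 0) ∧
  IsBounded (AKset n K)

/-- A polynomial map `ℝ^n → ℝ^m`: each component is given by a polynomial. -/
def IsPolynomialMap (n m : ℕ) (f : (Fin n → ℝ) → (Fin m → ℝ)) : Prop :=
  ∃ p : Fin m → MvPolynomial (Fin n) ℝ, ∀ x i, f x i = MvPolynomial.eval x (p i)

theorem exists_dual_one {n : ℕ} (L : (Fin n → ℝ) →ₗ[ℝ] ℝ) (hL : L ≠ 0) :
    ∃ v, L v = 1 := by
  obtain ⟨x, hx⟩ := DFunLike.ne_iff.mp hL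
  simp only [LinearMap.zero_apply] at hx
  exact ⟨(L x)⁻¹ • x, by simp [inv_mul_cancel₀ hx]⟩

theorem bounded_on_halfspace {n : ℕ} (L L' : (Fin n → ℝ) →ₗ[ℝ] ℝ) (v : Fin n → ℝ)
    (hv : L v = 1) (hL' : L' ≠ 0) {c c' : ℝ} (h : ∀ x, c < L x → L' x ≤ c') :
    ∃ μ : ℝ, μ < 0 ∧ L' = μ • L := by
  have key : ∀ w, L w = 0 → L' w = 0 := by
    intro w hw
    by_contra hne
    have hb : ∀ t : ℝ, L' ((c+1) • v) + t * L' w ≤ c' := by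
      intro t
      have hx : L ((c+1) • v + t • w) = c + 1 := by simp [hv, hw]
      have := h ((c+1) • v + t • w) (by rw [hx]; linarith)
      simpa [mul_comm] using this
    have := hb ((c' + 1 - L' ((c+1) • v)) / L' w)
    rw [div_mul_cancel₀ _ hne] at this
    linarith
  set μ := L' v with hμ
  have hrepr : ∀ x, L' x = μ * L x := by
    intro x
    have h0 : L (x - L x • v) = 0 := by simp [hv]
    have h2 := key _ h0
    simp only [map_sub, map_smul, smul_eq_mul] at h2
    linarith
  have hμne : μ ≠ 0 := by
    intro h0
    apply hL'
    apply LinearMap.ext; intro x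
    simp [hrepr x, h0]
  refine ⟨μ, ?_, by apply LinearMap.ext; intro x; simp [hrepr x, mul_comm]⟩
  rcases hμne.lt_or_gt with h1 | h1
  · exact h1
  · exfalso
    set t := max (c+1) ((c'+1)/μ) with ht
    have h2 : L (t • v) = t := by simp [hv]
    have h3 := h (t • v) (by rw [h2]; exact lt_of_lt_of_le (by linarith) (le_max_left _ _))
    rw [hrepr, h2] at h3
    have h4 : (c'+1)/μ ≤ t := le_max_right _ _
    have h5 : μ * ((c'+1)/μ) ≤ μ * t := by nlinarith
    rw [mul_div_cancel₀ _ hμne] at h5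
    linarith
open Bornology Pointwise

/-- Splitting of `ℝ^n` along a functional with `L v = 1`. -/
noncomputable def splitEquiv {n : ℕ} (L : (Fin n → ℝ) →ₗ[ℝ] ℝ) (v : Fin n → ℝ)
    (hv : L v = 1) : (Fin n → ℝ) ≃ₗ[ℝ] ℝ × ↥(LinearMap.ker L) :=
  LinearEquiv.ofLinear
    (L.prod ((LinearMap.id - L.smulRight v).codRestrict (LinearMap.ker L)
      (fun x => by simp [LinearMap.mem_ker, hv])))
    ((LinearMap.toSpanSingleton ℝ _ v).coprod (LinearMap.ker L).subtype)
    (by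
      apply LinearMap.ext
      rintro ⟨t, ⟨w, hw⟩⟩
      rw [LinearMap.mem_ker] at hw
      apply Prod.ext
      · simp [LinearMap.toSpanSingleton, hv, hw]
      · apply Subtype.ext
        simp [LinearMap.toSpanSingleton, hv, hw])
    (by
      apply LinearMap.ext
      intro x
      simp [LinearMap.toSpanSingleton])

theorem splitEquiv_fst {n : ℕ} (L : (Fin n → ℝ) →ₗ[ℝ] ℝ) (v : Fin n → ℝ)
    (hv : L v = 1) (x : Fin n → ℝ) : (splitEquiv L v hv x).1 = L x := by simp [splitEquiv]

theorem splitEquiv_symm_apply {n : ℕ} (L : (Fin n → ℝ) →ₗ[ℝ] ℝ) (v : Fin n → ℝ)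
    (hv : L v = 1) (p : ℝ × ↥(LinearMap.ker L)) :
    (splitEquiv L v hv).symm p = p.1 • v + ↑p.2 := by simp [splitEquiv, LinearMap.toSpanSingleton]

theorem finrank_ker {n : ℕ} (L : (Fin n → ℝ) →ₗ[ℝ] ℝ) (v : Fin n → ℝ)
    (hv : L v = 1) : Module.finrank ℝ ↥(LinearMap.ker L) = n - 1 := by
  have h1 := (splitEquiv L v hv).finrank_eq
  rw [Module.finrank_fin_fun, Module.finrank_prod, Module.finrank_self] at h1
  omega

theorem exists_affineEquiv {n : ℕ} (i0 : Fin n) (L : (Fin n → ℝ) →ₗ[ℝ] ℝ)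
    (v : Fin n → ℝ) (hv : L v = 1) (mid : ℝ) :
    ∃ T : (Fin n → ℝ) ≃ᵃ[ℝ] (Fin n → ℝ), ∀ x, T x i0 = L x - mid := by
  set L0 : (Fin n → ℝ) →ₗ[ℝ] ℝ := LinearMap.proj i0
  set v0 : Fin n → ℝ := Pi.single i0 1
  have hv0 : L0 v0 = 1 := by simp [L0, v0]
  have hfr : Module.finrank ℝ ↥(LinearMap.ker L) = Module.finrank ℝ ↥(LinearMap.ker L0) := by
    rw [finrank_ker L v hv, finrank_ker L0 v0 hv0]
  set F : ↥(LinearMap.ker L) ≃ₗ[ℝ] ↥(LinearMap.ker L0) := LinearEquiv.ofFinrankEq _ _ hfr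
  set M : (Fin n → ℝ) ≃ₗ[ℝ] (Fin n → ℝ) :=
    (splitEquiv L v hv) ≪≫ₗ ((LinearEquiv.refl ℝ ℝ).prodCongr F) ≪≫ₗ
      (splitEquiv L0 v0 hv0).symm
  have hM : ∀ x, M x i0 = L x := by
    intro x
    show (splitEquiv L0 v0 hv0).symm _ i0 = L x
    rw [splitEquiv_symm_apply]
    have hker : ∀ w : ↥(LinearMap.ker L0), (w : Fin n → ℝ) i0 = 0 := fun w =>
      LinearMap.mem_ker.mp w.2
    simp [splitEquiv_fst, v0, hker, Pi.single_apply]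
  refine ⟨M.toAffineEquiv.trans (AffineEquiv.constVAdd ℝ (Fin n → ℝ) (-(mid • v0))), ?_⟩
  intro x
  show (-(mid • v0) + M x) i0 = L x - mid
  simp [hM x, v0, Pi.single_apply]
  ring

theorem slab_compl_not_preconnected {n : ℕ} (i0 : Fin n) (a : ℝ) (ha : 0 ≤ a) :
    ¬ IsPreconnected {x : Fin n → ℝ | |x i0| ≤ a}ᶜ := by
  intro h
  have hu : IsOpen {x : Fin n → ℝ | a < x i0} := isOpen_lt continuous_const (continuous_apply i0)
  have hw : IsOpen {x : Fin n → ℝ | x i0 < -a} := isOpen_lt (continuous_apply i0) continuous_const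
  have hcov : {x : Fin n → ℝ | |x i0| ≤ a}ᶜ ⊆ {x | a < x i0} ∪ {x | x i0 < -a} := by
    intro x hx
    have h1 : a < |x i0| := not_le.mp hx
    rcases lt_abs.mp h1 with h2 | h2
    · exact Or.inl h2
    · exact Or.inr (by simp only [Set.mem_setOf_eq]; linarith)
  have hp : (fun _ : Fin n => a + 1) ∈ {x : Fin n → ℝ | |x i0| ≤ a}ᶜ := by
    simp only [Set.mem_compl_iff, Set.mem_setOf_eq, not_le]
    rw [abs_of_nonneg (by linarith)]; linarith
  have hq : (fun _ : Fin n => -(a + 1)) ∈ {x : Fin n → ℝ | |x i0| ≤ a}ᶜ := by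
    simp only [Set.mem_compl_iff, Set.mem_setOf_eq, not_le]
    rw [abs_of_nonpos (by linarith)]; linarith
  obtain ⟨z, -, hz1, hz2⟩ := h _ _ hu hw hcov
    ⟨_, hp, by simp only [Set.mem_setOf_eq]; linarith⟩
    ⟨_, hq, by simp only [Set.mem_setOf_eq]; linarith⟩
  simp only [Set.mem_setOf_eq] at hz1 hz2
  linarith

theorem image_eq_slab {n : ℕ} (K : Set (Fin n → ℝ)) (T : (Fin n → ℝ) ≃ᵃ[ℝ] (Fin n → ℝ))
    (i : Fin n) (L : (Fin n → ℝ) →ₗ[ℝ] ℝ) (c d : ℝ)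
    (hT : ∀ x, T x i = L x - (c + d) / 2)
    (hK : ∀ x, x ∈ K ↔ d ≤ L x ∧ L x ≤ c) :
    T '' K = {x : Fin n → ℝ | |x i| ≤ (c - d) / 2} := by
  ext y
  simp only [Set.mem_image, Set.mem_setOf_eq]
  constructor
  · rintro ⟨x, hx, rfl⟩
    obtain ⟨h1, h2⟩ := (hK x).mp hx
    rw [hT x, abs_le]
    constructor <;> linarith
  · intro hy
    refine ⟨T.symm y, ?_, T.apply_symm_apply y⟩
    have h2 := hT (T.symm y)
    rw [T.apply_symm_apply] at h2
    rw [abs_le] at hy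
    rw [hK]
    constructor <;> linarith [hy.1, hy.2]

/-- A nonempty convex polyhedron `K ⊆ ℝ^n` disconnects `ℝ^n` if and only if it is a
layer, i.e. affinely equivalent to `[-a,a] × ℝ^{n-1}` for some `a ≥ 0`. -/
theorem complement_disconnected_iff_layer (n : ℕ) (hn : 1 ≤ n)
    (K : Set (Fin n → ℝ)) (hpoly : IsConvexPolyhedron n K) (hne : K.Nonempty) :
    (Kᶜ.Nonempty ∧ ¬ IsPreconnected Kᶜ) ↔
      ∃ (T : (Fin n → ℝ) ≃ᵃ[ℝ] (Fin n → ℝ)) (a : ℝ), 0 ≤ a ∧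
        T '' K = {x : Fin n → ℝ | |x ⟨0, by omega⟩| ≤ a} := by
  classical
  obtain ⟨m, L, cc, hLne, hK⟩ := hpoly
  constructor
  · rintro ⟨-, hdis⟩
    rw [IsPreconnected] at hdis
    push_neg at hdis
    obtain ⟨u, w, hu, hw, hcov, ⟨xu, hxuK, hxuu⟩, ⟨xw, hxwK, hxww⟩, hsep⟩ := hdis
    set U : Fin m → Set (Fin n → ℝ) := fun i => {x | cc i < L i x} with hU
    have hUsub : ∀ i, U i ⊆ Kᶜ := by
      intro i x hx hxK
      rw [hK] at hxK
      exact absurd (hxK i) (not_le.mpr hx)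
    have hKcU : ∀ x ∈ Kᶜ, ∃ i, x ∈ U i := by
      intro x hx
      rw [hK] at hx
      simp only [Set.mem_compl_iff, Set.mem_setOf_eq] at hx
      push_neg at hx
      obtain ⟨i, hi⟩ := hx
      exact ⟨i, hi⟩
    have hUpre : ∀ i, IsPreconnected (U i) := fun i =>
      (convex_halfSpace_gt (LinearMap.isLinear (L i)) (cc i)).isPreconnected
    have hdichot : ∀ i, U i ⊆ u ∨ U i ⊆ w := by
      intro i
      by_contra hc
      push_neg at hc
      obtain ⟨hc1, hc2⟩ := hc
      rw [Set.not_subset] at hc1 hc2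
      obtain ⟨p, hpU, hpu⟩ := hc1
      obtain ⟨q, hqU, hqw⟩ := hc2
      have hsub : U i ⊆ u ∪ w := fun x hx => hcov (hUsub i hx)
      have hp : p ∈ U i ∩ w := ⟨hpU, (hcov (hUsub i hpU)).resolve_left hpu⟩
      have hq : q ∈ U i ∩ u := ⟨hqU, (hcov (hUsub i hqU)).resolve_right hqw⟩
      obtain ⟨z, hzU, hzu, hzw⟩ := hUpre i u w hu hw hsub ⟨q, hq⟩ ⟨p, hp⟩
      have : z ∈ Kᶜ ∩ (u ∩ w) := ⟨hUsub i hzU, hzu, hzw⟩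
      rw [hsep] at this
      exact this
    have hside : ∀ i x, x ∈ U i → x ∈ u → U i ⊆ u := by
      intro i x hxU hxu
      rcases hdichot i with h | h
      · exact h
      · exfalso
        have : x ∈ Kᶜ ∩ (u ∩ w) := ⟨hUsub i hxU, hxu, h hxU⟩
        rw [hsep] at this
        exact this
    have hside' : ∀ i x, x ∈ U i → x ∈ w → U i ⊆ w := by
      intro i x hxU hxw
      rcases hdichot i with h | h
      · exfalso
        have : x ∈ Kᶜ ∩ (u ∩ w) := ⟨hUsub i hxU, h hxU, hxw⟩
        rw [hsep] at this
        exact this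
      · exact h
    obtain ⟨i0, hi0U⟩ := hKcU xu hxuK
    have hi0u : U i0 ⊆ u := hside i0 xu hi0U hxuu
    obtain ⟨j0, hj0U⟩ := hKcU xw hxwK
    have hj0w : U j0 ⊆ w := hside' j0 xw hj0U hxww
    have hdisjoint : ∀ i j, U i ⊆ u → U j ⊆ w → ∀ x, x ∈ U i → x ∉ U j := by
      intro i j hiu hjw x hxi hxj
      have : x ∈ Kᶜ ∩ (u ∩ w) := ⟨hUsub i hxi, hiu hxi, hjw hxj⟩
      rw [hsep] at this
      exact this
    obtain ⟨v, hv⟩ := exists_dual_one (L i0) (hLne i0)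
    obtain ⟨μ0, hμ0neg, hμ0⟩ := bounded_on_halfspace (L i0) (L j0) v hv (hLne j0)
      (fun x hx => not_lt.mp (fun hc => hdisjoint i0 j0 hi0u hj0w x hx hc))
    set r : Fin m → ℝ := fun i => L i v with hr
    have hri0 : r i0 = 1 := hv
    have hrj0 : r j0 = μ0 := by
      simp only [hr, hμ0, LinearMap.smul_apply, smul_eq_mul, hv, mul_one]
    have hall : ∀ i, L i = r i • L i0 ∧ r i ≠ 0 := by
      intro i
      rcases hdichot i with hiu | hiw
      · obtain ⟨v', hv'⟩ := exists_dual_one (L j0) (hLne j0)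
        obtain ⟨ν, hνneg, hν⟩ := bounded_on_halfspace (L j0) (L i) v' hv' (hLne i)
          (fun x hx => not_lt.mp (fun hc => hdisjoint i j0 hiu hj0w x hc hx))
        have hLi : L i = (ν * μ0) • L i0 := by
          rw [hν, hμ0, smul_smul]
        have hri : r i = ν * μ0 := by
          simp only [hr, hLi, LinearMap.smul_apply, smul_eq_mul, hv, mul_one]
        refine ⟨by rw [hLi, hri], ?_⟩
        rw [hri]
        exact ne_of_gt (mul_pos_of_neg_of_neg hνneg hμ0neg)
      · obtain ⟨μ, hμneg, hμ⟩ := bounded_on_halfspace (L i0) (L i) v hv (hLne i)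
          (fun x hx => not_lt.mp (fun hc => hdisjoint i0 i hi0u hiw x hx hc))
        have hri : r i = μ := by
          simp only [hr, hμ, LinearMap.smul_apply, smul_eq_mul, hv, mul_one]
        exact ⟨by rw [hμ, hri], by rw [hri]; exact ne_of_lt hμneg⟩
    set P : Finset (Fin m) := Finset.univ.filter (fun i => 0 < r i) with hP
    set N : Finset (Fin m) := Finset.univ.filter (fun i => r i < 0) with hN
    have hPne : P.Nonempty := ⟨i0, by simp [hP, hri0]⟩
    have hNne : N.Nonempty := ⟨j0, by simp [hN, hrj0, hμ0neg]⟩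
    set cmax : ℝ := P.inf' hPne (fun i => cc i / r i) with hcmax
    set dmin : ℝ := N.sup' hNne (fun i => cc i / r i) with hdmin
    have happ : ∀ i x, L i x = r i * L i0 x := by
      intro i x
      rw [(hall i).1]
      simp [LinearMap.smul_apply, smul_eq_mul]
    have hKiff : ∀ x, x ∈ K ↔ dmin ≤ L i0 x ∧ L i0 x ≤ cmax := by
      intro x
      rw [hK]
      simp only [Set.mem_setOf_eq]
      constructor
      · intro hx
        constructor
        · rw [hdmin, Finset.sup'_le_iff]
          intro i hi
          have hri : r i < 0 := (Finset.mem_filter.mp hi).2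
          have h1 := hx i
          rw [happ] at h1
          rw [div_le_iff_of_neg hri]
          linarith
        · rw [hcmax, Finset.le_inf'_iff]
          intro i hi
          have hri : 0 < r i := (Finset.mem_filter.mp hi).2
          have h1 := hx i
          rw [happ] at h1
          rw [le_div_iff₀ hri]
          linarith
      · rintro ⟨h1, h2⟩ i
        rw [happ]
        rcases (hall i).2.lt_or_gt with hri | hri
        · have hmem : i ∈ N := by rw [hN]; simp [hri]
          have h3 : cc i / r i ≤ dmin := Finset.le_sup' (fun j => cc j / r j) hmem
          have h4 : cc i / r i ≤ L i0 x := le_trans h3 h1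
          rw [div_le_iff_of_neg hri] at h4
          linarith
        · have hmem : i ∈ P := by rw [hP]; simp [hri]
          have h3 : cmax ≤ cc i / r i := Finset.inf'_le (fun j => cc j / r j) hmem
          have h4 : L i0 x ≤ cc i / r i := le_trans h2 h3
          rw [le_div_iff₀ hri] at h4
          linarith
    have hd_le_c : dmin ≤ cmax := by
      obtain ⟨x0, hx0⟩ := hne
      obtain ⟨h1, h2⟩ := (hKiff x0).mp hx0
      linarith
    obtain ⟨T, hT⟩ := exists_affineEquiv (⟨0, by omega⟩ : Fin n) (L i0) v hv
      ((cmax + dmin) / 2)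
    exact ⟨T, (cmax - dmin) / 2, by linarith,
      image_eq_slab K T _ (L i0) cmax dmin hT hKiff⟩
  · rintro ⟨T, a, ha, hTK⟩
    have hcomp : T '' Kᶜ = {x : Fin n → ℝ | |x ⟨0, by omega⟩| ≤ a}ᶜ := by
      rw [Set.image_compl_eq T.bijective, hTK]
    have hccne : ({x : Fin n → ℝ | |x (⟨0, by omega⟩ : Fin n)| ≤ a}ᶜ).Nonempty := by
      refine ⟨fun _ => a + 1, ?_⟩
      simp only [Set.mem_compl_iff, Set.mem_setOf_eq, not_le]
      rw [abs_of_nonneg (by linarith)]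
      linarith
    constructor
    · obtain ⟨y, hy⟩ := hccne
      rw [← hcomp] at hy
      obtain ⟨x, hx, -⟩ := hy
      exact ⟨x, hx⟩
    · intro hpre
      have hcont : Continuous T := by
        have h1 : Continuous T.linear := T.linear.continuous_of_finiteDimensional
        have h2 : ⇑T = fun x => T.linear x + T 0 := by
          funext x
          have h3 := T.toAffineMap.map_vadd (0 : Fin n → ℝ) x
          simpa using h3
        rw [h2]
        exact h1.add continuous_const
      have himg := hpre.image T hcont.continuousOn
      rw [hcomp] at himg
      exact slab_compl_not_preconnected _ a ha himg
end

section
/- Let K ⊂ ℝ³ be a non-degenerate 3-dimensional unbounded convex polyhedron and let F be a facet of K containing two unbounded edges of K whose direction vectors are linearly independent. Then K can be placed in first trimming position with respect to F. -/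
set_option linter.unusedSectionVars false
set_option maxHeartbeats 1000000


open Bornology Pointwise

namespace PFT
open Finset

variable {ι : Type*} [Fintype ι]

/-- feasibility of the system `p i * a + q i * b + r i * t ≤ c i`. -/
def Feas (p q r c : ι → ℝ) (a b t : ℝ) : Prop :=
  ∀ i, p i * a + q i * b + r i * t ≤ c i

/-- combined index for the Fourier–Motzkin projection -/
abbrev FMI (ι : Type*) := Sum ι (ι × ι)

def fmA (p r : ι → ℝ) : FMI ι → ℝ
  | .inl i => p i
  | .inr ij => (- r ij.2) * p ij.1 + r ij.1 * p ij.2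

def fmE (r c : ι → ℝ) : FMI ι → ℝ
  | .inl i => c i
  | .inr ij => (- r ij.2) * c ij.1 + r ij.1 * c ij.2

def fmOk (r : ι → ℝ) : FMI ι → Prop
  | .inl i => r i = 0
  | .inr ij => 0 < r ij.1 ∧ r ij.2 < 0

/-- the projected system -/
def FMP (p q r c : ι → ℝ) (a b : ℝ) : Prop :=
  ∀ k, fmOk r k → fmA p r k * a + fmA q r k * b ≤ fmE r c k

theorem fm_forward {p q r c : ι → ℝ} {a b t : ℝ} (h : Feas p q r c a b t) :
    FMP p q r c a b := by
  intro k hk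
  match k with
  | .inl i =>
      have hh := h i
      rw [hk] at hh
      simp only [fmA, fmE]
      linarith [hh]
  | .inr ij =>
      obtain ⟨hi, hj⟩ := hk
      have h1 : (- r ij.2) * (p ij.1 * a + q ij.1 * b + r ij.1 * t)
          ≤ (- r ij.2) * c ij.1 :=
        mul_le_mul_of_nonneg_left (h ij.1) (by linarith)
      have h2 : r ij.1 * (p ij.2 * a + q ij.2 * b + r ij.2 * t)
          ≤ r ij.1 * c ij.2 :=
        mul_le_mul_of_nonneg_left (h ij.2) hi.le
      simp only [fmA, fmE]
      nlinarith [h1, h2]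

theorem fm_backward {p q r c : ι → ℝ} {a b : ℝ} (hpos : ∃ i, 0 < r i)
    (h : FMP p q r c a b) : ∃ t, Feas p q r c a b t := by
  classical
  obtain ⟨i₀, hi₀⟩ := hpos
  set S : Finset ι := univ.filter (fun i => 0 < r i) with hS
  have hSne : ((S.image fun i => (c i - p i * a - q i * b) / r i)).Nonempty := by
    refine (Finset.image_nonempty).2 ⟨i₀, ?_⟩
    simp [hS, hi₀]
  set t := (S.image fun i => (c i - p i * a - q i * b) / r i).min' hSne with ht
  refine ⟨t, fun i => ?_⟩
  rcases lt_trichotomy (r i) 0 with hri | hri | hri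
  · -- lower-bound constraints: use the attained min
    obtain ⟨j, hjS, hj⟩ := Finset.mem_image.1 ((S.image _).min'_mem hSne)
    have hjr : 0 < r j := by simpa [hS] using hjS
    have hcross := h (.inr (j, i)) ⟨hjr, hri⟩
    simp only [fmA, fmE] at hcross
    have htj : t = (c j - p j * a - q j * b) / r j := hj.symm
    have hrt : r j * t = c j - p j * a - q j * b := by
      rw [htj]; field_simp
    nlinarith [hcross, hrt, mul_pos hjr (neg_pos.2 hri)]
  · have hh := h (.inl i) (by simpa [fmOk] using hri)
    simp only [fmA, fmE] at hh
    rw [hri]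
    linarith [hh]
  · have hmem : (c i - p i * a - q i * b) / r i ∈
        S.image fun i => (c i - p i * a - q i * b) / r i := by
      refine Finset.mem_image.2 ⟨i, ?_, rfl⟩
      simp [hS, hri]
    have := Finset.min'_le _ _ hmem
    rw [← ht] at this
    have : r i * t ≤ c i - p i * a - q i * b := by
      rw [← le_div_iff₀' hri] ; exact this
    linarith

/-- homogeneous feasibility (recession cone) -/
def Rec0 (p q r : ι → ℝ) (x y z : ℝ) : Prop :=
  ∀ i, p i * x + q i * y + r i * z ≤ 0

theorem rec0_iff_feas {p q r : ι → ℝ} {x y z : ℝ} :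
    Rec0 p q r x y z ↔ Feas p q r (fun _ => 0) x y z := Iff.rfl

/-- homogeneous projected system -/
def PH (p q r : ι → ℝ) (x y : ℝ) : Prop :=
  ∀ k, fmOk r k → fmA p r k * x + fmA q r k * y ≤ 0

theorem fmE_zero (r : ι → ℝ) (k : FMI ι) : fmE r (fun _ => (0:ℝ)) k = 0 := by
  match k with
  | .inl i => rfl
  | .inr ij => show (- r ij.2) * 0 + r ij.1 * 0 = 0; ring

theorem PH_iff_FMP {p q r : ι → ℝ} {x y : ℝ} :
    PH p q r x y ↔ FMP p q r (fun _ => 0) x y := by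
  unfold PH FMP
  constructor <;> intro h k hk <;> have := h k hk <;> rw [fmE_zero] at * <;> linarith [this]

theorem rec0_add {p q r : ι → ℝ} {x y z x' y' z' : ℝ}
    (h : Rec0 p q r x y z) (h' : Rec0 p q r x' y' z') :
    Rec0 p q r (x + x') (y + y') (z + z') := by
  intro i; have := h i; have := h' i; ring_nf; nlinarith [h i, h' i]

theorem rec0_smul {p q r : ι → ℝ} {x y z t : ℝ} (ht : 0 ≤ t)
    (h : Rec0 p q r x y z) : Rec0 p q r (t * x) (t * y) (t * z) := by
  intro i
  have h2 : t * (p i * x + q i * y + r i * z) ≤ t * 0 := mul_le_mul_of_nonneg_left (h i) ht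
  nlinarith [h2]

theorem vert_zero {p q r : ι → ℝ} (hpos : ∃ i, 0 < r i) (hneg : ∃ i, r i < 0)
    {z : ℝ} (h : Rec0 p q r 0 0 z) : z = 0 := by
  obtain ⟨i, hi⟩ := hpos
  obtain ⟨j, hj⟩ := hneg
  have h1 := h i
  have h2 := h j
  simp only [mul_zero, zero_add] at h1 h2
  nlinarith [h1, h2]

section Signs

variable {p q r : ι → ℝ}
variable (hw1 : ∃ ξ θ : ℝ, 0 < ξ ∧ 0 < θ ∧ Rec0 p q r ξ 0 θ)
variable (hw2 : ∃ ξ θ : ℝ, 0 < ξ ∧ θ < 0 ∧ Rec0 p q r ξ 0 θ)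

include hw1 hw2

theorem p_nonpos : ∀ i, p i ≤ 0 := by
  obtain ⟨ξ, θ, hξ, hθ, hw⟩ := hw1
  obtain ⟨ξ', θ', hξ', hθ', hw'⟩ := hw2
  intro i
  have h1 := hw i
  have h2 := hw' i
  simp only [mul_zero, add_zero, zero_add] at h1 h2
  nlinarith [h1, h2, mul_pos hξ (neg_pos.2 hθ'), mul_pos hξ' hθ]

theorem p_neg_of_r {i : ι} (hri : r i ≠ 0) : p i < 0 := by
  rcases lt_or_eq_of_le (p_nonpos hw1 hw2 i) with h | h
  · exact h
  · exfalso
    obtain ⟨ξ, θ, hξ, hθ, hw⟩ := hw1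
    obtain ⟨ξ', θ', hξ', hθ', hw'⟩ := hw2
    have h1 := hw i
    have h2 := hw' i
    rw [h] at h1 h2
    simp only [mul_zero, add_zero, zero_add, zero_mul] at h1 h2
    rcases lt_or_gt_of_ne hri with hr | hr
    · nlinarith [h2]
    · nlinarith [h1]

theorem fmA_nonpos : ∀ k, fmOk r k → fmA p r k ≤ 0 := by
  intro k hk
  match k with
  | .inl i => exact p_nonpos hw1 hw2 i
  | .inr ij =>
      obtain ⟨hi, hj⟩ := hk
      have := p_nonpos hw1 hw2 ij.1
      have := p_nonpos hw1 hw2 ij.2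
      simp only [fmA]
      nlinarith

theorem not_PH_neg_eps (hpos : ∃ i, 0 < r i) (hneg : ∃ i, r i < 0) :
    ¬ PH p q r (-1) 0 := by
  intro hPH
  obtain ⟨z, hz⟩ := fm_backward hpos (PH_iff_FMP.1 hPH)
  rw [← rec0_iff_feas] at hz
  obtain ⟨ξ, θ, hξ, hθ, hw⟩ := hw1
  obtain ⟨ξ', θ', hξ', hθ', hw'⟩ := hw2
  have c1 : Rec0 p q r 0 0 (ξ * z + θ) := by
    have h2 := rec0_add (rec0_smul hξ.le hz) hw
    rw [show ξ * (-1) + ξ = 0 by ring, show ξ * 0 + 0 = 0 by ring] at h2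
    exact h2
  have c2 : Rec0 p q r 0 0 (ξ' * z + θ') := by
    have h2 := rec0_add (rec0_smul hξ'.le hz) hw'
    rw [show ξ' * (-1) + ξ' = 0 by ring, show ξ' * 0 + 0 = 0 by ring] at h2
    exact h2
  have e1 := vert_zero hpos hneg c1
  have e2 := vert_zero hpos hneg c2
  nlinarith [e1, e2, mul_pos hξ hθ, mul_pos hξ' (neg_pos.2 hθ')]

theorem exists_fmA_neg (hpos : ∃ i, 0 < r i) (hneg : ∃ i, r i < 0) :
    ∃ k, fmOk r k ∧ fmA p r k < 0 := by
  have h := not_PH_neg_eps hw1 hw2 hpos hneg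
  unfold PH at h
  push_neg at h
  obtain ⟨k, hk, hlt⟩ := h
  exact ⟨k, hk, by nlinarith [hlt]⟩

end Signs

section Crux

variable {p q r c : ι → ℝ}

/-- feasibility of a point implies `b ≤ 0` when the `Λ`-row is present -/
theorem b_nonpos (hL : ∃ i₀, p i₀ = 0 ∧ q i₀ = 1 ∧ r i₀ = 0 ∧ c i₀ = 0)
    {a b : ℝ} (h : FMP p q r c a b) : b ≤ 0 := by
  obtain ⟨i₀, hp0, hq0, hr0, hc0⟩ := hL
  have := h (.inl i₀) (by simpa [fmOk] using hr0)
  simp only [fmA, fmE] at this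
  rw [hp0, hq0, hc0] at this
  linarith

/-- division form of a cross (Fourier–Motzkin) inequality -/
theorem cross_div {ri rj X Y : ℝ} (hi : 0 < ri) (hj : rj < 0)
    (hcross : 0 ≤ (-rj) * Y + ri * X) : X / rj ≤ Y / ri := by
  have hij : 0 < ri * (-rj) := mul_pos hi (neg_pos.2 hj)
  have key : Y / ri - X / rj = ((-rj) * Y + ri * X) / (ri * (-rj)) := by
    rw [div_sub_div _ _ hi.ne' hj.ne, div_eq_div_iff (mul_ne_zero hi.ne' hj.ne) hij.ne']
    ring
  have : 0 ≤ Y / ri - X / rj := by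
    rw [key]
    exact div_nonneg hcross hij.le
  linarith

theorem crux (hpos : ∃ i, 0 < r i) (hneg : ∃ i, r i < 0)
    (hL : ∃ i₀, p i₀ = 0 ∧ q i₀ = 1 ∧ r i₀ = 0 ∧ c i₀ = 0)
    (hw1 : ∃ ξ θ : ℝ, 0 < ξ ∧ 0 < θ ∧ Rec0 p q r ξ 0 θ)
    (hw2 : ∃ ξ θ : ℝ, 0 < ξ ∧ θ < 0 ∧ Rec0 p q r ξ 0 θ)
    (hne : ∃ a b t, Feas p q r c a b t) :
    ∃ ω₁ ω₂ R : ℝ, 0 ≤ R ∧ ∀ a b : ℝ, (∃ t, Feas p q r c a b t) →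
      ¬ Feas p q r c a b (ω₁ * b + ω₂) → |a| ≤ R ∧ |b| ≤ R := by
  classical
  -- basic sign facts
  have hple : ∀ i, p i ≤ 0 := p_nonpos hw1 hw2
  have hplt : ∀ i, r i ≠ 0 → p i < 0 := fun i h => p_neg_of_r hw1 hw2 h
  have hAle : ∀ k, fmOk r k → fmA p r k ≤ 0 := fmA_nonpos hw1 hw2
  have hAneg : ∃ k, fmOk r k ∧ fmA p r k < 0 := exists_fmA_neg hw1 hw2 hpos hneg
  by_cases hy : ∃ x, PH p q r x (-1)
  ·
    -- ====================== two-dimensional recession cone case =================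
    obtain ⟨x₀, hx₀⟩ := hy
    set B1 : Set ℝ := {x | PH p q r x (-1)} with hB1
    obtain ⟨k₀, hk₀ok, hk₀A⟩ := hAneg
    have hB1bdd : BddBelow B1 := by
      refine ⟨fmA q r k₀ / fmA p r k₀, fun x hx => ?_⟩
      have h1 := hx k₀ hk₀ok
      rw [div_le_iff_of_neg hk₀A]
      linarith
    set xm : ℝ := sInf B1 with hxm
    have hxmem : xm ∈ B1 := by
      intro k hk
      rcases lt_or_eq_of_le (hAle k hk) with hA | hA
      · have key : fmA p r k * xm ≤ fmA q r k := by
          apply le_of_forall_pos_le_add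
          intro ε hε
          have hδ : 0 < ε / (-(fmA p r k)) := div_pos hε (by linarith)
          have hx₀B : x₀ ∈ B1 := hx₀
          obtain ⟨x, hxB, hxlt⟩ := exists_lt_of_csInf_lt (s := B1) ⟨x₀, hx₀B⟩
            (show sInf B1 < xm + ε / (-(fmA p r k)) from by rw [← hxm]; linarith)
          have h2 := hxB k hk
          have h3 : xm ≤ x := csInf_le hB1bdd hxB
          have h5 : (-(fmA p r k)) * (ε / (-(fmA p r k))) = ε := by
            field_simp [ne_of_lt hA]
          nlinarith [h2, h3, hxlt, h5, hA]
        linarith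
      · have h0 := hx₀ k hk
        rw [hA] at h0 ⊢
        linarith
    -- the infimum is attained at one of the constraints
    set Qneg : Finset (FMI ι) := Finset.univ.filter
        (fun k => fmOk r k ∧ fmA p r k < 0) with hQ
    have hk₀Q : k₀ ∈ Qneg := by simp [hQ, hk₀ok, hk₀A]
    have hQne : Qneg.Nonempty := ⟨k₀, hk₀Q⟩
    have hQimne : (Qneg.image fun k => fmA q r k / fmA p r k).Nonempty :=
      hQne.image _
    have hQmem : ∀ k ∈ Qneg, fmOk r k ∧ fmA p r k < 0 := by
      intro k hk; simpa [hQ] using hk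
    set xmax := (Qneg.image fun k => fmA q r k / fmA p r k).max' hQimne with hxmax
    have hmax_le : xmax ≤ xm := by
      apply Finset.max'_le
      intro y hy'
      obtain ⟨k, hkQ, rfl⟩ := Finset.mem_image.1 hy'
      obtain ⟨hkok, hkA⟩ := hQmem k hkQ
      have h1 := hxmem k hkok
      rw [div_le_iff_of_neg hkA]
      linarith
    have hmaxB1 : xmax ∈ B1 := by
      intro k hk
      rcases lt_or_eq_of_le (hAle k hk) with hA | hA
      · have hkQ : k ∈ Qneg := by simp [hQ, hk, hA]
        have h1 : fmA q r k / fmA p r k ≤ xmax := by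
          apply Finset.le_max' (Qneg.image fun k => fmA q r k / fmA p r k)
          exact Finset.mem_image.2 ⟨k, hkQ, rfl⟩
        rw [div_le_iff_of_neg hA] at h1
        linarith
      · have h0 := hxmem k hk
        rw [hA] at h0 ⊢
        linarith
    have hxeq : xm = xmax := le_antisymm (csInf_le hB1bdd hmaxB1) hmax_le
    obtain ⟨ks, hksQ, hksval⟩ := Finset.mem_image.1
      ((Qneg.image fun k => fmA q r k / fmA p r k).max'_mem hQimne)
    obtain ⟨hksok, hksA⟩ := hQmem ks hksQ
    have hksval' : fmA q r ks / fmA p r ks = xmax := hksval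
    have hkstight : fmA p r ks * xm = fmA q r ks := by
      rw [hxeq, ← hksval', mul_comm, div_mul_cancel₀ _ (ne_of_lt hksA)]
    -- the global lower bound for τ = a + xm * b on the projection
    set τmin := fmE r c ks / fmA p r ks with hτmindef
    have hτlb : ∀ a b : ℝ, FMP p q r c a b → τmin ≤ a + xm * b := by
      intro a b hP
      have h1 := hP ks hksok
      have h2 : fmA p r ks * xm * b = fmA q r ks * b := by rw [hkstight]
      rw [hτmindef, div_le_iff_of_neg hksA]
      nlinarith [h1, h2]
    -- lifts of the ray (xm, -1)
    have hIpne : (Finset.univ.filter (fun i => 0 < r i)).Nonempty := by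
      obtain ⟨i, hi⟩ := hpos; exact ⟨i, by simp [hi]⟩
    have hInne : (Finset.univ.filter (fun i => r i < 0)).Nonempty := by
      obtain ⟨i, hi⟩ := hneg; exact ⟨i, by simp [hi]⟩
    set θhi := ((Finset.univ.filter (fun i => 0 < r i)).image
        (fun i => (q i - p i * xm) / r i)).min' (hIpne.image _) with hθhi
    set θlo := ((Finset.univ.filter (fun i => r i < 0)).image
        (fun i => (q i - p i * xm) / r i)).max' (hInne.image _) with hθlo
    obtain ⟨z0, hz0⟩ : ∃ z, Rec0 p q r xm (-1) z := by
      obtain ⟨z, hz⟩ := fm_backward hpos (PH_iff_FMP.1 hxmem)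
      exact ⟨z, hz⟩
    have hlohi : θlo ≤ θhi := by
      have hz0hi : z0 ≤ θhi := by
        apply Finset.le_min'
        intro y hy'
        obtain ⟨i, hiP, rfl⟩ := Finset.mem_image.1 hy'
        have hir : 0 < r i := by simpa using hiP
        have h1 := hz0 i
        rw [le_div_iff₀ hir]
        linarith
      have hz0lo : θlo ≤ z0 := by
        apply Finset.max'_le
        intro y hy'
        obtain ⟨i, hiN, rfl⟩ := Finset.mem_image.1 hy'
        have hir : r i < 0 := by simpa using hiN
        have h1 := hz0 i
        rw [div_le_iff_of_neg hir]
        linarith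
      linarith
    set y₂ := (θlo + θhi) / 2 with hy₂
    have hrecmid : Rec0 p q r xm (-1) y₂ := by
      intro i
      rcases lt_trichotomy (r i) 0 with hri | hri | hri
      · have h1 : (q i - p i * xm) / r i ≤ θlo := by
          apply Finset.le_max'
          exact Finset.mem_image.2 ⟨i, by simp [hri], rfl⟩
        have h2 : (q i - p i * xm) / r i ≤ y₂ := by
          rw [hy₂]; linarith
        rw [div_le_iff_of_neg hri] at h2
        linarith
      · have h0 := hxmem (.inl i) (by simpa [fmOk] using hri)
        simp only [fmA] at h0
        rw [hri]
        linarith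
      · have h1 : θhi ≤ (q i - p i * xm) / r i := by
          apply Finset.min'_le
          exact Finset.mem_image.2 ⟨i, by simp [hri], rfl⟩
        have h2 : y₂ ≤ (q i - p i * xm) / r i := by
          rw [hy₂]; linarith
        rw [le_div_iff₀ hri] at h2
        linarith
    -- the "vertical offset" of each constraint along the ray
    have hΦle : ∀ i, p i * xm - q i + r i * y₂ ≤ 0 := by
      intro i
      linarith [hrecmid i]
    -- infimum of τ over the projection
    have hPne : ∃ a b, FMP p q r c a b := by
      obtain ⟨a, b, t, h⟩ := hne
      exact ⟨a, b, fm_forward h⟩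
    set TS : Set ℝ := {τ | ∃ a b, FMP p q r c a b ∧ τ = a + xm * b} with hTS
    have hTSne : TS.Nonempty := by
      obtain ⟨a, b, hP⟩ := hPne
      exact ⟨a + xm * b, a, b, hP, rfl⟩
    have hTSbdd : BddBelow TS := by
      refine ⟨τmin, fun τ hτ => ?_⟩
      obtain ⟨a, b, hP, rfl⟩ := hτ
      exact hτlb a b hP
    set τinf := sInf TS with hτinf
    have hτinf_le : ∀ a b : ℝ, FMP p q r c a b → τinf ≤ a + xm * b := by
      intro a b hP
      exact csInf_le hTSbdd ⟨a, b, hP, rfl⟩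
    -- matched constraint sets and the constant
    set Φ : ι → ℝ := fun i => p i * xm - q i + r i * y₂ with hΦ
    set cv : ι → ℝ := fun i => (c i - p i * τinf) / r i with hcv
    set Jm : Finset ι := Finset.univ.filter (fun j => r j < 0 ∧ Φ j = 0) with hJm
    set Im : Finset ι := Finset.univ.filter (fun i => 0 < r i ∧ Φ i = 0) with hIm
    -- compatibility of the matched bounds
    have compat : ∀ j ∈ Jm, ∀ i ∈ Im, cv j ≤ cv i := by
      intro j hj i hi
      obtain ⟨hrj, hΦj⟩ : r j < 0 ∧ Φ j = 0 := by simpa [hJm] using hj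
      obtain ⟨hri, hΦi⟩ : 0 < r i ∧ Φ i = 0 := by simpa [hIm] using hi
      simp only [hΦ] at hΦj hΦi
      have hpj := hplt j (ne_of_lt hrj)
      have hpi := hplt i (ne_of_gt hri)
      have hsj : 0 < p j / r j := div_pos_of_neg_of_neg hpj hrj
      have hsi : p i / r i < 0 := div_neg_of_neg_of_pos hpi hri
      have hcvj : cv j = c j / r j - (p j / r j) * τinf := by
        simp only [hcv]; ring
      have hcvi : cv i = c i / r i - (p i / r i) * τinf := by
        simp only [hcv]; ring
      rw [hcvj, hcvi]
      apply le_of_forall_pos_le_add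
      intro ε hε
      have hden : 0 < p j / r j - p i / r i := by linarith
      have hδ : 0 < ε / (p j / r j - p i / r i) := by positivity
      obtain ⟨τ, hτTS, hτlt⟩ := exists_lt_of_csInf_lt hTSne
        (show sInf TS < τinf + ε / (p j / r j - p i / r i) by rw [← hτinf]; linarith)
      obtain ⟨a, b, hP, rfl⟩ := hτTS
      have hτge : τinf ≤ a + xm * b := hτinf_le a b hP
      -- cross inequality in division form
      have hcross := hP (.inr (i, j)) ⟨hri, hrj⟩
      simp only [fmA, fmE] at hcross
      have hdiv : (c j - (p j * a + q j * b)) / r j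
          ≤ (c i - (p i * a + q i * b)) / r i := by
        apply cross_div hri hrj
        nlinarith [hcross]
      -- turn into τ-form, using the matching relations
      have hXj : c j - (p j * a + q j * b)
          = (c j - p j * (a + xm * b)) - b * (r j * y₂)
            + b * (p j * xm - q j + r j * y₂) := by
        ring
      have hXi : c i - (p i * a + q i * b)
          = (c i - p i * (a + xm * b)) - b * (r i * y₂)
            + b * (p i * xm - q i + r i * y₂) := by
        ring
      rw [hXj, hXi, hΦj, hΦi] at hdiv
      have hdivj : ((c j - p j * (a + xm * b)) - b * (r j * y₂) + b * 0) / r j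
          = c j / r j - (p j / r j) * (a + xm * b) - b * y₂ := by
        field_simp [ne_of_lt hrj]
        ring
      have hdivi : ((c i - p i * (a + xm * b)) - b * (r i * y₂) + b * 0) / r i
          = c i / r i - (p i / r i) * (a + xm * b) - b * y₂ := by
        field_simp [ne_of_gt hri]
        ring
      rw [hdivj, hdivi] at hdiv
      have e1 : (p j / r j) * (a + xm * b - τinf)
          ≤ (p j / r j) * (ε / (p j / r j - p i / r i)) := by
        apply mul_le_mul_of_nonneg_left _ hsj.le
        linarith
      have e2 : (- (p i / r i)) * (a + xm * b - τinf)
          ≤ (- (p i / r i)) * (ε / (p j / r j - p i / r i)) := by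
        apply mul_le_mul_of_nonneg_left _ (by linarith)
        linarith
      have e3 : (p j / r j - p i / r i) * (ε / (p j / r j - p i / r i)) = ε := by
        rw [mul_comm, div_mul_cancel₀ _ hden.ne']
      nlinarith [hdiv, e1, e2, e3]
    -- choice of the constant
    set cstar : ℝ :=
      if hJ : Jm.Nonempty then (Jm.image cv).max' (hJ.image _)
      else if hI : Im.Nonempty then (Im.image cv).min' (hI.image _)
      else 0 with hcstar
    have cstar_ge : ∀ j ∈ Jm, cv j ≤ cstar := by
      intro j hj
      rw [hcstar, dif_pos ⟨j, hj⟩]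
      exact Finset.le_max' _ _ (Finset.mem_image.2 ⟨j, hj, rfl⟩)
    have cstar_le : ∀ i ∈ Im, cstar ≤ cv i := by
      intro i hi
      rw [hcstar]
      by_cases hJ : Jm.Nonempty
      · rw [dif_pos hJ]
        apply Finset.max'_le
        intro y hy'
        obtain ⟨j, hjJ, rfl⟩ := Finset.mem_image.1 hy'
        exact compat j hjJ i hi
      · rw [dif_neg hJ, dif_pos ⟨i, hi⟩]
        exact Finset.min'_le _ _ (Finset.mem_image.2 ⟨i, hi, rfl⟩)
    -- the matched multiplicative bound
    have hmul : ∀ i, r i ≠ 0 → Φ i = 0 → r i * cstar ≤ c i - p i * τinf := by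
      intro i hir hiΦ
      rcases lt_or_gt_of_ne hir with hri | hri
      · have hiJ : i ∈ Jm := by simp [hJm, hri, hiΦ]
        have h1 := cstar_ge i hiJ
        simp only [hcv] at h1
        rw [div_le_iff_of_neg hri] at h1
        linarith
      · have hiI : i ∈ Im := by simp [hIm, hri, hiΦ]
        have h1 := cstar_le i hiI
        simp only [hcv] at h1
        rw [le_div_iff₀ hri] at h1
        linarith
    -- final bound assembly
    clear_value B1 xm xmax τmin θhi θlo y₂ TS τinf Φ cv Jm Im cstar
    refine ⟨-y₂, cstar,
      ∑ i, (|τmin| + |(c i - r i * cstar) / p i|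
        + (1 + |xm|) * |(r i * cstar - c i + p i * τmin) / (-(Φ i))|), ?_, ?_⟩
    · apply Finset.sum_nonneg
      intro i _
      positivity
    intro a b hfeas hviol
    have hP : FMP p q r c a b := by
      obtain ⟨t, ht⟩ := hfeas
      exact fm_forward ht
    have hble : b ≤ 0 := b_nonpos hL hP
    obtain ⟨i, hvi⟩ : ∃ i, ¬ (p i * a + q i * b + r i * (-y₂ * b + cstar) ≤ c i) := by
      by_contra hco
      push_neg at hco
      exact hviol hco
    push_neg at hvi
    have hir : r i ≠ 0 := by
      intro h0
      have hfm := hP (.inl i) (by simpa [fmOk] using h0)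
      simp only [fmA, fmE] at hfm
      rw [h0] at hvi
      linarith
    have hpi := hplt i hir
    have hτge : τinf ≤ a + xm * b := hτinf_le a b hP
    have hτgemin : τmin ≤ a + xm * b := hτlb a b hP
    -- multiplicative form of the violation
    have hviM : r i * cstar > c i - p i * (a + xm * b) + b * Φ i := by
      simp only [hΦ]
      nlinarith [hvi]
    rcases eq_or_lt_of_le (hΦle i) with hΦi | hΦi
    · -- matched constraint: contradiction
      exfalso
      have h1 := hmul i hir (by simp only [hΦ]; exact hΦi)
      have h2 : b * Φ i = 0 := by simp only [hΦ]; rw [hΦi]; ring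
      nlinarith [hviM, h1, h2, mul_nonneg (neg_nonneg.2 hpi.le) (sub_nonneg.2 hτge)]
    · -- unmatched: explicit bounds
      have hΦi' : Φ i < 0 := by simp only [hΦ]; exact hΦi
      have hbΦ : 0 ≤ b * Φ i := by nlinarith [hble, hΦi'.le]
      have hρW : (-b) * (-(Φ i)) < r i * cstar - c i + p i * τmin := by
        nlinarith [hviM, mul_nonneg (neg_nonneg.2 hpi.le) (sub_nonneg.2 hτgemin)]
      have hρbnd : -b < (r i * cstar - c i + p i * τmin) / (-(Φ i)) := by
        rw [lt_div_iff₀ (by linarith : (0:ℝ) < -(Φ i))]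
        exact hρW
      have hρabs : -b ≤ |(r i * cstar - c i + p i * τmin) / (-(Φ i))| :=
        le_trans hρbnd.le (le_abs_self _)
      have hτW : p i * (a + xm * b) > c i - r i * cstar := by
        nlinarith [hviM, hbΦ]
      have hτbnd : a + xm * b < (c i - r i * cstar) / p i := by
        rw [lt_div_iff_of_neg hpi]
        nlinarith [hτW]
      have hτabs : |a + xm * b| ≤ |τmin| + |(c i - r i * cstar) / p i| := by
        rw [abs_le]
        constructor
        · have h2 := neg_abs_le τmin
          have h3 : (0:ℝ) ≤ |(c i - r i * cstar) / p i| := abs_nonneg _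
          linarith
        · have h2 := le_abs_self ((c i - r i * cstar) / p i)
          have h3 : (0:ℝ) ≤ |τmin| := abs_nonneg _
          linarith
      have hbabs : |b| ≤ |(r i * cstar - c i + p i * τmin) / (-(Φ i))| := by
        rw [abs_of_nonpos hble]
        exact hρabs
      have haabs : |a| ≤ |τmin| + |(c i - r i * cstar) / p i|
          + |xm| * |(r i * cstar - c i + p i * τmin) / (-(Φ i))| := by
        calc |a| = |(a + xm * b) + (-(xm * b))| := by congr 1; ring
          _ ≤ |a + xm * b| + |-(xm * b)| := abs_add_le _ _
          _ = |a + xm * b| + |xm| * |b| := by rw [abs_neg, abs_mul]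
          _ ≤ (|τmin| + |(c i - r i * cstar) / p i|)
              + |xm| * |(r i * cstar - c i + p i * τmin) / (-(Φ i))| := by
              have h4 := mul_le_mul_of_nonneg_left hbabs (abs_nonneg xm)
              linarith [hτabs]
    -- wrap up to the sum bound
      have hsum : |τmin| + |(c i - r i * cstar) / p i|
          + (1 + |xm|) * |(r i * cstar - c i + p i * τmin) / (-(Φ i))|
          ≤ ∑ j, (|τmin| + |(c j - r j * cstar) / p j|
          + (1 + |xm|) * |(r j * cstar - c j + p j * τmin) / (-(Φ j))|) :=
        Finset.single_le_sum (f := fun j => |τmin| + |(c j - r j * cstar) / p j|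
          + (1 + |xm|) * |(r j * cstar - c j + p j * τmin) / (-(Φ j))|)
          (fun j _ => by positivity) (Finset.mem_univ i)
      have habs0 : (0:ℝ) ≤ |(r i * cstar - c i + p i * τmin) / (-(Φ i))| := abs_nonneg _
      have habs1 : (0:ℝ) ≤ |xm| := abs_nonneg _
      have habs2 : (0:ℝ) ≤ |xm| * |(r i * cstar - c i + p i * τmin) / (-(Φ i))| :=
        mul_nonneg habs1 habs0
      constructor
      · linarith [haabs, hsum, habs0]
      · linarith [hbabs, hsum, habs0, habs2, abs_nonneg τmin,
          abs_nonneg ((c i - r i * cstar) / p i)]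

  ·
    -- =========== case: recession cone contained in the horizontal axis ==========
    push_neg at hy
    classical
    obtain ⟨k₀, hk₀ok, hk₀A⟩ := hAneg
    -- there is a "flat" combined constraint bounding b from below
    have hflat : ∃ k, fmOk r k ∧ fmA p r k = 0 ∧ fmA q r k < 0 := by
      by_contra hno
      push_neg at hno
      set Qneg : Finset (FMI ι) := Finset.univ.filter
          (fun k => fmOk r k ∧ fmA p r k < 0) with hQ
      have hk₀Q : k₀ ∈ Qneg := by simp [hQ, hk₀ok, hk₀A]
      have hQne : Qneg.Nonempty := ⟨k₀, hk₀Q⟩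
      set x := (Qneg.image fun k => fmA q r k / fmA p r k).max' (hQne.image _) with hx
      apply hy x
      intro k hk
      rcases lt_or_eq_of_le (hAle k hk) with hA | hA
      · have hkQ : k ∈ Qneg := by simp [hQ, hk, hA]
        have h1 : fmA q r k / fmA p r k ≤ x := by
          apply Finset.le_max' (Qneg.image fun k => fmA q r k / fmA p r k)
          exact Finset.mem_image.2 ⟨k, hkQ, rfl⟩
        rw [div_le_iff_of_neg hA] at h1
        linarith
      · have hB := hno k hk hA
        rw [hA]
        linarith
    obtain ⟨kf, hkfok, hkfA, hkfB⟩ := hflat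
    -- lower bound for b on the projection
    set βL := fmE r c kf / fmA q r kf with hβL
    have hblb : ∀ a b : ℝ, FMP p q r c a b → βL ≤ b := by
      intro a b hP
      have h1 := hP kf hkfok
      rw [hkfA] at h1
      rw [hβL, div_le_iff_of_neg hkfB]
      linarith
    -- lower bound for a on the projection
    set M := |fmE r c k₀| + |fmA q r k₀| * |βL| with hM
    have halb : ∀ a b : ℝ, FMP p q r c a b → b ≤ 0 → M / fmA p r k₀ ≤ a := by
      intro a b hP hb0
      have h1 := hP k₀ hk₀ok
      have habsb : |b| ≤ |βL| := by
        have h2 := hblb a b hP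
        rw [abs_of_nonpos hb0]
        calc -b ≤ -βL := by linarith
          _ ≤ |βL| := neg_le_abs βL
      have h3 : -(|fmA q r k₀| * |βL|) ≤ fmA q r k₀ * b := by
        have h3a : |fmA q r k₀ * b| ≤ |fmA q r k₀| * |βL| := by
          rw [abs_mul]
          exact mul_le_mul_of_nonneg_left habsb (abs_nonneg _)
        have h3b := neg_abs_le (fmA q r k₀ * b)
        linarith
      have h4 : fmA p r k₀ * a ≤ M := by
        rw [hM]
        have := le_abs_self (fmE r c k₀)
        linarith
      rw [div_le_iff_of_neg hk₀A]
      linarith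
    -- final bounds
    refine ⟨0, 0, |M / fmA p r k₀| + |βL|
      + ∑ i, |(c i - |q i| * |βL|) / p i|, ?_, ?_⟩
    · have : (0:ℝ) ≤ ∑ i, |(c i - |q i| * |βL|) / p i| :=
        Finset.sum_nonneg (fun i _ => abs_nonneg _)
      positivity
    intro a b hfeas hviol
    have hP : FMP p q r c a b := by
      obtain ⟨t, ht⟩ := hfeas
      exact fm_forward ht
    have hble : b ≤ 0 := b_nonpos hL hP
    obtain ⟨i, hvi⟩ : ∃ i, ¬ (p i * a + q i * b + r i * (0 * b + 0) ≤ c i) := by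
      by_contra hco
      push_neg at hco
      exact hviol hco
    push_neg at hvi
    simp only [zero_mul, add_zero, mul_zero] at hvi
    have hir : r i ≠ 0 := by
      intro h0
      have hfm := hP (.inl i) (by simpa [fmOk] using h0)
      simp only [fmA, fmE] at hfm
      linarith
    have hpi := hplt i hir
    have habsb : |b| ≤ |βL| := by
      have h2 := hblb a b hP
      rw [abs_of_nonpos hble]
      calc -b ≤ -βL := by linarith
        _ ≤ |βL| := neg_le_abs βL
    have hqb : q i * b ≤ |q i| * |βL| := by
      calc q i * b ≤ |q i * b| := le_abs_self _
        _ = |q i| * |b| := abs_mul _ _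
        _ ≤ |q i| * |βL| := mul_le_mul_of_nonneg_left habsb (abs_nonneg _)
    -- upper bound for a from the violated constraint
    have haub : a ≤ |(c i - |q i| * |βL|) / p i| := by
      have h1 : p i * a > c i - |q i| * |βL| := by linarith
      have h2 : a < (c i - |q i| * |βL|) / p i := by
        rw [lt_div_iff_of_neg hpi]
        linarith [h1]
      calc a ≤ (c i - |q i| * |βL|) / p i := h2.le
        _ ≤ |(c i - |q i| * |βL|) / p i| := le_abs_self _
    have halb' : M / fmA p r k₀ ≤ a := halb a b hP hble
    have hsum : |(c i - |q i| * |βL|) / p i| ≤ ∑ j, |(c j - |q j| * |βL|) / p j| :=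
      Finset.single_le_sum (f := fun j => |(c j - |q j| * |βL|) / p j|)
        (fun j _ => abs_nonneg _) (Finset.mem_univ i)
    have hsum0 : (0:ℝ) ≤ ∑ j, |(c j - |q j| * |βL|) / p j| :=
      Finset.sum_nonneg (fun j _ => abs_nonneg _)
    constructor
    · rw [abs_le]
      constructor
      · have := neg_abs_le (M / fmA p r k₀)
        have h5 : (0:ℝ) ≤ |βL| := abs_nonneg _
        linarith
      · have h5 : (0:ℝ) ≤ |M / fmA p r k₀| := abs_nonneg _
        have h6 : (0:ℝ) ≤ |βL| := abs_nonneg _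
        linarith
    · have h5 : (0:ℝ) ≤ |M / fmA p r k₀| := abs_nonneg _
      calc |b| ≤ |βL| := habsb
        _ ≤ _ := by linarith


end Crux

section Transport

theorem mem_image_affequiv {T : (Fin 3 → ℝ) ≃ᵃ[ℝ] (Fin 3 → ℝ)} {S : Set (Fin 3 → ℝ)}
    {y : Fin 3 → ℝ} : y ∈ T '' S ↔ T.symm y ∈ S := by
  constructor
  · rintro ⟨x, hx, rfl⟩
    simpa using hx
  · intro h
    exact ⟨T.symm y, h, T.apply_symm_apply y⟩

theorem polyDim_image (T : (Fin 3 → ℝ) ≃ᵃ[ℝ] (Fin 3 → ℝ)) (S : Set (Fin 3 → ℝ)) :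
    polyDim 3 (T '' S) = polyDim 3 S := by
  unfold polyDim
  have h1 : (T '' S) = ⇑T.toAffineMap '' S := rfl
  rw [h1, ← AffineSubspace.map_span T.toAffineMap S, AffineSubspace.map_direction]
  have h2 : T.toAffineMap.linear = (T.linear : (Fin 3 → ℝ) →ₗ[ℝ] (Fin 3 → ℝ)) := rfl
  rw [h2]
  exact LinearEquiv.finrank_map_eq T.linear _

end Transport
end PFT

open PFT in
theorem placed_first_trimming_of_facet_with_nonparallel_unbounded_edges'
    (K F : Set (Fin 3 → ℝ)) (hpoly : IsConvexPolyhedron 3 K)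
    (hF : IsFacetOf 3 K F)
    (hedges : ∃ (A₁ A₂ : Set (Fin 3 → ℝ)) (v₁ v₂ : Fin 3 → ℝ),
      IsUnboundedEdgeWithDir 3 K A₁ v₁ ∧ IsUnboundedEdgeWithDir 3 K A₂ v₂ ∧
      A₁ ⊆ F ∧ A₂ ⊆ F ∧ LinearIndependent ℝ ![v₁, v₂]) :
    ∃ T : (Fin 3 → ℝ) ≃ᵃ[ℝ] (Fin 3 → ℝ),
      FirstTrimmingPosition 3 (T '' K) (T '' F) := by
  classical
  obtain ⟨m, L0, c0, hL0ne, hKset⟩ := hpoly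
  obtain ⟨A₁, A₂, v₁, v₂, hE1, hE2, hA1F, hA2F, hindep⟩ := hedges
  obtain ⟨hFface, hFdim⟩ := hF
  obtain ⟨Λ, d, hΛne, hFne, hΛle, hFeq⟩ := hFface
  obtain ⟨hE1edge, hE1unb, hv₁ne, q₁, hq₁vert, hA1eq⟩ := hE1
  obtain ⟨hE2edge, hE2unb, hv₂ne, q₂, hq₂vert, hA2eq⟩ := hE2
  -- the extended constraint family (with the facet functional included)
  set L : Fin (m+1) → ((Fin 3 → ℝ) →ₗ[ℝ] ℝ) := Fin.cons Λ L0 with hL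
  set cc : Fin (m+1) → ℝ := Fin.cons d c0 with hcc
  have hKmem : ∀ x, x ∈ K ↔ ∀ i, L i x ≤ cc i := by
    intro x
    constructor
    · intro hx i
      refine Fin.cases ?_ ?_ i
      · simpa [hL, hcc] using hΛle x hx
      · intro j
        have : x ∈ {x | ∀ i, L0 i x ≤ c0 i} := hKset ▸ hx
        simpa [hL, hcc] using this j
    · intro hx
      rw [hKset]
      intro j
      simpa [hL, hcc] using hx j.succ
  -- basic facts about the edges
  have hFK : F ⊆ K := by rw [hFeq]; exact Set.inter_subset_left
  have hq₁A : q₁ ∈ A₁ := by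
    rw [hA1eq]; exact ⟨0, le_refl 0, by simp⟩
  have hq₂A : q₂ ∈ A₂ := by
    rw [hA2eq]; exact ⟨0, le_refl 0, by simp⟩
  have hq₁F : q₁ ∈ F := hA1F hq₁A
  have hq₂F : q₂ ∈ F := hA2F hq₂A
  have hq₁K : q₁ ∈ K := hFK hq₁F
  have hΛq₁ : Λ q₁ = d := by
    have := hFeq ▸ hq₁F
    exact this.2
  have hΛq₂ : Λ q₂ = d := (hFeq ▸ hq₂F).2
  have hΛv₁ : Λ v₁ = 0 := by
    have h1 : q₁ + (1:ℝ) • v₁ ∈ A₁ := by rw [hA1eq]; exact ⟨1, zero_le_one, rfl⟩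
    have h2 : Λ (q₁ + (1:ℝ) • v₁) = d := (hFeq ▸ (hA1F h1)).2
    rw [map_add, hΛq₁, map_smul] at h2
    simpa using h2
  have hΛv₂ : Λ v₂ = 0 := by
    have h1 : q₂ + (1:ℝ) • v₂ ∈ A₂ := by rw [hA2eq]; exact ⟨1, zero_le_one, rfl⟩
    have h2 : Λ (q₂ + (1:ℝ) • v₂) = d := (hFeq ▸ (hA2F h1)).2
    rw [map_add, hΛq₂, map_smul] at h2
    simpa using h2
  have hray : ∀ (qq vv : Fin 3 → ℝ), (∀ t : ℝ, 0 ≤ t → qq + t • vv ∈ K) →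
      ∀ i, L i vv ≤ 0 := by
    intro qq vv hmem i
    by_contra hcon
    push_neg at hcon
    have hq : L i qq ≤ cc i := (hKmem qq).1 (by simpa using hmem 0 le_rfl) i
    set t := (cc i - L i qq + 1) / L i vv with ht
    have htpos : 0 ≤ t := by
      apply div_nonneg _ hcon.le
      linarith
    have h2 := (hKmem _).1 (hmem t htpos) i
    rw [map_add, map_smul, smul_eq_mul, ht, div_mul_cancel₀ _ (ne_of_gt hcon)] at h2
    linarith
  have hrayK1 : ∀ t : ℝ, 0 ≤ t → q₁ + t • v₁ ∈ K := by
    intro t ht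
    exact hFK (hA1F (by rw [hA1eq]; exact ⟨t, ht, rfl⟩))
  have hrayK2 : ∀ t : ℝ, 0 ≤ t → q₂ + t • v₂ ∈ K := by
    intro t ht
    exact hFK (hA2F (by rw [hA2eq]; exact ⟨t, ht, rfl⟩))
  have hLv₁ : ∀ i, L i v₁ ≤ 0 := hray q₁ v₁ hrayK1
  have hLv₂ : ∀ i, L i v₂ ≤ 0 := hray q₂ v₂ hrayK2
  -- pointedness via the vertex q₁
  have hpt : ∀ w : Fin 3 → ℝ, (∀ i, L i w ≤ 0) → (∀ i, L i (-w) ≤ 0) → w = 0 := by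
    intro w hw hw'
    obtain ⟨M, e, hMne, hMint, hMle, hMeq⟩ := hq₁vert
    have hq₁M : M q₁ = e := by
      have : q₁ ∈ K ∩ {x | M x = e} := by rw [← hMeq]; rfl
      exact this.2
    have hmem1 : q₁ + w ∈ K := by
      rw [hKmem]
      intro i
      have := (hKmem q₁).1 hq₁K i
      rw [map_add]
      linarith [hw i]
    have hmem2 : q₁ + -w ∈ K := by
      rw [hKmem]
      intro i
      have := (hKmem q₁).1 hq₁K i
      rw [map_add]
      linarith [hw' i]
    have hM1 : M (q₁ + w) ≤ e := hMle _ hmem1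
    have hM2 : M (q₁ + -w) ≤ e := hMle _ hmem2
    rw [map_add, hq₁M] at hM1 hM2
    rw [map_neg] at hM2
    have hMw : M w = 0 := by linarith
    have : q₁ + w ∈ K ∩ {x | M x = e} := ⟨hmem1, by rw [Set.mem_setOf_eq, map_add, hq₁M, hMw, add_zero]⟩
    rw [← hMeq] at this
    have h3 : q₁ + w = q₁ := this
    exact add_eq_left.1 h3
  have hcomb : ∀ x y : ℝ, x • v₁ + y • v₂ = 0 → x = 0 ∧ y = 0 :=
    fun x y h => LinearIndependent.pair_iff.1 hindep x y h
  -- choice of the fiber direction u = s v₁ - (1-s) v₂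
  have heval : ∀ (i : Fin (m+1)) (s : ℝ), L i (s • v₁ - (1-s) • v₂)
      = s * (L i v₁ + L i v₂) - L i v₂ := by
    intro i s
    rw [map_sub, map_smul, map_smul, smul_eq_mul, smul_eq_mul]
    ring
  have hus : ∃ s : ℝ, 0 < s ∧ s < 1 ∧ (∃ i, 0 < L i (s • v₁ - (1-s) • v₂)) ∧
      (∃ i, L i (s • v₁ - (1-s) • v₂) < 0) := by
    by_contra hcon
    push_neg at hcon
    set Sm : Set ℝ := {s | s ∈ Set.Icc (0:ℝ) 1 ∧
        ∀ i, 0 ≤ L i (s • v₁ - (1-s) • v₂)} with hSm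
    have h0Sm : (0:ℝ) ∈ Sm := by
      constructor
      · exact ⟨le_refl 0, zero_le_one⟩
      · intro i
        rw [heval]
        linarith [hLv₂ i]
    have hSbdd : BddAbove Sm := ⟨1, fun s hs => hs.1.2⟩
    set σ := sSup Sm with hσ
    have hσ0 : 0 ≤ σ := le_csSup hSbdd h0Sm
    have hσ1 : σ ≤ 1 := csSup_le ⟨0, h0Sm⟩ (fun s hs => hs.1.2)
    have hσmem : ∀ i, 0 ≤ L i (σ • v₁ - (1-σ) • v₂) := by
      intro i
      rw [heval]
      set g := L i v₁ + L i v₂ with hg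
      set β := L i v₂ with hβ
      have key : -(σ * g - β) ≤ 0 := by
        apply le_of_forall_pos_le_add
        intro ε hε
        have hε' : 0 < ε / (|g| + 1) := by positivity
        obtain ⟨s, hsSm, hslt⟩ := exists_lt_of_lt_csSup ⟨0, h0Sm⟩
          (show σ - ε / (|g| + 1) < sSup Sm by rw [← hσ]; linarith)
        have hsle : s ≤ σ := le_csSup hSbdd hsSm
        have hf := hsSm.2 i
        rw [heval] at hf
        have h1 : (σ - s) * g ≥ (σ - s) * (-(|g|)) :=
          mul_le_mul_of_nonneg_left (neg_abs_le g) (by linarith)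
        have h2 : (σ - s) * |g| ≤ (ε / (|g| + 1)) * |g| :=
          mul_le_mul_of_nonneg_right (by linarith) (abs_nonneg g)
        have h3 : (ε / (|g| + 1)) * (|g| + 1) = ε :=
          div_mul_cancel₀ _ (by positivity)
        nlinarith [abs_nonneg g]
      linarith
    have hσlt1 : σ < 1 := by
      rcases lt_or_eq_of_le hσ1 with h | h
      · exact h
      · exfalso
        have h1 : ∀ i, L i v₁ = 0 := by
          intro i
          have h2 := hσmem i
          rw [h, heval] at h2
          have h3 := hLv₁ i
          linarith
        have h4 : v₁ = 0 := by
          apply hpt v₁ (fun i => le_of_eq (h1 i))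
          intro i
          rw [map_neg, h1 i]
          simp
        exact hv₁ne h4
    have hdown : ∀ s, σ < s → s < 1 → ∀ i, L i (s • v₁ - (1-s) • v₂) ≤ 0 := by
      intro s hs1 hs2
      have hnotSm : s ∉ Sm := by
        intro hsSm
        have := le_csSup hSbdd hsSm
        linarith
      have hIcc : s ∈ Set.Icc (0:ℝ) 1 := ⟨by linarith, by linarith⟩
      have hneg : ∃ i, L i (s • v₁ - (1-s) • v₂) < 0 := by
        by_contra hno
        push_neg at hno
        exact hnotSm ⟨hIcc, hno⟩
      by_contra hno
      push_neg at hno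
      obtain ⟨i₁, hi₁⟩ := hno
      have := hcon s (by linarith) hs2 ⟨i₁, hi₁⟩
      obtain ⟨i₂, hi₂⟩ := hneg
      linarith [this i₂]
    have hup : ∀ i, L i (σ • v₁ - (1-σ) • v₂) ≤ 0 := by
      intro i
      rw [heval]
      have hgd : L i v₁ + L i v₂ = L i v₁ + L i v₂ := rfl
      apply le_of_forall_pos_le_add
      intro ε hε
      have hε' : 0 < ε / (|L i v₁ + L i v₂| + 1) := by positivity
      set s := min (σ + ε / (|L i v₁ + L i v₂| + 1) / 2) ((σ + 1) / 2) with hs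
      have hs1 : σ < s := by
        rw [hs]
        apply lt_min <;> linarith
      have hs2 : s < 1 := by
        rw [hs]
        calc min (σ + ε / (|L i v₁ + L i v₂| + 1) / 2) ((σ + 1) / 2)
            ≤ (σ + 1) / 2 := min_le_right _ _
          _ < 1 := by linarith
      have hsd : s - σ ≤ ε / (|L i v₁ + L i v₂| + 1) := by
        rw [hs]
        have := min_le_left (σ + ε / (|L i v₁ + L i v₂| + 1) / 2) ((σ + 1) / 2)
        linarith
      have hf := hdown s hs1 hs2 i
      rw [heval] at hf
      have h1 : (s - σ) * (-(L i v₁ + L i v₂)) ≤ (s - σ) * |L i v₁ + L i v₂| :=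
        mul_le_mul_of_nonneg_left (neg_le_abs _) (by linarith)
      have h2 : (s - σ) * |L i v₁ + L i v₂|
          ≤ (ε / (|L i v₁ + L i v₂| + 1)) * |L i v₁ + L i v₂| :=
        mul_le_mul_of_nonneg_right (by linarith) (abs_nonneg _)
      have h3 : (ε / (|L i v₁ + L i v₂| + 1)) * (|L i v₁ + L i v₂| + 1) = ε :=
        div_mul_cancel₀ _ (by positivity)
      nlinarith [abs_nonneg (L i v₁ + L i v₂)]
    have huszero : σ • v₁ - (1-σ) • v₂ = 0 := by
      apply hpt
      · exact hup
      · intro i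
        rw [map_neg]
        linarith [hσmem i]
    have h5 : σ • v₁ + (-(1-σ)) • v₂ = 0 := by
      rw [neg_smul, ← sub_eq_add_neg]
      exact huszero
    obtain ⟨h6, h7⟩ := hcomb σ (-(1-σ)) h5
    rw [h6] at h7
    norm_num at h7
  obtain ⟨s, hs0, hs1, hupos, huneg⟩ := hus
  set u : Fin 3 → ℝ := s • v₁ - (1-s) • v₂ with hu
  have hΛu : Λ u = 0 := by
    rw [hu, map_sub, map_smul, map_smul, hΛv₁, hΛv₂]
    simp
  -- a vector with Λ nv = 1
  have hnv : ∃ nv : Fin 3 → ℝ, Λ nv = 1 := by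
    obtain ⟨x, hx⟩ := DFunLike.ne_iff.1 hΛne
    have hx' : Λ x ≠ 0 := by simpa using hx
    refine ⟨(Λ x)⁻¹ • x, ?_⟩
    rw [map_smul, smul_eq_mul, inv_mul_cancel₀ hx']
  obtain ⟨nv, hΛnv⟩ := hnv
  set b1 : Fin 3 → ℝ := v₁ + v₂ with hb1
  have hΛb1 : Λ b1 = 0 := by rw [hb1, map_add, hΛv₁, hΛv₂, add_zero]
  -- vector identities
  have hvid1 : (1-s) • b1 + u = v₁ := by rw [hb1, hu]; module
  have hvid2 : s • b1 - u = v₂ := by rw [hb1, hu]; module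
  -- the data for the main combinatorial lemma
  set pp : Fin (m+1) → ℝ := fun i => L i b1 with hpp
  set qq : Fin (m+1) → ℝ := fun i => L i nv with hqq
  set rr : Fin (m+1) → ℝ := fun i => L i u with hrr
  set ccx : Fin (m+1) → ℝ := fun i => cc i - L i q₁ with hccx
  have hcrux := PFT.crux (p := pp) (q := qq) (r := rr) (c := ccx)
    (by obtain ⟨i, hi⟩ := hupos; exact ⟨i, hi⟩)
    (by obtain ⟨i, hi⟩ := huneg; exact ⟨i, hi⟩)
    (by
      have hL0 : L 0 = Λ := by rw [hL]; exact Fin.cons_zero _ _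
      have hc0 : cc 0 = d := by rw [hcc]; exact Fin.cons_zero _ _
      refine ⟨0, ?_, ?_, ?_, ?_⟩
      · simp only [hpp]
        rw [hL0]
        exact hΛb1
      · simp only [hqq]
        rw [hL0]
        exact hΛnv
      · simp only [hrr]
        rw [hL0]
        exact hΛu
      · simp only [hccx]
        rw [hL0, hc0, hΛq₁]
        ring)
    (by
      refine ⟨1-s, 1, by linarith, one_pos, ?_⟩
      intro i
      have hid : pp i * (1-s) + qq i * 0 + rr i * 1 = L i ((1-s) • b1 + u) := by
        simp only [hpp, hqq, hrr, map_add, map_smul, smul_eq_mul]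
        ring
      rw [hid, hvid1]
      exact hLv₁ i)
    (by
      refine ⟨s, -1, hs0, by linarith, ?_⟩
      intro i
      have hid : pp i * s + qq i * 0 + rr i * (-1) = L i (s • b1 - u) := by
        simp only [hpp, hqq, hrr, map_sub, map_smul, smul_eq_mul]
        ring
      rw [hid, hvid2]
      exact hLv₂ i)
    (by
      refine ⟨0, 0, 0, ?_⟩
      intro i
      simp only [hpp, hqq, hrr, hccx]
      have := (hKmem q₁).1 hq₁K i
      linarith)
  obtain ⟨ω₁, ω₂, R, hR0, hbnd⟩ := hcrux
  -- the coordinate system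
  set β₂ : Fin 3 → ℝ := nv + ω₁ • u with hβ₂
  have hΛβ₂ : Λ β₂ = 1 := by
    rw [hβ₂, map_add, map_smul, hΛnv, hΛu, smul_eq_mul]
    ring
  have hind : LinearIndependent ℝ ![b1, β₂, u] := by
    rw [Fintype.linearIndependent_iff]
    intro g hg
    rw [Fin.sum_univ_three] at hg
    have e0 : (![b1, β₂, u] : Fin 3 → Fin 3 → ℝ) 0 = b1 := rfl
    have e1 : (![b1, β₂, u] : Fin 3 → Fin 3 → ℝ) 1 = β₂ := rfl
    have e2 : (![b1, β₂, u] : Fin 3 → Fin 3 → ℝ) 2 = u := rfl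
    rw [e0, e1, e2] at hg
    have hg1 : g 1 = 0 := by
      have h2 := congrArg Λ hg
      rw [map_add, map_add, map_smul, map_smul, map_smul, map_zero,
        hΛb1, hΛβ₂, hΛu] at h2
      simpa using h2
    have hg02 : (g 0 + g 2 * s) • v₁ + (g 0 - g 2 * (1-s)) • v₂ = 0 := by
      rw [hg1, zero_smul, add_zero] at hg
      rw [← hg, hb1, hu]
      module
    obtain ⟨ha, hb⟩ := hcomb _ _ hg02
    have h9 : (g 0 + g 2 * s) - (g 0 - g 2 * (1-s)) = g 2 := by ring
    have hg2 : g 2 = 0 := by rw [← h9, ha, hb]; ring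
    have hg0 : g 0 = 0 := by
      have h10 : g 2 * s = 0 := by rw [hg2]; ring
      linarith
    intro i
    fin_cases i
    · exact hg0
    · exact hg1
    · exact hg2
  have hcard : Fintype.card (Fin 3) = Module.finrank ℝ (Fin 3 → ℝ) := by
    simp [Module.finrank_pi]
  set B := basisOfLinearIndependentOfCardEqFinrank hind hcard with hBdef
  have hB : ∀ i, B i = ![b1, β₂, u] i :=
    fun i => congrFun (coe_basisOfLinearIndependentOfCardEqFinrank hind hcard) i
  set T : (Fin 3 → ℝ) ≃ᵃ[ℝ] (Fin 3 → ℝ) :=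
    (AffineEquiv.constVAdd ℝ (Fin 3 → ℝ) (-(q₁ + ω₂ • u))).trans
      B.equivFun.toAffineEquiv with hT
  have hTx : ∀ x, T x = B.equivFun (-(q₁ + ω₂ • u) + x) := fun x => rfl
  have hTsymm : ∀ y : Fin 3 → ℝ,
      T.symm y = (q₁ + ω₂ • u) + (y 0 • b1 + (y 1 • β₂ + y 2 • u)) := by
    intro y
    have key : T ((q₁ + ω₂ • u) + (y 0 • b1 + (y 1 • β₂ + y 2 • u))) = y := by
      rw [hTx, neg_add_cancel_left]
      have hsum : y 0 • b1 + (y 1 • β₂ + y 2 • u) = B.equivFun.symm y := by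
        rw [Module.Basis.equivFun_symm_apply, Fin.sum_univ_three, hB 0, hB 1, hB 2]
        show _ = y 0 • b1 + y 1 • β₂ + y 2 • u
        exact (add_assoc _ _ _).symm
      rw [hsum, LinearEquiv.apply_symm_apply]
    conv_lhs => rw [← key]
    rw [AffineEquiv.symm_apply_apply]
  have hLval : ∀ (i : Fin (m+1)) (y : Fin 3 → ℝ),
      L i (T.symm y) = L i q₁
        + (pp i * y 0 + qq i * y 1 + rr i * (ω₁ * y 1 + ω₂ + y 2)) := by
    intro i y
    rw [hTsymm y, hβ₂]
    simp only [map_add, map_smul, smul_eq_mul, hpp, hqq, hrr]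
    ring
  have hmemTK : ∀ y : Fin 3 → ℝ, y ∈ T '' K ↔
      (∀ i, pp i * y 0 + qq i * y 1 + rr i * (ω₁ * y 1 + ω₂ + y 2) ≤ ccx i) := by
    intro y
    rw [mem_image_affequiv, hKmem]
    constructor
    · intro h i
      have h2 := h i
      rw [hLval] at h2
      simp only [hccx]
      linarith
    · intro h i
      rw [hLval]
      have h2 := h i
      simp only [hccx] at h2
      linarith
  have hcoord1 : ∀ x : Fin 3 → ℝ, T x 1 = Λ x - d := by
    intro x
    have h := hTsymm (T x)
    rw [AffineEquiv.symm_apply_apply] at h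
    have h2 := congrArg Λ h
    simp only [map_add, map_smul, smul_eq_mul, hΛq₁, hΛu, hΛb1, hΛβ₂,
      mul_zero, mul_one, add_zero, zero_add] at h2
    linarith
  -- projection evaluation facts
  have hproj0 : ∀ x : Fin 3 → ℝ, projLast 3 x 0 = x 0 := by
    intro x; simp [projLast]
  have hproj1 : ∀ x : Fin 3 → ℝ, projLast 3 x 1 = x 1 := by
    intro x; simp [projLast]
  have hproj2 : ∀ x : Fin 3 → ℝ, projLast 3 x 2 = 0 := by
    intro x; simp [projLast]
  refine ⟨T, ⟨?_, ?_⟩, ?_, ?_, ?_, ?_⟩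
  · -- the image of F is a face of the image of K
    refine ⟨LinearMap.proj 1, 0, ?_, ?_, ?_, ?_⟩
    · intro h
      have h2 := DFunLike.congr_fun h (fun _ => (1:ℝ))
      simp [LinearMap.proj_apply] at h2
    · refine ⟨T q₁, ⟨q₁, hq₁K, rfl⟩, ?_⟩
      show T q₁ 1 = 0
      rw [hcoord1, hΛq₁]
      ring
    · rintro y ⟨x, hxK, rfl⟩
      show T x 1 ≤ 0
      rw [hcoord1]
      linarith [hΛle x hxK]
    · ext y
      constructor
      · rintro ⟨x, hxF, rfl⟩
        have hx2 : x ∈ K ∩ {x | Λ x = d} := hFeq ▸ hxF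
        refine ⟨⟨x, hx2.1, rfl⟩, ?_⟩
        show T x 1 = 0
        rw [hcoord1, hx2.2]
        ring
      · rintro ⟨⟨x, hxK, rfl⟩, h1⟩
        have h2 : T x 1 = 0 := h1
        rw [hcoord1] at h2
        have h3 : Λ x = d := by linarith
        exact ⟨x, by rw [hFeq]; exact ⟨hxK, h3⟩, rfl⟩
  · -- dimension of the facet
    rw [polyDim_image, polyDim_image]
    exact hFdim
  · -- F sits inside the hyperplane x₁ = 0
    rintro y ⟨x, hxF, rfl⟩ i hi
    have hieq : i = 1 := Fin.ext (by simpa using hi)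
    subst hieq
    have hx2 : x ∈ K ∩ {x | Λ x = d} := hFeq ▸ hxF
    rw [hcoord1, hx2.2]
    ring
  · -- K sits inside the half-space x₁ ≤ 0
    rintro y ⟨x, hxK, rfl⟩ i hi
    have hieq : i = 1 := Fin.ext (by simpa using hi)
    subst hieq
    rw [hcoord1]
    linarith [hΛle x hxK]
  · -- fibers of the projection are bounded
    intro y
    by_cases hy2 : y 2 = 0
    · obtain ⟨ip, hip⟩ := hupos
      obtain ⟨im, him⟩ := huneg
      have hrrip : 0 < rr ip := hip
      have hrrim : rr im < 0 := him
      set Ub : ℝ := (ccx ip - pp ip * y 0 - qq ip * y 1) / rr ip - ω₁ * y 1 - ω₂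
        with hUb
      set Lb : ℝ := (ccx im - pp im * y 0 - qq im * y 1) / rr im - ω₁ * y 1 - ω₂
        with hLb
      rw [isBounded_iff_forall_norm_le]
      refine ⟨max (max |y 0| |y 1|) (max |Ub| |Lb|), ?_⟩
      rintro x ⟨hp, hxK⟩
      have hx0 : x 0 = y 0 := by
        have := congrFun hp 0
        rwa [hproj0] at this
      have hx1 : x 1 = y 1 := by
        have := congrFun hp 1
        rwa [hproj1] at this
      have hfe := (hmemTK x).1 hxK
      have hub : x 2 ≤ Ub := by
        have h2 := hfe ip
        rw [hx0, hx1] at h2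
        have h3 : ω₁ * y 1 + ω₂ + x 2
            ≤ (ccx ip - pp ip * y 0 - qq ip * y 1) / rr ip := by
          rw [le_div_iff₀ hrrip]
          nlinarith [h2]
        rw [hUb]
        linarith
      have hlb : Lb ≤ x 2 := by
        have h2 := hfe im
        rw [hx0, hx1] at h2
        have h3 : (ccx im - pp im * y 0 - qq im * y 1) / rr im
            ≤ ω₁ * y 1 + ω₂ + x 2 := by
          rw [div_le_iff_of_neg hrrim]
          linarith [h2]
        rw [hLb]
        linarith
      have hC0 : (0:ℝ) ≤ max (max |y 0| |y 1|) (max |Ub| |Lb|) :=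
        le_trans (abs_nonneg (y 0)) ((le_max_left _ _).trans (le_max_left _ _))
      rw [pi_norm_le_iff_of_nonneg hC0]
      intro i
      fin_cases i
      · rw [Real.norm_eq_abs]
        show |x 0| ≤ _
        rw [hx0]
        exact (le_max_left _ _).trans (le_max_left _ _)
      · rw [Real.norm_eq_abs]
        show |x 1| ≤ _
        rw [hx1]
        exact (le_max_right _ _).trans (le_max_left _ _)
      · rw [Real.norm_eq_abs]
        show |x 2| ≤ _
        have h4 : |x 2| ≤ max |Ub| |Lb| := by
          rw [abs_le]
          constructor
          · have := neg_abs_le Lb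
            have h5 := le_max_right |Ub| |Lb|
            linarith
          · exact hub.trans ((le_abs_self Ub).trans (le_max_left _ _))
        exact h4.trans (le_max_right _ _)
    · have hempty : {x | projLast 3 x = y} ∩ (T '' K) = ∅ := by
        rw [Set.eq_empty_iff_forall_notMem]
        rintro x ⟨hp, _⟩
        apply hy2
        have h5 := congrFun hp 2
        rw [hproj2] at h5
        exact h5.symm
      rw [hempty]
      exact Bornology.isBounded_empty
  · -- the set A_K is bounded
    rw [isBounded_iff_forall_norm_le]
    refine ⟨R, ?_⟩
    intro y hy
    obtain ⟨hz, ⟨x, hp, hxK⟩, hnot⟩ := hy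
    have hy2 : y 2 = 0 := hz 2 (by norm_num)
    have hx0 : x 0 = y 0 := by
      have := congrFun hp 0
      rwa [hproj0] at this
    have hx1 : x 1 = y 1 := by
      have := congrFun hp 1
      rwa [hproj1] at this
    have hfe := (hmemTK x).1 hxK
    rw [hx0, hx1] at hfe
    have hex : ∃ t, PFT.Feas pp qq rr ccx (y 0) (y 1) t :=
      ⟨ω₁ * y 1 + ω₂ + x 2, hfe⟩
    have hnfe : ¬ PFT.Feas pp qq rr ccx (y 0) (y 1) (ω₁ * y 1 + ω₂) := by
      intro hco
      apply hnot
      rw [hmemTK]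
      intro i
      have := hco i
      rw [hy2]
      simpa using this
    obtain ⟨hay, hby⟩ := hbnd (y 0) (y 1) hex hnfe
    rw [pi_norm_le_iff_of_nonneg hR0]
    intro i
    fin_cases i
    · rwa [Real.norm_eq_abs]
    · rwa [Real.norm_eq_abs]
    · rw [Real.norm_eq_abs]
      show |y 2| ≤ R
      rw [hy2]
      simpa using hR0




/-- Proposition 1 (i): a non-degenerate 3-dimensional unbounded convex polyhedron can
be placed in first trimming position with respect to any facet having two unbounded
edges with linearly independent directions. -/
theorem placed_first_trimming_of_facet_with_nonparallel_unbounded_edges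
    (K F : Set (Fin 3 → ℝ)) (hpoly : IsConvexPolyhedron 3 K)
    (hdim : polyDim 3 K = 3) (hunb : ¬ IsBounded K)
    (hnd : ∃ p, IsVertexOf 3 K p) (hF : IsFacetOf 3 K F)
    (hedges : ∃ (A₁ A₂ : Set (Fin 3 → ℝ)) (v₁ v₂ : Fin 3 → ℝ),
      IsUnboundedEdgeWithDir 3 K A₁ v₁ ∧ IsUnboundedEdgeWithDir 3 K A₂ v₂ ∧
      A₁ ⊆ F ∧ A₂ ⊆ F ∧ LinearIndependent ℝ ![v₁, v₂]) :
    ∃ T : (Fin 3 → ℝ) ≃ᵃ[ℝ] (Fin 3 → ℝ),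
      FirstTrimmingPosition 3 (T '' K) (T '' F) :=
  placed_first_trimming_of_facet_with_nonparallel_unbounded_edges' K F hpoly hF hedges
end

section
/- Let K ⊂ ℝ³ be a non-degenerate 3-dimensional unbounded convex polyhedron and let F be a facet of K containing two unbounded edges of K whose direction vectors are linearly independent. Then K can be placed in second trimming position with respect to F. -/
open Bornology Pointwise

/-- If `a + t*s ≤ c` for all `t ≥ 0` then `s ≤ 0`. -/
lemma ray_nonpos_aux {a s c : ℝ} (h : ∀ t : ℝ, 0 ≤ t → a + t * s ≤ c) : s ≤ 0 := by
  by_contra hs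
  push_neg at hs
  have h0 := h 0 (le_refl 0)
  have hpos : (0:ℝ) < c - a + 1 := by linarith
  have ht := h ((c - a + 1) / s) (le_of_lt (div_pos hpos hs))
  rw [div_mul_cancel₀ _ (ne_of_gt hs)] at ht
  linarith

lemma polyDim_image_aux (T : (Fin 3 → ℝ) ≃ᵃ[ℝ] (Fin 3 → ℝ)) (S : Set (Fin 3 → ℝ)) :
    polyDim 3 (T '' S) = polyDim 3 S := by
  unfold polyDim
  have h1 : affineSpan ℝ (⇑T '' S) = (affineSpan ℝ S).map T.toAffineMap := by
    rw [AffineSubspace.map_span]; rfl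
  rw [h1, AffineSubspace.map_direction]
  exact LinearEquiv.finrank_map_eq T.linear _


/-- Proposition 2 (i): a non-degenerate 3-dimensional unbounded convex polyhedron can
be placed in second trimming position with respect to any facet having two unbounded
edges with linearly independent directions. -/
theorem placed_second_trimming_of_facet_with_nonparallel_unbounded_edges
    (K F : Set (Fin 3 → ℝ)) (hpoly : IsConvexPolyhedron 3 K)
    (hdim : polyDim 3 K = 3) (hunb : ¬ IsBounded K)
    (hnd : ∃ p, IsVertexOf 3 K p) (hF : IsFacetOf 3 K F)
    (hedges : ∃ (A₁ A₂ : Set (Fin 3 → ℝ)) (v₁ v₂ : Fin 3 → ℝ),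
      IsUnboundedEdgeWithDir 3 K A₁ v₁ ∧ IsUnboundedEdgeWithDir 3 K A₂ v₂ ∧
      A₁ ⊆ F ∧ A₂ ⊆ F ∧ LinearIndependent ℝ ![v₁, v₂]) :
    ∃ T : (Fin 3 → ℝ) ≃ᵃ[ℝ] (Fin 3 → ℝ),
      SecondTrimmingPosition 3 (T '' K) (T '' F) := by
  classical
  obtain ⟨m, L, cc, hLne, hK⟩ := hpoly
  obtain ⟨hFface, hFdim⟩ := hF
  obtain ⟨L₀, c₀, hL₀ne, hFnonempty, hKle, hFeq⟩ := hFface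
  obtain ⟨A₁, A₂, v₁, v₂, hE1, hE2, hA1F, hA2F, hvind⟩ := hedges
  obtain ⟨q₁, -, hA1⟩ := hE1.2.2.2
  obtain ⟨q₂, -, hA2⟩ := hE2.2.2.2
  -- basic membership facts
  have hFsubK : F ⊆ K := by rw [hFeq]; exact Set.inter_subset_left
  have hq₁A : ∀ t : ℝ, 0 ≤ t → q₁ + t • v₁ ∈ A₁ := by
    intro t ht; rw [hA1]; exact ⟨t, ht, rfl⟩
  have hq₂A : ∀ t : ℝ, 0 ≤ t → q₂ + t • v₂ ∈ A₂ := by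
    intro t ht; rw [hA2]; exact ⟨t, ht, rfl⟩
  have hq₁F : q₁ ∈ F := by
    have := hA1F (hq₁A 0 (le_refl 0)); simpa using this
  have hq₁K : q₁ ∈ K := hFsubK hq₁F
  have hq₂F : q₂ ∈ F := by
    have := hA2F (hq₂A 0 (le_refl 0)); simpa using this
  have hL₀F : ∀ x ∈ F, L₀ x = c₀ := by
    intro x hx; rw [hFeq] at hx; exact hx.2
  have hL₀q₁ : L₀ q₁ = c₀ := hL₀F q₁ hq₁F
  have hL₀v₁ : L₀ v₁ = 0 := by
    have h1 : L₀ (q₁ + (1:ℝ) • v₁) = c₀ := hL₀F _ (hA1F (hq₁A 1 zero_le_one))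
    simp only [map_add, map_smul, smul_eq_mul, one_mul, hL₀q₁] at h1
    linarith
  have hL₀v₂ : L₀ v₂ = 0 := by
    have h1 : L₀ (q₂ + (1:ℝ) • v₂) = c₀ := hL₀F _ (hA2F (hq₂A 1 zero_le_one))
    have h0 : L₀ q₂ = c₀ := hL₀F q₂ hq₂F
    simp only [map_add, map_smul, smul_eq_mul, one_mul, h0] at h1
    linarith
  have hKmem : ∀ x, x ∈ K ↔ ∀ i, L i x ≤ cc i := by
    intro x; rw [hK]; exact Iff.rfl
  -- the defining functionals are nonpositive on v₁, v₂
  have hα : ∀ i, L i v₁ ≤ 0 := by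
    intro i
    apply ray_nonpos_aux (a := L i q₁) (c := cc i)
    intro t ht
    have hx : q₁ + t • v₁ ∈ K := hFsubK (hA1F (hq₁A t ht))
    have := (hKmem _).1 hx i
    simpa [map_add, map_smul, smul_eq_mul] using this
  have hβ : ∀ i, L i v₂ ≤ 0 := by
    intro i
    apply ray_nonpos_aux (a := L i q₂) (c := cc i)
    intro t ht
    have hx : q₂ + t • v₂ ∈ K := hFsubK (hA2F (hq₂A t ht))
    have := (hKmem _).1 hx i
    simpa [map_add, map_smul, smul_eq_mul] using this
  -- choose w with L₀ w = 1
  obtain ⟨w₀, hw₀⟩ : ∃ w₀, L₀ w₀ ≠ 0 := by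
    by_contra h
    push_neg at h
    exact hL₀ne (LinearMap.ext fun x => by simpa using h x)
  set w : Fin 3 → ℝ := (L₀ w₀)⁻¹ • w₀ with hw_def
  have hL₀w : L₀ w = 1 := by
    rw [hw_def, map_smul, smul_eq_mul, inv_mul_cancel₀ hw₀]
  -- choose the shear parameter t
  set t : ℝ := ∑ i, max 0 (L i w / (-(L i v₁ + L i v₂))) with ht_def
  set u : Fin 3 → ℝ := w + t • (v₁ + v₂) with hu_def
  have hL₀u : L₀ u = 1 := by
    rw [hu_def]
    simp [map_add, map_smul, hL₀v₁, hL₀v₂, hL₀w]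
  have hγ : ∀ i, ¬(L i v₁ = 0 ∧ L i v₂ = 0) → L i u ≤ 0 := by
    intro i hi
    have hs : L i v₁ + L i v₂ < 0 := by
      rcases not_and_or.mp hi with h | h
      · have := lt_of_le_of_ne (hα i) h
        have := hβ i
        linarith
      · have := lt_of_le_of_ne (hβ i) h
        have := hα i
        linarith
    have hterm : max 0 (L i w / (-(L i v₁ + L i v₂))) ≤ t := by
      rw [ht_def]
      exact Finset.single_le_sum (f := fun j => max 0 (L j w / (-(L j v₁ + L j v₂))))
        (fun j _ => le_max_left _ _) (Finset.mem_univ i)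
    have hdiv : L i w / (-(L i v₁ + L i v₂)) ≤ t :=
      le_trans (le_max_right _ _) hterm
    have hneg : (0:ℝ) < -(L i v₁ + L i v₂) := by linarith
    have : L i w ≤ t * (-(L i v₁ + L i v₂)) := by
      rw [div_le_iff₀ hneg] at hdiv; linarith [hdiv]
    have hLu : L i u = L i w + t * (L i v₁ + L i v₂) := by
      rw [hu_def]; simp [map_add, map_smul, smul_eq_mul]; ring
    rw [hLu]; nlinarith
  -- build the basis ![v₁, v₂, u]
  have hind : LinearIndependent ℝ ![v₁, v₂, u] := by
    rw [Fintype.linearIndependent_iff]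
    intro g hg
    have hsum : g 0 • v₁ + g 1 • v₂ + g 2 • u = 0 := by
      rw [Fin.sum_univ_three] at hg
      simpa using hg
    have h2 : g 2 = 0 := by
      have := congrArg L₀ hsum
      simp only [map_add, map_smul, smul_eq_mul, hL₀v₁, hL₀v₂, hL₀u, map_zero,
        mul_zero, mul_one, zero_add, add_zero] at this
      exact this
    have hsum' : (∑ i : Fin 2, (![g 0, g 1] i) • (![v₁, v₂] i)) = 0 := by
      rw [Fin.sum_univ_two]
      simp only [Matrix.cons_val_zero, Matrix.cons_val_one, Matrix.head_cons]
      rw [h2] at hsum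
      simpa using hsum
    have h01 := Fintype.linearIndependent_iff.mp hvind ![g 0, g 1] hsum'
    intro i
    fin_cases i
    · simpa using h01 0
    · simpa using h01 1
    · exact h2
  have hcard : Fintype.card (Fin 3) = Module.finrank ℝ (Fin 3 → ℝ) := by
    simp [Module.finrank_fin_fun]
  set b : Module.Basis (Fin 3) ℝ (Fin 3 → ℝ) := basisOfLinearIndependentOfCardEqFinrank hind hcard
    with hb_def
  have hb : ⇑b = ![v₁, v₂, u] := coe_basisOfLinearIndependentOfCardEqFinrank hind hcard
  -- the affine equivalence
  set Tinv : (Fin 3 → ℝ) ≃ᵃ[ℝ] (Fin 3 → ℝ) :=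
    (b.equivFun.symm.toAffineEquiv).trans (AffineEquiv.constVAdd ℝ (Fin 3 → ℝ) q₁)
    with hTinv_def
  set T : (Fin 3 → ℝ) ≃ᵃ[ℝ] (Fin 3 → ℝ) := Tinv.symm with hT_def
  have hTinv_apply : ∀ y : Fin 3 → ℝ, Tinv y = q₁ + (y 0 • v₁ + y 1 • v₂ + y 2 • u) := by
    intro y
    have h1 : Tinv y = q₁ +ᵥ b.equivFun.symm y := rfl
    rw [h1, Module.Basis.equivFun_symm_apply, Fin.sum_univ_three, hb]
    simp only [Matrix.cons_val_zero, Matrix.cons_val_one, Matrix.head_cons,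
      Matrix.cons_val_two, Matrix.tail_cons]
    rfl
  have hrepr : ∀ x : Fin 3 → ℝ, x = q₁ + ((T x) 0 • v₁ + (T x) 1 • v₂ + (T x) 2 • u) := by
    intro x
    conv_lhs => rw [← Tinv.apply_symm_apply x]
    rw [← hT_def, hTinv_apply]
  have hLrepr : ∀ (G : (Fin 3 → ℝ) →ₗ[ℝ] ℝ) (x : Fin 3 → ℝ),
      G x = G q₁ + ((T x) 0 * G v₁ + (T x) 1 * G v₂ + (T x) 2 * G u) := by
    intro G x
    conv_lhs => rw [hrepr x]
    simp [map_add, map_smul, smul_eq_mul]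
  have hT2 : ∀ x : Fin 3 → ℝ, (T x) 2 = L₀ x - c₀ := by
    intro x
    have := hLrepr L₀ x
    rw [hL₀v₁, hL₀v₂, hL₀u, hL₀q₁] at this
    linarith [this]
  -- image of the facet
  have himF : T '' F = (T '' K) ∩ {x | x 2 = 0} := by
    ext y
    constructor
    · rintro ⟨z, hzF, rfl⟩
      refine ⟨⟨z, hFsubK hzF, rfl⟩, ?_⟩
      show (T z) 2 = 0
      rw [hT2, hL₀F z hzF, sub_self]
    · rintro ⟨⟨z, hzK, rfl⟩, h2⟩
      refine ⟨z, ?_, rfl⟩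
      rw [hFeq]
      refine ⟨hzK, ?_⟩
      have : (T z) 2 = 0 := h2
      rw [hT2] at this
      show L₀ z = c₀
      linarith
  have hK2 : ∀ y ∈ T '' K, y 2 ≤ 0 := by
    rintro _ ⟨z, hzK, rfl⟩
    rw [hT2]
    have := hKle z hzK
    linarith
  have hF2 : ∀ y ∈ T '' F, y 2 = 0 := by
    rintro _ ⟨z, hzF, rfl⟩
    rw [hT2, hL₀F z hzF, sub_self]
  refine ⟨T, ?_, ?_, ?_, ?_⟩
  · -- IsFacetOf
    constructor
    · refine ⟨LinearMap.proj 2, 0, ?_, ?_, ?_, ?_⟩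
      · intro h
        have := congrArg (fun f => f (fun _ => (1:ℝ))) h
        simpa using this
      · refine ⟨T q₁, ⟨q₁, hq₁K, rfl⟩, ?_⟩
        show (T q₁) 2 = 0
        rw [hT2, hL₀q₁, sub_self]
      · intro x hx; exact hK2 x hx
      · rw [himF]; rfl
    · rw [polyDim_image_aux, polyDim_image_aux]; exact hFdim
  · -- F in the plane
    intro x hx i hi
    have : i = 2 := by
      apply Fin.ext
      simpa using hi
    rw [this]
    exact hF2 x hx
  · -- K below the plane
    intro x hx i hi
    have : i = 2 := by
      apply Fin.ext
      simpa using hi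
    rw [this]
    exact hK2 x hx
  · -- AKset is empty
    have hempty : AKset 3 (T '' K) = ∅ := by
      rw [Set.eq_empty_iff_forall_notMem]
      rintro y ⟨hy0, ⟨x', ⟨hproj, hx'K⟩⟩, hynotin⟩
      obtain ⟨x, hxK, hx'⟩ := hx'K
      apply hynotin
      have hy2 : y 2 = 0 := hy0 2 (by norm_num)
      have hy0' : y 0 = x' 0 := by
        have := congrFun hproj 0
        simpa [projLast] using this.symm
      have hy1' : y 1 = x' 1 := by
        have := congrFun hproj 1
        simpa [projLast] using this.symm
      -- the point Tinv y lies in K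
      have hz : Tinv y ∈ K := by
        rw [hKmem]
        intro i
        have hLx : L i x ≤ cc i := (hKmem x).1 hxK i
        have hTx0 : (T x) 0 = y 0 := by rw [hx']; exact hy0'.symm
        have hTx1 : (T x) 1 = y 1 := by rw [hx']; exact hy1'.symm
        have hs : (T x) 2 ≤ 0 := by
          rw [hT2]
          have := hKle x hxK
          linarith
        have hLz : L i (Tinv y) = L i q₁ + (y 0 * L i v₁ + y 1 * L i v₂) := by
          rw [hTinv_apply, hy2]
          simp [map_add, map_smul, smul_eq_mul]
        have hLxe : L i x = L i q₁ + (y 0 * L i v₁ + y 1 * L i v₂ + (T x) 2 * L i u) := by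
          have := hLrepr (L i) x
          rw [hTx0, hTx1] at this
          exact this
        by_cases hcase : L i v₁ = 0 ∧ L i v₂ = 0
        · rw [hLz, hcase.1, hcase.2]
          have := (hKmem q₁).1 hq₁K i
          simpa using this
        · have hγi : L i u ≤ 0 := hγ i hcase
          have : (0:ℝ) ≤ (T x) 2 * L i u := by
            have h' := mul_nonneg (neg_nonneg.2 hs) (neg_nonneg.2 hγi)
            rw [neg_mul_neg] at h'
            exact h'
          rw [hLz]
          rw [hLxe] at hLx
          linarith
      have : T (Tinv y) = y := Tinv.symm_apply_apply y
      exact ⟨Tinv y, hz, this⟩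
    rw [hempty]
    exact Bornology.isBounded_empty
end

section
/- Let K ⊂ ℝ³ be a non-degenerate 3-dimensional unbounded convex polyhedron such that the direction vectors of any two unbounded edges of K are linearly dependent (all unbounded edges are parallel). Then K can be placed in second trimming position with respect to any of its bounded facets. -/
open Bornology Pointwise

open Filter


private lemma eps_lemma {ι : Type*} (s : Finset ι) (a h : ι → ℝ) (ha : ∀ i ∈ s, a i < 0) :
    ∃ ε : ℝ, 0 < ε ∧ ∀ i ∈ s, a i + ε * h i ≤ 0 := by
  classical
  induction s using Finset.induction_on with
  | empty => exact ⟨1, one_pos, by simp⟩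
  | @insert i s his ih =>
    obtain ⟨ε', hε', hs⟩ := ih (fun j hj => ha j (Finset.mem_insert_of_mem hj))
    have hai : a i < 0 := ha i (Finset.mem_insert_self i s)
    set δ := (-a i) / (|h i| + 1) with hδdef
    have hδ : 0 < δ := div_pos (by linarith) (by positivity)
    refine ⟨min ε' δ, lt_min hε' hδ, ?_⟩
    intro j hj
    rcases Finset.mem_insert.1 hj with rfl | hj
    · have h1 : min ε' δ * h j ≤ δ * (|h j| + 1) := by
        have ha1 : min ε' δ * h j ≤ min ε' δ * (|h j| + 1) := by
          have := le_abs_self (h j)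
          nlinarith [lt_min hε' hδ]
        refine ha1.trans (mul_le_mul_of_nonneg_right (min_le_right ε' δ) (by positivity))
      have h2 : δ * (|h j| + 1) = -a j := by
        rw [hδdef, div_mul_cancel₀ _ (by positivity)]
      linarith
    · have hε'' := hs j hj
      have haj : a j < 0 := ha j (Finset.mem_insert_of_mem hj)
      rcases le_or_gt (h j) 0 with hh | hh
      · have : min ε' δ * h j ≤ 0 := mul_nonpos_of_nonneg_of_nonpos (le_of_lt (lt_min hε' hδ)) hh
        linarith
      · have : min ε' δ * h j ≤ ε' * h j := by
          have := min_le_left ε' δ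
          nlinarith
        linarith

private lemma tau_lemma {ι : Type*} (s : Finset ι) (a g : ι → ℝ) (hg : ∀ i ∈ s, g i < 0) :
    ∃ τ : ℝ, 0 ≤ τ ∧ ∀ i ∈ s, a i + τ * g i ≤ 0 := by
  obtain ⟨ε, hε, hs⟩ := eps_lemma s g a hg
  refine ⟨ε⁻¹, le_of_lt (inv_pos.2 hε), fun i hi => ?_⟩
  have := hs i hi
  have h2 : ε⁻¹ * (g i + ε * a i) ≤ 0 :=
    mul_nonpos_of_nonneg_of_nonpos (le_of_lt (inv_pos.2 hε)) this
  have h3 : ε⁻¹ * (g i + ε * a i) = ε⁻¹ * g i + a i := by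
    field_simp
  -- a i + ε⁻¹ * g i ≤ 0
  rw [h3] at h2
  linarith

private lemma blowup {ι : Type*} [Fintype ι] (M : ι → ((Fin 3 → ℝ) →ₗ[ℝ] ℝ)) (d : ι → ℝ)
    (S : Set (Fin 3 → ℝ)) (hS : ∀ x ∈ S, ∀ j, M j x ≤ d j)
    (V : Submodule ℝ (Fin 3 → ℝ)) (hV : S ⊆ (V : Set (Fin 3 → ℝ)))
    (hub : ¬ IsBounded S) :
    ∃ w : Fin 3 → ℝ, ‖w‖ = 1 ∧ (∀ j, M j w ≤ 0) ∧ w ∈ V := by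
  have hseq : ∀ n : ℕ, ∃ x, x ∈ S ∧ (n : ℝ) < ‖x‖ := by
    intro n
    by_contra hcon
    push_neg at hcon
    exact hub (isBounded_iff_forall_norm_le.2 ⟨n, hcon⟩)
  choose x hxS hxn using hseq
  have hxpos : ∀ n, 0 < ‖x n‖ := fun n => lt_of_le_of_lt (Nat.cast_nonneg n) (hxn n)
  set u : ℕ → Fin 3 → ℝ := fun n => ‖x n‖⁻¹ • x n with hu
  have hun : ∀ n, u n ∈ Metric.sphere (0 : Fin 3 → ℝ) 1 := by
    intro n
    simp only [mem_sphere_zero_iff_norm, hu, norm_smul, norm_inv, norm_norm]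
    rw [inv_mul_cancel₀ (ne_of_gt (hxpos n))]
  obtain ⟨w, hwsph, φ, hφ, hconv⟩ := (isCompact_sphere (0 : Fin 3 → ℝ) 1).tendsto_subseq hun
  have hnorm : Tendsto (fun n => ‖x (φ n)‖) atTop atTop := by
    apply tendsto_atTop_mono (fun n => le_of_lt ?_) tendsto_natCast_atTop_atTop
    calc (n : ℝ) ≤ (φ n : ℝ) := by exact_mod_cast hφ.le_apply
    _ < ‖x (φ n)‖ := hxn (φ n)
  refine ⟨w, mem_sphere_zero_iff_norm.1 hwsph, ?_, ?_⟩
  · intro j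
    have hcontj : Continuous (M j) := (M j).continuous_of_finiteDimensional
    have h1 : Tendsto (fun n => M j (u (φ n))) atTop (nhds (M j w)) :=
      (hcontj.tendsto w).comp hconv
    have h2 : Tendsto (fun n => ‖x (φ n)‖⁻¹ * d j) atTop (nhds 0) := by
      simpa using (tendsto_inv_atTop_zero.comp hnorm).mul_const (d j)
    have hle : ∀ n, M j (u (φ n)) ≤ ‖x (φ n)‖⁻¹ * d j := by
      intro n
      have : M j (u (φ n)) = ‖x (φ n)‖⁻¹ * M j (x (φ n)) := by
        simp [hu, map_smul, smul_eq_mul]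
      rw [this]
      exact mul_le_mul_of_nonneg_left (hS _ (hxS _) j) (inv_nonneg.2 (norm_nonneg _))
    have := le_of_tendsto_of_tendsto' h1 h2 hle
    simpa using this
  · have hVc : IsClosed (V : Set (Fin 3 → ℝ)) := Submodule.closed_of_finiteDimensional V
    apply hVc.mem_of_tendsto hconv
    filter_upwards with n
    exact V.smul_mem _ (hV (hxS (φ n)))

private lemma ray_not_bounded {q v : Fin 3 → ℝ} (hv : v ≠ 0) :
    ¬ IsBounded {x | ∃ t : ℝ, 0 ≤ t ∧ x = q + t • v} := by
  intro hb
  obtain ⟨C, hC⟩ := isBounded_iff_forall_norm_le.1 hb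
  have hvpos : 0 < ‖v‖ := norm_pos_iff.2 hv
  set t := (C + ‖q‖ + 1) / ‖v‖ with ht
  have ht0 : 0 ≤ t := by
    have h1 : 0 ≤ C := le_trans (norm_nonneg q) (by simpa using hC q ⟨0, le_refl 0, by simp⟩)
    positivity
  have hmem := hC (q + t • v) ⟨t, ht0, rfl⟩
  have h2 : ‖t • v‖ ≤ ‖q + t • v‖ + ‖q‖ := by
    simpa [add_sub_cancel_left] using norm_sub_le (q + t • v) q
  have h3 : ‖t • v‖ = t * ‖v‖ := by
    rw [norm_smul, Real.norm_of_nonneg ht0]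
  have h4 : t * ‖v‖ = C + ‖q‖ + 1 := by
    rw [ht, div_mul_cancel₀ _ (ne_of_gt hvpos)]
  nlinarith

private def pK {m : ℕ} (L : Fin m → ((Fin 3 → ℝ) →ₗ[ℝ] ℝ)) (c : Fin m → ℝ) : Set (Fin 3 → ℝ) :=
  {x | ∀ i, L i x ≤ c i}

private def pC {m : ℕ} (L : Fin m → ((Fin 3 → ℝ) →ₗ[ℝ] ℝ)) : Set (Fin 3 → ℝ) :=
  {x | ∀ i, L i x ≤ 0}

private def tS {m : ℕ} (L : Fin m → ((Fin 3 → ℝ) →ₗ[ℝ] ℝ)) (c : Fin m → ℝ)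
    (J : Finset (Fin m)) : Set (Fin 3 → ℝ) :=
  {x | (∀ i, L i x ≤ c i) ∧ ∀ i ∈ J, L i x = c i}

private lemma tS_subset_pK {m : ℕ} {L : Fin m → ((Fin 3 → ℝ) →ₗ[ℝ] ℝ)} {c : Fin m → ℝ}
    {J : Finset (Fin m)} : tS L c J ⊆ pK L c := fun _ hx => hx.1

private lemma tS_closed {m : ℕ} (L : Fin m → ((Fin 3 → ℝ) →ₗ[ℝ] ℝ)) (c : Fin m → ℝ)
    (J : Finset (Fin m)) : IsClosed (tS L c J) := by
  have h1 : tS L c J = (⋂ i, (L i) ⁻¹' Set.Iic (c i)) ∩ ⋂ i ∈ J, (L i) ⁻¹' {c i} := by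
    ext x; simp [tS, Set.mem_iInter]
  rw [h1]
  apply IsClosed.inter
  · exact isClosed_iInter fun i =>
      IsClosed.preimage (L i).continuous_of_finiteDimensional isClosed_Iic
  · exact isClosed_iInter fun i => isClosed_iInter fun _ =>
      IsClosed.preimage (L i).continuous_of_finiteDimensional isClosed_singleton

private lemma tS_convex {m : ℕ} (L : Fin m → ((Fin 3 → ℝ) →ₗ[ℝ] ℝ)) (c : Fin m → ℝ)
    (J : Finset (Fin m)) : Convex ℝ (tS L c J) := by
  rintro x ⟨hx1, hx2⟩ y ⟨hy1, hy2⟩ a b ha hb hab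
  constructor
  · intro i
    have : L i (a • x + b • y) = a * L i x + b * L i y := by
      simp [map_add, map_smul, smul_eq_mul]
    rw [this]
    calc a * L i x + b * L i y ≤ a * c i + b * c i := by
          apply add_le_add (mul_le_mul_of_nonneg_left (hx1 i) ha)
            (mul_le_mul_of_nonneg_left (hy1 i) hb)
    _ = c i := by rw [← add_mul, hab, one_mul]
  · intro i hi
    have : L i (a • x + b • y) = a * L i x + b * L i y := by
      simp [map_add, map_smul, smul_eq_mul]
    rw [this, hx2 i hi, hy2 i hi, ← add_mul, hab, one_mul]

private lemma face_of_tS {m : ℕ} (L : Fin m → ((Fin 3 → ℝ) →ₗ[ℝ] ℝ)) (c : Fin m → ℝ)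
    (J : Finset (Fin m)) (hne : (tS L c J).Nonempty) (hprop : tS L c J ≠ pK L c) :
    IsFaceOf 3 (pK L c) (tS L c J) := by
  classical
  set f : (Fin 3 → ℝ) →ₗ[ℝ] ℝ := ∑ i ∈ J, L i with hf
  set d : ℝ := ∑ i ∈ J, c i with hd
  have hfx : ∀ x, f x = ∑ i ∈ J, L i x := by
    intro x; rw [hf]; simp [LinearMap.sum_apply]
  have hKf : ∀ x ∈ pK L c, f x ≤ d := by
    intro x hx; rw [hfx, hd]; exact Finset.sum_le_sum fun i _ => hx i
  have heq : pK L c ∩ {x | f x = d} = tS L c J := by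
    ext x
    constructor
    · rintro ⟨hxK, hxf⟩
      refine ⟨hxK, fun i hi => ?_⟩
      have hsum : ∑ j ∈ J, (c j - L j x) = 0 := by
        rw [Finset.sum_sub_distrib, ← hd, ← hfx x, hxf, sub_self]
      have hzero := (Finset.sum_eq_zero_iff_of_nonneg
        (fun j hj => sub_nonneg.2 (hxK j))).1 hsum i hi
      linarith [sub_eq_zero.1 hzero]
    · rintro ⟨hxK, hxJ⟩
      refine ⟨hxK, ?_⟩
      show f x = d
      rw [hfx, hd]
      exact Finset.sum_congr rfl fun i hi => hxJ i hi
  obtain ⟨x₁, hx₁⟩ := hne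
  have hf0 : f ≠ 0 := by
    intro hf0
    apply hprop
    have hd0 : d = 0 := by
      have : f x₁ = d := by
        rw [hfx, hd]; exact Finset.sum_congr rfl fun i hi => hx₁.2 i hi
      rw [hf0] at this; simpa using this.symm
    apply Set.Subset.antisymm tS_subset_pK
    intro x hx
    have : f x = d := by rw [hf0, hd0]; simp
    exact (heq ▸ (⟨hx, this⟩ : x ∈ pK L c ∩ {x | f x = d}))
  refine ⟨f, d, hf0, ⟨x₁, ?_⟩, hKf, heq.symm⟩
  rw [heq]; exact hx₁
private lemma slide {m : ℕ} (L : Fin m → ((Fin 3 → ℝ) →ₗ[ℝ] ℝ)) (b : Fin m → ℝ)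
    (P : Set (Fin 3 → ℝ)) (hPc : IsClosed P) (z : Fin 3 → ℝ) (hz : z ≠ 0)
    (hPz : ∀ x ∈ P, ∀ s : ℝ, x + s • z ∈ P)
    (hXb : IsBounded ({x | ∀ i, L i x ≤ b i} ∩ P))
    (x0 : Fin 3 → ℝ) (hx0 : x0 ∈ {x | ∀ i, L i x ≤ b i} ∩ P) :
    ∃ x1 ∈ {x | ∀ i, L i x ≤ b i} ∩ P, ∃ i1, L i1 x1 = b i1 ∧ 0 < L i1 z := by
  classical
  set X := {x | ∀ i, L i x ≤ b i} ∩ P with hX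
  set S := {s : ℝ | 0 ≤ s ∧ x0 + s • z ∈ X} with hS
  have hS0 : (0 : ℝ) ∈ S := ⟨le_refl 0, by simpa using hx0⟩
  have hSbdd : BddAbove S := by
    obtain ⟨C, hC⟩ := isBounded_iff_forall_norm_le.1 hXb
    refine ⟨(C + ‖x0‖) / ‖z‖, fun s hs => ?_⟩
    have h1 : ‖x0 + s • z‖ ≤ C := hC _ hs.2
    have h2 : ‖s • z‖ ≤ ‖x0 + s • z‖ + ‖x0‖ := by
      simpa [add_sub_cancel_left] using norm_sub_le (x0 + s • z) x0
    have h3 : ‖s • z‖ = s * ‖z‖ := by rw [norm_smul, Real.norm_of_nonneg hs.1]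
    have hzpos : 0 < ‖z‖ := norm_pos_iff.2 hz
    rw [le_div_iff₀ hzpos]
    nlinarith
  have hSc : IsClosed S := by
    have hXc : IsClosed X := by
      apply IsClosed.inter _ hPc
      have : {x : Fin 3 → ℝ | ∀ i, L i x ≤ b i} = ⋂ i, (L i) ⁻¹' Set.Iic (b i) := by
        ext x; simp [Set.mem_iInter]
      rw [this]
      exact isClosed_iInter fun i =>
        IsClosed.preimage (L i).continuous_of_finiteDimensional isClosed_Iic
    have hcont : Continuous fun s : ℝ => x0 + s • z := by continuity
    exact (isClosed_le continuous_const continuous_id).inter (hXc.preimage hcont)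
  set σ := sSup S with hσ
  have hσS : σ ∈ S := hSc.csSup_mem ⟨0, hS0⟩ hSbdd
  set x1 := x0 + σ • z with hx1def
  have hx1X : x1 ∈ X := hσS.2
  have hviol : ∀ k : ℕ, ∃ i, b i < L i x1 + (1 / (k + 1 : ℝ)) * L i z := by
    intro k
    have hεpos : 0 < (1 / (k + 1 : ℝ)) := by positivity
    have hnotS : σ + 1 / (k + 1 : ℝ) ∉ S := fun hmem =>
      absurd (le_csSup hSbdd hmem) (by linarith)
    have hP' : x0 + (σ + 1 / (k + 1 : ℝ)) • z ∈ P := hPz x0 hx0.2 _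
    have : ¬ (x0 + (σ + 1 / (k + 1 : ℝ)) • z ∈ X) := fun hmem =>
      hnotS ⟨by linarith [hσS.1], hmem⟩
    rw [hX] at this
    simp only [Set.mem_inter_iff, Set.mem_setOf_eq, not_and] at this
    have h4 := this
    by_contra hcon
    push_neg at hcon
    apply this
    · intro i
      have := hcon i
      have heq : L i (x0 + (σ + 1 / (k + 1 : ℝ)) • z) =
          L i x1 + (1 / (k + 1 : ℝ)) * L i z := by
        simp [hx1def, map_add, map_smul, smul_eq_mul]; ring
      rw [heq]; exact this
    · exact hP'
  choose g hg using hviol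
  obtain ⟨i1, hi1⟩ := Finite.exists_infinite_fiber g
  have hfib : ∀ N : ℕ, ∃ k, N < k ∧ g k = i1 := by
    intro N
    have hinf : (g ⁻¹' {i1}).Infinite := Set.infinite_coe_iff.1 hi1
    obtain ⟨k, hk1, hk2⟩ := hinf.exists_gt N
    exact ⟨k, hk2, hk1⟩
  have hkey : ∀ N : ℕ, ∃ k : ℕ, N < k ∧ b i1 < L i1 x1 + (1 / (k + 1 : ℝ)) * L i1 z := by
    intro N
    obtain ⟨k, hk, hgk⟩ := hfib N
    exact ⟨k, hk, by have := hg k; rwa [hgk] at this⟩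
  have hge : L i1 x1 ≥ b i1 := by
    by_contra hlt
    push_neg at hlt
    set δ := b i1 - L i1 x1 with hδ
    have hδpos : 0 < δ := by simp [hδ]; linarith
    obtain ⟨k, hk, hineq⟩ := hkey (Nat.ceil (|L i1 z| / δ))
    have h5 : (1 / (k + 1 : ℝ)) * L i1 z ≤ (1 / (k + 1 : ℝ)) * |L i1 z| :=
      mul_le_mul_of_nonneg_left (le_abs_self _) (by positivity)
    have h6 : (|L i1 z| / δ) < k + 1 := by
      calc (|L i1 z| / δ) ≤ (Nat.ceil (|L i1 z| / δ) : ℝ) := Nat.le_ceil _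
      _ < k + 1 := by exact_mod_cast Nat.lt_succ_of_lt hk
    have h7 : (1 / (k + 1 : ℝ)) * |L i1 z| < δ := by
      rw [div_mul_eq_mul_div, one_mul, div_lt_iff₀ (by positivity)]
      calc |L i1 z| = (|L i1 z| / δ) * δ := by field_simp
      _ < (k + 1) * δ := by nlinarith
      _ = δ * (k + 1) := by ring
    linarith
  have heq1 : L i1 x1 = b i1 := le_antisymm (hx1X.1 i1) hge
  obtain ⟨k0, _, hineq0⟩ := hkey 0
  have hpos : 0 < L i1 z := by
    have hε : 0 < (1 / (k0 + 1 : ℝ)) := by positivity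
    nlinarith [hineq0, heq1]
  exact ⟨x1, hx1X, i1, heq1, hpos⟩

private lemma exists_vertex {m : ℕ} (L : Fin m → ((Fin 3 → ℝ) →ₗ[ℝ] ℝ)) (b : Fin m → ℝ)
    (P : Set (Fin 3 → ℝ)) (hPc : IsClosed P)
    (hPz : ∀ y ∈ P, ∀ y' ∈ P, ∀ x ∈ P, ∀ s : ℝ, x + s • (y' - y) ∈ P)
    (hXb : IsBounded ({x | ∀ i, L i x ≤ b i} ∩ P))
    (hne : ({x | ∀ i, L i x ≤ b i} ∩ P).Nonempty) :
    ∃ w ∈ {x | ∀ i, L i x ≤ b i} ∩ P, ∃ J : Finset (Fin m),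
      {x ∈ {x | ∀ i, L i x ≤ b i} ∩ P | ∀ i ∈ J, L i x = b i} = {w} := by
  classical
  set X := {x | ∀ i, L i x ≤ b i} ∩ P with hX
  set fam : Finset (Finset (Fin m)) :=
    Finset.univ.filter (fun J => ({x ∈ X | ∀ i ∈ J, L i x = b i}).Nonempty) with hfam
  have hfamne : fam.Nonempty := by
    refine ⟨∅, ?_⟩
    simp only [hfam, Finset.mem_filter, Finset.mem_univ, true_and]
    obtain ⟨x, hx⟩ := hne
    exact ⟨x, hx, by simp⟩
  obtain ⟨J, hJfam, hJmax⟩ := Finset.exists_max_image fam Finset.card hfamne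
  have hJne : ({x ∈ X | ∀ i ∈ J, L i x = b i}).Nonempty := by
    simpa [hfam] using (Finset.mem_filter.1 hJfam).2
  obtain ⟨w, hw⟩ := hJne
  refine ⟨w, hw.1, J, ?_⟩
  rw [Set.eq_singleton_iff_unique_mem]
  refine ⟨hw, fun y' hy' => ?_⟩
  by_contra hne'
  set z := y' - w with hzdef
  have hz : z ≠ 0 := sub_ne_zero.2 hne'
  set P' := P ∩ {x | ∀ i ∈ J, L i x = b i} with hP'
  have hP'c : IsClosed P' := by
    apply hPc.inter
    have : {x : Fin 3 → ℝ | ∀ i ∈ J, L i x = b i} = ⋂ i ∈ J, (L i) ⁻¹' {b i} := by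
      ext x; simp [Set.mem_iInter]
    rw [this]
    exact isClosed_iInter fun i => isClosed_iInter fun _ =>
      IsClosed.preimage (L i).continuous_of_finiteDimensional isClosed_singleton
  have hP'z : ∀ x ∈ P', ∀ s : ℝ, x + s • z ∈ P' := by
    rintro x ⟨hxP, hxJ⟩ s
    constructor
    · exact hPz w hw.1.2 y' hy'.1.2 x hxP s
    · intro i hi
      have : L i (x + s • z) = L i x + s * (L i y' - L i w) := by
        simp [hzdef, map_add, map_smul, map_sub, smul_eq_mul]
      rw [this, hxJ i hi, hy'.2 i hi, hw.2 i hi, sub_self, mul_zero, add_zero]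
  have hX'eq : {x | ∀ i, L i x ≤ b i} ∩ P' = {x ∈ X | ∀ i ∈ J, L i x = b i} := by
    ext x; simp only [hP', hX, Set.mem_inter_iff, Set.mem_setOf_eq, Set.mem_sep_iff]; tauto
  have hX'b : IsBounded ({x | ∀ i, L i x ≤ b i} ∩ P') := by
    rw [hX'eq]; exact hXb.subset (Set.sep_subset _ _)
  have hwX' : w ∈ {x | ∀ i, L i x ≤ b i} ∩ P' := by
    rw [hX'eq]; exact hw
  obtain ⟨x1, hx1, i1, hi1eq, hi1pos⟩ := slide L b P' hP'c z hz hP'z hX'b w hwX'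
  have hi1J : i1 ∉ J := by
    intro hmem
    have : L i1 z = 0 := by
      simp [hzdef, map_sub, hy'.2 i1 hmem, hw.2 i1 hmem]
    linarith
  have hbig : insert i1 J ∈ fam := by
    simp only [hfam, Finset.mem_filter, Finset.mem_univ, true_and]
    have hx1' : x1 ∈ {x | x ∈ X ∧ ∀ i ∈ J, L i x = b i} := hX'eq ▸ hx1
    refine ⟨x1, hx1'.1, ?_⟩
    intro i hi
    rcases Finset.mem_insert.1 hi with rfl | hi
    · exact hi1eq
    · exact hx1'.2 i hi
  have := hJmax _ hbig
  rw [Finset.card_insert_of_notMem hi1J] at this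
  omega
private lemma pigeon {m : ℕ} (A B D : Fin m → ℝ) (hub : ∀ i, A i ≤ B i)
    (h : ∀ k : ℕ, ∃ i, B i < A i + (1 / (k + 1 : ℝ)) * D i) :
    ∃ i0, A i0 = B i0 ∧ 0 < D i0 := by
  classical
  choose g hg using h
  obtain ⟨i0, hi0⟩ := Finite.exists_infinite_fiber g
  have hfib : ∀ N : ℕ, ∃ k, N < k ∧ B i0 < A i0 + (1 / (k + 1 : ℝ)) * D i0 := by
    intro N
    obtain ⟨k, hk1, hk2⟩ := (Set.infinite_coe_iff.1 hi0).exists_gt N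
    exact ⟨k, hk2, by have := hg k; rwa [hk1] at this⟩
  have hge : B i0 ≤ A i0 := by
    by_contra hlt
    push_neg at hlt
    set δ := B i0 - A i0 with hδ
    have hδpos : 0 < δ := by simp [hδ]; linarith
    obtain ⟨k, hk, hineq⟩ := hfib (Nat.ceil (|D i0| / δ))
    have h5 : (1 / (k + 1 : ℝ)) * D i0 ≤ (1 / (k + 1 : ℝ)) * |D i0| :=
      mul_le_mul_of_nonneg_left (le_abs_self _) (by positivity)
    have h6 : (|D i0| / δ) < k + 1 := by
      calc (|D i0| / δ) ≤ (Nat.ceil (|D i0| / δ) : ℝ) := Nat.le_ceil _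
      _ < k + 1 := by exact_mod_cast Nat.lt_succ_of_lt hk
    have h7 : (1 / (k + 1 : ℝ)) * |D i0| < δ := by
      rw [div_mul_eq_mul_div, one_mul, div_lt_iff₀ (by positivity)]
      calc |D i0| = (|D i0| / δ) * δ := by field_simp
      _ < (k + 1) * δ := by nlinarith
      _ = δ * (k + 1) := by ring
    linarith
  have heq : A i0 = B i0 := le_antisymm (hub i0) hge
  obtain ⟨k0, _, hineq0⟩ := hfib 0
  have hε : 0 < (1 / (k0 + 1 : ℝ)) := by positivity
  exact ⟨i0, heq, by nlinarith⟩

private lemma edge_exists {m : ℕ} (L : Fin m → ((Fin 3 → ℝ) →ₗ[ℝ] ℝ)) (c : Fin m → ℝ)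
    (hpt : ∀ x ∈ pC L, -x ∈ pC L → x = (0 : Fin 3 → ℝ))
    (hKne : (pK L c).Nonempty) (hKdim : polyDim 3 (pK L c) = 3)
    (hKunb : ¬ IsBounded (pK L c))
    (w : Fin 3 → ℝ) (hwC : w ∈ pC L) (hw0 : w ≠ 0)
    (f : (Fin 3 → ℝ) →ₗ[ℝ] ℝ) (hfC : ∀ x ∈ pC L, f x ≤ 0) (hfw : f w = 0)
    (hfray : ∀ x ∈ pC L, f x = 0 → ∃ t : ℝ, 0 ≤ t ∧ x = t • w) :
    ∃ A, IsUnboundedEdgeWithDir 3 (pK L c) A w := by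
  classical
  set fam : Finset (Finset (Fin m)) :=
    Finset.univ.filter (fun J => (tS L c J).Nonempty ∧ ∀ i ∈ J, L i w = 0) with hfam
  have hfamne : fam.Nonempty := by
    refine ⟨∅, ?_⟩
    simp only [hfam, Finset.mem_filter, Finset.mem_univ, true_and]
    obtain ⟨x, hx⟩ := hKne
    exact ⟨⟨x, hx, by simp⟩, by simp⟩
  obtain ⟨J, hJfam, hJmax⟩ := Finset.exists_max_image fam Finset.card hfamne
  have hJprop := (Finset.mem_filter.1 hJfam).2
  obtain ⟨⟨x0, hx0⟩, hJw⟩ := hJprop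
  set E := tS L c J with hE
  have hrecE : ∀ x ∈ E, ∀ t : ℝ, 0 ≤ t → x + t • w ∈ E := by
    rintro x ⟨hx1, hx2⟩ t ht
    constructor
    · intro i
      have : L i (x + t • w) = L i x + t * L i w := by
        simp [map_add, map_smul, smul_eq_mul]
      rw [this]
      nlinarith [hwC i, hx1 i]
    · intro i hi
      have : L i (x + t • w) = L i x + t * L i w := by
        simp [map_add, map_smul, smul_eq_mul]
      rw [this, hJw i hi, mul_zero, add_zero]
      exact hx2 i hi
  -- the key claim: every vector killed by the J-equalities is a multiple of w
  have hline : ∀ v : Fin 3 → ℝ, (∀ i ∈ J, L i v = 0) → ∃ r : ℝ, v = r • w := by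
    intro v hv
    by_contra hnv
    have hbranch : ∀ ζ : Fin 3 → ℝ, (∀ i ∈ J, L i ζ = 0) → (¬ ∃ r : ℝ, ζ = r • w) →
        f ζ < 0 := by
      intro ζ hζJ hζw
      by_cases hD : ∃ i, 0 < L i ζ ∧ L i w = 0
      · -- contradiction with maximality of J
        exfalso
        set D : Finset (Fin m) := Finset.univ.filter (fun i => 0 < L i ζ ∧ L i w = 0) with hDdef
        have hDne : D.Nonempty := by
          obtain ⟨i, hi⟩ := hD
          exact ⟨i, by simp [hDdef, hi.1, hi.2]⟩
        obtain ⟨i1, hi1D, hi1min⟩ :=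
          Finset.exists_min_image D (fun i => (c i - L i x0) / (L i ζ)) hDne
        have hi1mem := Finset.mem_filter.1 hi1D
        have hi1ζ : 0 < L i1 ζ := hi1mem.2.1
        have hi1w : L i1 w = 0 := hi1mem.2.2
        set s : ℝ := (c i1 - L i1 x0) / (L i1 ζ) with hsdef
        have hs0 : 0 ≤ s := div_nonneg (by linarith [hx0.1 i1]) (le_of_lt hi1ζ)
        obtain ⟨τ, hτ0, hτ⟩ := tau_lemma
          (Finset.univ.filter (fun i => 0 < L i ζ ∧ L i w < 0))
          (fun i => L i x0 + s * L i ζ - c i) (fun i => L i w)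
          (fun i hi => (Finset.mem_filter.1 hi).2.2)
        set xs : Fin 3 → ℝ := x0 + τ • w + s • ζ with hxs
        have hval : ∀ i, L i xs = L i x0 + τ * L i w + s * L i ζ := by
          intro i; simp [hxs, map_add, map_smul, smul_eq_mul]
        have hxsK : ∀ i, L i xs ≤ c i := by
          intro i
          rw [hval]
          rcases lt_trichotomy (L i ζ) 0 with hζi | hζi | hζi
          · nlinarith [hwC i, hx0.1 i]
          · rw [hζi, mul_zero, add_zero]
            nlinarith [hwC i, hx0.1 i]
          · rcases lt_or_eq_of_le (hwC i) with hwi | hwi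
            · have hmem : i ∈ Finset.univ.filter (fun i => 0 < L i ζ ∧ L i w < 0) := by
                simp [hζi, hwi]
              have := hτ i hmem
              linarith
            · have hmem : i ∈ D := by simp [hDdef, hζi, hwi]
              have hle := hi1min i hmem
              have : s * L i ζ ≤ c i - L i x0 := by
                rw [hsdef]
                calc (c i1 - L i1 x0) / (L i1 ζ) * L i ζ
                    ≤ (c i - L i x0) / (L i ζ) * L i ζ :=
                      mul_le_mul_of_nonneg_right hle (le_of_lt hζi)
                _ = c i - L i x0 := div_mul_cancel₀ _ (ne_of_gt hζi)
              rw [hwi, mul_zero, add_zero]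
              linarith
        have hxsJ : ∀ i ∈ J, L i xs = c i := by
          intro i hi
          rw [hval, hJw i hi, hζJ i hi, mul_zero, mul_zero, add_zero, add_zero]
          exact hx0.2 i hi
        have hxsi1 : L i1 xs = c i1 := by
          rw [hval, hi1w, mul_zero, add_zero, hsdef,
            div_mul_cancel₀ _ (ne_of_gt hi1ζ)]
          ring
        have hi1J : i1 ∉ J := by
          intro hmem
          have := hζJ i1 hmem
          linarith
        have hbig : insert i1 J ∈ fam := by
          simp only [hfam, Finset.mem_filter, Finset.mem_univ, true_and]
          constructor
          · refine ⟨xs, hxsK, ?_⟩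
            intro i hi
            rcases Finset.mem_insert.1 hi with rfl | hi
            · exact hxsi1
            · exact hxsJ i hi
          · intro i hi
            rcases Finset.mem_insert.1 hi with rfl | hi
            · exact hi1w
            · exact hJw i hi
        have := hJmax _ hbig
        rw [Finset.card_insert_of_notMem hi1J] at this
        omega
      · -- ζ + τ w lies in the recession cone; use f
        push_neg at hD
        obtain ⟨τ, hτ0, hτ⟩ := tau_lemma
          (Finset.univ.filter (fun i => 0 < L i ζ))
          (fun i => L i ζ) (fun i => L i w)
          (fun i hi => by
            have h1 := (Finset.mem_filter.1 hi).2
            have h2 := hD i h1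
            have h3 := hwC i
            exact lt_of_le_of_ne h3 h2)
        have hmemC : ζ + τ • w ∈ pC L := by
          intro i
          have hval : L i (ζ + τ • w) = L i ζ + τ * L i w := by
            simp [map_add, map_smul, smul_eq_mul]
          rw [hval]
          rcases le_or_gt (L i ζ) 0 with hζi | hζi
          · nlinarith [hwC i]
          · have hmem : i ∈ Finset.univ.filter (fun i => 0 < L i ζ) := by simp [hζi]
            have := hτ i hmem
            simpa using this
        have hfle := hfC _ hmemC
        have hfne : f (ζ + τ • w) ≠ 0 := by
          intro h0
          obtain ⟨t, ht, hteq⟩ := hfray _ hmemC h0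
          apply hζw
          refine ⟨t - τ, ?_⟩
          have : ζ = t • w - τ • w := by
            rw [← hteq]; abel
          rw [this, sub_smul]
        have : f (ζ + τ • w) < 0 := lt_of_le_of_ne hfle hfne
        have hval : f (ζ + τ • w) = f ζ + τ * f w := by
          simp [map_add, map_smul, smul_eq_mul]
        rw [hval, hfw, mul_zero, add_zero] at this
        exact this
    have h1 : f v < 0 := hbranch v hv hnv
    have h2 : f (-v) < 0 := by
      apply hbranch
      · intro i hi; rw [map_neg, hv i hi, neg_zero]
      · rintro ⟨r, hr⟩
        apply hnv
        refine ⟨-r, ?_⟩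
        have : v = -(r • w) := by rw [← hr]; abel
        rw [this, neg_smul]
    rw [map_neg] at h2
    linarith
  -- E is contained in the line through x0 with direction w
  have hEclosed : IsClosed E := tS_closed L c J
  set S := {t : ℝ | x0 + t • w ∈ E} with hSdef
  have h0S : (0 : ℝ) ∈ S := by simp [hSdef]; simpa using hx0
  have hSup : ∀ t : ℝ, 0 ≤ t → t ∈ S := fun t ht => hrecE x0 hx0 t ht
  have hSc : IsClosed S := by
    have hcont : Continuous fun t : ℝ => x0 + t • w :=
      continuous_const.add (continuous_id.smul continuous_const)
    exact hEclosed.preimage hcont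
  have hSbdd : BddBelow S := by
    by_contra hbdd
    have hLw : ∀ i, L i w = 0 := by
      intro i
      by_contra hne
      have hlt : L i w < 0 := lt_of_le_of_ne (hwC i) hne
      rw [not_bddBelow_iff] at hbdd
      obtain ⟨t, htS, htlt⟩ := hbdd ((c i - L i x0) / (L i w) - 1)
      have hmem : L i (x0 + t • w) ≤ c i := htS.1 i
      have hval : L i (x0 + t • w) = L i x0 + t * L i w := by
        simp [map_add, map_smul, smul_eq_mul]
      rw [hval] at hmem
      have : t * L i w > (c i - L i x0) := by
        have h8 : t < (c i - L i x0) / (L i w) := by linarith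
        calc t * L i w > ((c i - L i x0) / (L i w)) * L i w := by nlinarith
        _ = c i - L i x0 := div_mul_cancel₀ _ (ne_of_lt hlt)
      linarith
    have : w = 0 := hpt w hwC (fun i => by rw [map_neg, hLw i, neg_zero])
    exact hw0 this
  set a := sInf S with hadef
  have haS : a ∈ S := hSc.csInf_mem ⟨0, h0S⟩ hSbdd
  have ha0 : a ≤ 0 := csInf_le hSbdd h0S
  set q : Fin 3 → ℝ := x0 + a • w with hqdef
  have hqE : q ∈ E := haS
  have hEray : E = {x | ∃ t : ℝ, 0 ≤ t ∧ x = q + t • w} := by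
    ext x
    constructor
    · intro hx
      obtain ⟨r, hr⟩ := hline (x - x0) (fun i hi => by
        rw [map_sub, hx.2 i hi, hx0.2 i hi, sub_self])
      have hxeq : x = x0 + r • w := by
        rw [← hr]; abel
      have hrS : r ∈ S := by rw [hSdef]; simp only [Set.mem_setOf_eq, ← hxeq]; exact hx
      have har : a ≤ r := csInf_le hSbdd hrS
      refine ⟨r - a, by linarith, ?_⟩
      rw [hxeq, hqdef, sub_smul]
      abel
    · rintro ⟨t, ht, rfl⟩
      exact hrecE q hqE t ht
  -- dimension of E
  have hdirE : (affineSpan ℝ E).direction = Submodule.span ℝ {w} := by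
    apply le_antisymm
    · have hsub : E ⊆ (AffineSubspace.mk' q (Submodule.span ℝ {w}) : Set (Fin 3 → ℝ)) := by
        intro x hx
        rw [hEray] at hx
        obtain ⟨t, ht, rfl⟩ := hx
        have hmem : t • w ∈ Submodule.span ℝ {w} :=
          Submodule.smul_mem _ _ (Submodule.mem_span_singleton_self w)
        have := AffineSubspace.vadd_mem_mk' (v := t • w) q hmem
        simpa [vadd_eq_add, add_comm] using this
      have hle : affineSpan ℝ E ≤ AffineSubspace.mk' q (Submodule.span ℝ {w}) :=
        affineSpan_le.2 hsub
      calc (affineSpan ℝ E).direction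
          ≤ (AffineSubspace.mk' q (Submodule.span ℝ {w})).direction :=
            AffineSubspace.direction_le hle
      _ = Submodule.span ℝ {w} := AffineSubspace.direction_mk' q _
    · rw [Submodule.span_le, Set.singleton_subset_iff]
      have hq1 : q ∈ affineSpan ℝ E := subset_affineSpan ℝ E hqE
      have hq2 : q + w ∈ affineSpan ℝ E := by
        apply subset_affineSpan ℝ E
        rw [hEray]
        exact ⟨1, zero_le_one, by rw [one_smul]⟩
      have := AffineSubspace.vsub_mem_direction hq2 hq1
      simpa [vsub_eq_sub] using this
  have hdimE : polyDim 3 E = 1 := by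
    rw [polyDim, hdirE]
    exact finrank_span_singleton hw0
  have hEneK : E ≠ pK L c := by
    intro h
    rw [h, hKdim] at hdimE
    omega
  have hface : IsFaceOf 3 (pK L c) E := face_of_tS L c J ⟨x0, hx0⟩ hEneK
  have hEunb : ¬ IsBounded E := by
    rw [hEray]
    exact ray_not_bounded hw0
  -- q is a vertex
  have hviol : ∀ k : ℕ, ∃ i, c i < L i q + (1 / (k + 1 : ℝ)) * (-(L i w)) := by
    intro k
    have hεpos : 0 < (1 / (k + 1 : ℝ)) := by positivity
    have hnotS : a - 1 / (k + 1 : ℝ) ∉ S := by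
      intro hmem
      have := csInf_le hSbdd hmem
      rw [← hadef] at this
      linarith
    have hnotE : x0 + (a - 1 / (k + 1 : ℝ)) • w ∉ E := hnotS
    have hJeq : ∀ i ∈ J, L i (x0 + (a - 1 / (k + 1 : ℝ)) • w) = c i := by
      intro i hi
      have : L i (x0 + (a - 1 / (k + 1 : ℝ)) • w) = L i x0 + (a - 1 / (k + 1 : ℝ)) * L i w := by
        simp [map_add, map_smul, smul_eq_mul]
      rw [this, hJw i hi, mul_zero, add_zero]
      exact hx0.2 i hi
    by_contra hcon
    push_neg at hcon
    apply hnotE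
    refine ⟨fun i => ?_, hJeq⟩
    have hval : L i (x0 + (a - 1 / (k + 1 : ℝ)) • w) =
        L i q + (1 / (k + 1 : ℝ)) * (-(L i w)) := by
      simp [hqdef, map_add, map_smul, smul_eq_mul]
      ring
    rw [hval]
    exact hcon i
  obtain ⟨i0, hi0eq, hi0w⟩ := pigeon (fun i => L i q) c (fun i => -(L i w))
    (fun i => hqE.1 i) hviol
  have hi0w' : L i0 w < 0 := by linarith
  have hi0J : i0 ∉ J := by
    intro hmem
    have := hJw i0 hmem
    linarith
  have hsingle : tS L c (insert i0 J) = {q} := by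
    apply Set.eq_singleton_iff_unique_mem.2
    constructor
    · refine ⟨hqE.1, ?_⟩
      intro i hi
      rcases Finset.mem_insert.1 hi with rfl | hi
      · exact hi0eq
      · exact hqE.2 i hi
    · rintro x ⟨hx1, hx2⟩
      have hxE : x ∈ E := ⟨hx1, fun i hi => hx2 i (Finset.mem_insert_of_mem hi)⟩
      rw [hEray] at hxE
      obtain ⟨t, ht, rfl⟩ := hxE
      have h9 := hx2 i0 (Finset.mem_insert_self i0 J)
      have hval : L i0 (q + t • w) = L i0 q + t * L i0 w := by
        simp [map_add, map_smul, smul_eq_mul]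
      rw [hval, hi0eq] at h9
      have ht0 : t = 0 := by nlinarith
      rw [ht0, zero_smul, add_zero]
  have hvert : IsVertexOf 3 (pK L c) q := by
    have hne' : (tS L c (insert i0 J)).Nonempty := by
      rw [hsingle]; exact ⟨q, rfl⟩
    have hprop' : tS L c (insert i0 J) ≠ pK L c := by
      rw [hsingle]
      intro h
      exact hKunb (h ▸ Bornology.isBounded_singleton)
    have := face_of_tS L c (insert i0 J) hne' hprop'
    rwa [hsingle] at this
  exact ⟨E, ⟨hface, hdimE⟩, hEunb, hw0, q, hvert, hEray⟩
private noncomputable def dotL (v : Fin 3 → ℝ) : (Fin 3 → ℝ) →ₗ[ℝ] ℝ :=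
  ∑ i : Fin 3, v i • LinearMap.proj i

private lemma dotL_apply (v x : Fin 3 → ℝ) : dotL v x = ∑ i : Fin 3, v i * x i := by
  simp [dotL, LinearMap.sum_apply, smul_eq_mul]

private lemma cone_ray {m : ℕ} (L : Fin m → ((Fin 3 → ℝ) →ₗ[ℝ] ℝ))
    (φ : (Fin 3 → ℝ) →ₗ[ℝ] ℝ)
    (hφpos : ∀ x ∈ pC L, x ≠ 0 → 0 < φ x)
    (w : Fin 3 → ℝ)
    (hext : w ∈ Set.extremePoints ℝ ({x | ∀ i, L i x ≤ 0} ∩ {x | φ x = 1})) :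
    ∀ x ∈ pC L, (∀ i, L i w = 0 → L i x = 0) → ∃ t : ℝ, 0 ≤ t ∧ x = t • w := by
  classical
  set B := {x : Fin 3 → ℝ | ∀ i, L i x ≤ 0} ∩ {x | φ x = 1} with hBdef
  obtain ⟨hwB, hwprop⟩ := mem_extremePoints.1 hext
  intro x hx hxw
  rcases eq_or_ne x 0 with rfl | hx0
  · exact ⟨0, le_refl 0, by rw [zero_smul]⟩
  have hφx : 0 < φ x := hφpos x hx hx0
  set b := (φ x)⁻¹ • x with hbdef
  have hbB : b ∈ B := by
    constructor
    · intro i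
      have : L i b = (φ x)⁻¹ * L i x := by simp [hbdef, map_smul, smul_eq_mul]
      rw [this]
      have := hx i
      have hinv : (0:ℝ) ≤ (φ x)⁻¹ := le_of_lt (inv_pos.2 hφx)
      nlinarith
    · show φ b = 1
      simp [hbdef, map_smul, smul_eq_mul]
      field_simp
  by_cases hbw : b = w
  · refine ⟨φ x, le_of_lt hφx, ?_⟩
    have : (φ x) • b = x := by
      rw [hbdef, smul_inv_smul₀ (ne_of_gt hφx)]
    rw [← hbw, this]
  · exfalso
    obtain ⟨ε, hεpos, hε⟩ := eps_lemma (Finset.univ.filter (fun i => L i w < 0))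
      (fun i => L i w) (fun i => |L i (b - w)|)
      (fun i hi => (Finset.mem_filter.1 hi).2)
    have hmem : ∀ s : ℝ, |s| ≤ ε → w + s • (b - w) ∈ B := by
      intro s hs
      constructor
      · intro i
        have hval : L i (w + s • (b - w)) = L i w + s * L i (b - w) := by
          simp [map_add, map_smul, smul_eq_mul]
        rw [hval]
        rcases eq_or_lt_of_le (hwB.1 i) with hwi | hwi
        · have hbi : L i b = 0 := by
            have hxi := hxw i hwi
            simp [hbdef, map_smul, smul_eq_mul, hxi]
          have hz : L i (b - w) = 0 := by rw [map_sub, hbi, hwi]; ring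
          rw [hz, mul_zero, add_zero, hwi]
        · have hi : i ∈ Finset.univ.filter (fun i => L i w < 0) := by simp [hwi]
          have h1 := hε i hi
          have h2 : s * L i (b - w) ≤ ε * |L i (b - w)| := by
            calc s * L i (b - w) ≤ |s * L i (b - w)| := le_abs_self _
            _ = |s| * |L i (b - w)| := abs_mul _ _
            _ ≤ ε * |L i (b - w)| := mul_le_mul_of_nonneg_right hs (abs_nonneg _)
          linarith
      · show φ (w + s • (b - w)) = 1
        have : φ (w + s • (b - w)) = φ w + s * (φ b - φ w) := by
          simp [map_add, map_smul, map_sub, smul_eq_mul]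
        rw [this, hwB.2, hbB.2]
        ring
    have hp1 : w + ε • (b - w) ∈ B := hmem ε (by rw [abs_of_pos hεpos])
    have hp2 : w + (-ε) • (b - w) ∈ B := hmem (-ε) (by rw [abs_neg, abs_of_pos hεpos])
    have hseg : w ∈ openSegment ℝ (w + ε • (b - w)) (w + (-ε) • (b - w)) := by
      refine ⟨1/2, 1/2, by norm_num, by norm_num, by norm_num, ?_⟩
      module
    obtain ⟨h1, _⟩ := hwprop _ hp1 _ hp2 hseg
    apply hbw
    have : ε • (b - w) = 0 := by
      have := h1
      rwa [add_eq_left] at this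
    have hbw0 : b - w = 0 := by
      rcases smul_eq_zero.1 this with h | h
      · exact absurd h (ne_of_gt hεpos)
      · exact h
    rwa [sub_eq_zero] at hbw0
set_option maxHeartbeats 1000000 in
private lemma two_edges {m : ℕ} (L : Fin m → ((Fin 3 → ℝ) →ₗ[ℝ] ℝ)) (c : Fin m → ℝ)
    (hpt : ∀ x ∈ pC L, -x ∈ pC L → x = (0 : Fin 3 → ℝ))
    (hKne : (pK L c).Nonempty) (hKdim : polyDim 3 (pK L c) = 3)
    (hKunb : ¬ IsBounded (pK L c))
    (u1 u2 : Fin 3 → ℝ) (hu1 : u1 ∈ pC L) (hu2 : u2 ∈ pC L)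
    (hind : LinearIndependent ℝ ![u1, u2]) :
    ∃ A1 A2 w1 w2, IsUnboundedEdgeWithDir 3 (pK L c) A1 w1 ∧
      IsUnboundedEdgeWithDir 3 (pK L c) A2 w2 ∧ LinearIndependent ℝ ![w1, w2] := by
  classical
  have hfin2 := linearIndependent_fin2.1 hind
  simp only [Matrix.cons_val_one, Matrix.head_cons, Matrix.cons_val_zero] at hfin2
  obtain ⟨hu20, hau⟩ := hfin2
  have hu10 : u1 ≠ 0 := fun h => (hau 0) (by rw [zero_smul, h])
  -- the positive functional on the recession cone
  set φ : (Fin 3 → ℝ) →ₗ[ℝ] ℝ := -(∑ i : Fin m, L i) with hφdef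
  have hφx : ∀ x, φ x = -∑ i : Fin m, L i x := by
    intro x; simp [hφdef, LinearMap.sum_apply]
  have hφpos : ∀ x ∈ pC L, x ≠ 0 → 0 < φ x := by
    intro x hx hx0
    rw [hφx]
    have hsum : ∑ i : Fin m, L i x ≤ 0 :=
      Finset.sum_nonpos (fun i _ => hx i)
    rcases eq_or_lt_of_le hsum with heq | hlt
    · exfalso
      have hall : ∀ i ∈ Finset.univ, L i x = 0 := by
        intro i hi
        have := (Finset.sum_eq_zero_iff_of_nonpos (fun j _ => hx j)).1 heq i hi
        exact this
      apply hx0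
      apply hpt x hx
      intro i
      rw [map_neg, hall i (Finset.mem_univ i), neg_zero]
    · linarith
  set P1 : Set (Fin 3 → ℝ) := {x | φ x = 1} with hP1def
  set B : Set (Fin 3 → ℝ) := {x | ∀ i, L i x ≤ 0} ∩ P1 with hBdef
  have hBC : ∀ x ∈ B, x ∈ pC L := fun x hx => hx.1
  have hP1c : IsClosed P1 :=
    IsClosed.preimage φ.continuous_of_finiteDimensional isClosed_singleton
  have hP1z : ∀ y ∈ P1, ∀ y' ∈ P1, ∀ x ∈ P1, ∀ s : ℝ, x + s • (y' - y) ∈ P1 := by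
    intro y hy y' hy' x hx s
    show φ (x + s • (y' - y)) = 1
    have : φ (x + s • (y' - y)) = φ x + s * (φ y' - φ y) := by
      simp [map_add, map_smul, map_sub, smul_eq_mul]
    rw [this, hx, hy, hy']
    ring
  have hBb : IsBounded B := by
    by_contra hub
    have hSprop : ∀ x ∈ B, ∀ j : Fin m ⊕ Bool,
        Sum.elim L (fun b : Bool => if b then φ else -φ) j x ≤
        Sum.elim (fun _ => (0:ℝ)) (fun b : Bool => if b then 1 else -1) j := by
      rintro x hx (i | b)
      · exact hx.1 i
      · have hφx1 : φ x = 1 := hx.2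
        rcases b with _ | _ <;>
          simp only [Sum.elim_inr, Bool.false_eq_true, if_true, if_false,
            LinearMap.neg_apply, hφx1] <;> norm_num
    obtain ⟨w, hw1, hw2, _⟩ := blowup
      (Sum.elim L (fun b : Bool => if b then φ else -φ))
      (Sum.elim (fun _ => 0) (fun b : Bool => if b then 1 else -1))
      B hSprop ⊤ (fun x _ => Submodule.mem_top) hub
    have hwC : w ∈ pC L := fun i => hw2 (Sum.inl i)
    have hφw1 : φ w ≤ 0 := by simpa using hw2 (Sum.inr true)
    have hw0 : w ≠ 0 := by
      intro h; rw [h] at hw1; simp at hw1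
    have := hφpos w hwC hw0
    linarith
  have hnormalize : ∀ u, u ∈ pC L → u ≠ 0 → (φ u)⁻¹ • u ∈ B := by
    intro u huC hu0
    have hφu : 0 < φ u := hφpos u huC hu0
    constructor
    · intro i
      have : L i ((φ u)⁻¹ • u) = (φ u)⁻¹ * L i u := by simp [map_smul, smul_eq_mul]
      rw [this]
      have := huC i
      have hinv : (0:ℝ) ≤ (φ u)⁻¹ := le_of_lt (inv_pos.2 hφu)
      nlinarith
    · show φ ((φ u)⁻¹ • u) = 1
      simp [map_smul, smul_eq_mul]
      field_simp
  have hBne : B.Nonempty := ⟨(φ u1)⁻¹ • u1, hnormalize u1 hu1 hu10⟩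
  -- first extreme point
  obtain ⟨w1, hw1B, J1, hJ1⟩ := exists_vertex L (fun _ => 0) P1 hP1c hP1z hBb hBne
  have hw1tight : ∀ i ∈ J1, L i w1 = 0 := by
    have : w1 ∈ {x ∈ {x | ∀ i, L i x ≤ (0:ℝ)} ∩ P1 | ∀ i ∈ J1, L i x = 0} := by
      rw [hJ1]; rfl
    exact this.2
  have hw1ext : w1 ∈ Set.extremePoints ℝ B := by
    rw [mem_extremePoints]
    refine ⟨hw1B, ?_⟩
    intro x1 hx1 x2 hx2 hseg
    obtain ⟨a, b, ha, hb, hab, habeq⟩ := hseg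
    have htight : ∀ y ∈ B, ∀ z ∈ B, ∀ a' b' : ℝ, 0 < a' → 0 < b' → a' + b' = 1 →
        a' • y + b' • z = w1 → y = w1 ∧ z = w1 := by
      intro y hy z hz a' b' ha' hb' hab' heq
      have hytight : ∀ i ∈ J1, L i y = 0 ∧ L i z = 0 := by
        intro i hi
        have hcomb : a' * L i y + b' * L i z = 0 := by
          have : L i (a' • y + b' • z) = a' * L i y + b' * L i z := by
            simp [map_add, map_smul, smul_eq_mul]
          rw [← this, heq, hw1tight i hi]
        have hy' := hy.1 i
        have hz' := hz.1 i
        constructor <;> nlinarith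
      have hysing : y ∈ ({w1} : Set (Fin 3 → ℝ)) := by
        rw [← hJ1]
        exact ⟨hy, fun i hi => (hytight i hi).1⟩
      have hzsing : z ∈ ({w1} : Set (Fin 3 → ℝ)) := by
        rw [← hJ1]
        exact ⟨hz, fun i hi => (hytight i hi).2⟩
      exact ⟨hysing, hzsing⟩
    exact htight x1 hx1 x2 hx2 a b ha hb hab habeq
  -- second extreme point, separated from the first
  obtain ⟨b2, hb2B, hb2ne⟩ : ∃ b2 ∈ B, b2 ≠ w1 := by
    by_contra hcon
    push_neg at hcon
    have h1 := hcon _ (hnormalize u1 hu1 hu10)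
    have h2 := hcon _ (hnormalize u2 hu2 hu20)
    have hφ1 : 0 < φ u1 := hφpos u1 hu1 hu10
    apply hau (φ u1 / φ u2)
    rw [div_eq_mul_inv, mul_smul, h2, ← h1, smul_inv_smul₀ (ne_of_gt hφ1)]
  set h := dotL (b2 - w1) with hhdef
  have hlt : h w1 < h b2 := by
    have hdiff : h b2 - h w1 = ∑ i : Fin 3, (b2 i - w1 i)^2 := by
      rw [hhdef, dotL_apply, dotL_apply, ← Finset.sum_sub_distrib]
      apply Finset.sum_congr rfl
      intro i _
      simp only [Pi.sub_apply]
      ring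
    have hpos : 0 < ∑ i : Fin 3, (b2 i - w1 i)^2 := by
      obtain ⟨i, hi⟩ := Function.ne_iff.1 hb2ne
      apply Finset.sum_pos' (fun j _ => sq_nonneg _)
      refine ⟨i, Finset.mem_univ i, ?_⟩
      have habs : 0 < |b2 i - w1 i| := abs_pos.2 (sub_ne_zero.2 hi)
      nlinarith [sq_abs (b2 i - w1 i)]
    linarith
  have hBclosed : IsClosed B := by
    apply IsClosed.inter _ hP1c
    have : {x : Fin 3 → ℝ | ∀ i, L i x ≤ 0} = ⋂ i, (L i) ⁻¹' Set.Iic 0 := by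
      ext x; simp [Set.mem_iInter]
    rw [this]
    exact isClosed_iInter fun i =>
      IsClosed.preimage (L i).continuous_of_finiteDimensional isClosed_Iic
  have hBcompact : IsCompact B := Metric.isCompact_of_isClosed_isBounded hBclosed hBb
  have hhcont : Continuous h := h.continuous_of_finiteDimensional
  obtain ⟨bm, hbmB, hbmmax⟩ := hBcompact.exists_isMaxOn hBne hhcont.continuousOn
  set M := h bm with hMdef
  have hmax : ∀ y ∈ B, h y ≤ M := hbmmax
  set P2 : Set (Fin 3 → ℝ) := {x | φ x = 1 ∧ h x = M} with hP2def
  have hP2c : IsClosed P2 := by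
    have : P2 = φ ⁻¹' {1} ∩ h ⁻¹' {M} := by ext x; simp [hP2def]
    rw [this]
    exact (IsClosed.preimage φ.continuous_of_finiteDimensional isClosed_singleton).inter
      (IsClosed.preimage hhcont isClosed_singleton)
  have hP2z : ∀ y ∈ P2, ∀ y' ∈ P2, ∀ x ∈ P2, ∀ s : ℝ, x + s • (y' - y) ∈ P2 := by
    rintro y ⟨hy1, hy2⟩ y' ⟨hy'1, hy'2⟩ x ⟨hx1, hx2⟩ s
    constructor
    · show φ (x + s • (y' - y)) = 1
      have : φ (x + s • (y' - y)) = φ x + s * (φ y' - φ y) := by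
        simp [map_add, map_smul, map_sub, smul_eq_mul]
      rw [this, hx1, hy1, hy'1]; ring
    · show h (x + s • (y' - y)) = M
      have : h (x + s • (y' - y)) = h x + s * (h y' - h y) := by
        simp [map_add, map_smul, map_sub, smul_eq_mul]
      rw [this, hx2, hy2, hy'2]; ring
  set X2 : Set (Fin 3 → ℝ) := {x | ∀ i, L i x ≤ (fun _ : Fin m => (0:ℝ)) i} ∩ P2 with hX2def
  have hX2B : X2 ⊆ B := fun x hx => ⟨hx.1, hx.2.1⟩
  have hX2b : IsBounded X2 := hBb.subset hX2B
  have hX2ne : X2.Nonempty := ⟨bm, fun i => hbmB.1 i, hbmB.2, rfl⟩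
  obtain ⟨w2, hw2X2, J2, hJ2⟩ := exists_vertex L (fun _ => 0) P2 hP2c hP2z hX2b hX2ne
  have hw2tight : ∀ i ∈ J2, L i w2 = 0 := by
    have : w2 ∈ {x ∈ {x | ∀ i, L i x ≤ (0:ℝ)} ∩ P2 | ∀ i ∈ J2, L i x = 0} := by
      rw [hJ2]; rfl
    exact this.2
  have hw2extX2 : w2 ∈ Set.extremePoints ℝ X2 := by
    rw [mem_extremePoints]
    refine ⟨hw2X2, ?_⟩
    intro x1 hx1 x2 hx2 hseg
    obtain ⟨a, b, ha, hb, hab, habeq⟩ := hseg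
    have hytight : ∀ i ∈ J2, L i x1 = 0 ∧ L i x2 = 0 := by
      intro i hi
      have hcomb : a * L i x1 + b * L i x2 = 0 := by
        have : L i (a • x1 + b • x2) = a * L i x1 + b * L i x2 := by
          simp [map_add, map_smul, smul_eq_mul]
        rw [← this, habeq, hw2tight i hi]
      have hy' : L i x1 ≤ 0 := hx1.1 i
      have hz' : L i x2 ≤ 0 := hx2.1 i
      constructor <;> nlinarith
    have hysing : x1 ∈ ({w2} : Set (Fin 3 → ℝ)) := by
      rw [← hJ2]
      exact ⟨hx1, fun i hi => (hytight i hi).1⟩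
    have hzsing : x2 ∈ ({w2} : Set (Fin 3 → ℝ)) := by
      rw [← hJ2]
      exact ⟨hx2, fun i hi => (hytight i hi).2⟩
    exact ⟨hysing, hzsing⟩
  have hXF : IsExtreme ℝ B X2 := by
    refine ⟨hX2B, ?_⟩
    intro x1 hx1 x2 hx2 x hxX2 hseg
    obtain ⟨a, b, ha, hb, hab, habeq⟩ := hseg
    have hxM : h x = M := hxX2.2.2
    have hcomb : a * h x1 + b * h x2 = M := by
      have : h (a • x1 + b • x2) = a * h x1 + b * h x2 := by
        simp [map_add, map_smul, smul_eq_mul]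
      rw [← this, habeq, hxM]
    have h1 := hmax x1 hx1
    have h2 := hmax x2 hx2
    have hM' : a * M + b * M = M := by rw [← add_mul, hab, one_mul]
    have hx1M : h x1 = M := by
      by_contra hne
      have hlt1 : h x1 < M := lt_of_le_of_ne h1 hne
      nlinarith [mul_lt_mul_of_pos_left hlt1 ha, mul_le_mul_of_nonneg_left h2 (le_of_lt hb)]
    have hx2M : h x2 = M := by
      by_contra hne
      have hlt2 : h x2 < M := lt_of_le_of_ne h2 hne
      nlinarith [mul_lt_mul_of_pos_left hlt2 hb, mul_le_mul_of_nonneg_left h1 (le_of_lt ha)]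
    exact ⟨hx1.1, hx1.2, hx1M⟩
  have hw2extB : w2 ∈ Set.extremePoints ℝ B := hXF.extremePoints_subset_extremePoints hw2extX2
  have hw2M : h w2 = M := hw2X2.2.2
  have hw2ne : w2 ≠ w1 := by
    intro heq
    have hble := hmax b2 hb2B
    rw [heq] at hw2M
    linarith
  -- build the edges
  have hedge : ∀ w', w' ∈ Set.extremePoints ℝ B →
      ∃ A, IsUnboundedEdgeWithDir 3 (pK L c) A w' := by
    intro w' hext'
    have hw'B : w' ∈ B := hext'.1
    have hw'C : w' ∈ pC L := hw'B.1
    have hw'0 : w' ≠ 0 := by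
      intro h0
      have hφ0 : φ (0 : Fin 3 → ℝ) = 1 := by rw [← h0]; exact hw'B.2
      rw [map_zero] at hφ0
      exact zero_ne_one hφ0
    set Jt : Finset (Fin m) := Finset.univ.filter (fun i => L i w' = 0) with hJt
    set f : (Fin 3 → ℝ) →ₗ[ℝ] ℝ := ∑ i ∈ Jt, L i with hfdef
    have hfx : ∀ x, f x = ∑ i ∈ Jt, L i x := by
      intro x; rw [hfdef]; simp [LinearMap.sum_apply]
    have hfC : ∀ x ∈ pC L, f x ≤ 0 := by
      intro x hx; rw [hfx]
      exact Finset.sum_nonpos (fun i _ => hx i)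
    have hfw : f w' = 0 := by
      rw [hfx]
      apply Finset.sum_eq_zero
      intro i hi
      exact (Finset.mem_filter.1 hi).2
    have hfray : ∀ x ∈ pC L, f x = 0 → ∃ t : ℝ, 0 ≤ t ∧ x = t • w' := by
      intro x hx hfx0
      apply cone_ray L φ hφpos w' hext' x hx
      intro i hiw
      have hiJt : i ∈ Jt := by simp [hJt, hiw]
      rw [hfx] at hfx0
      exact (Finset.sum_eq_zero_iff_of_nonpos (fun j _ => hx j)).1 hfx0 i hiJt
    exact edge_exists L c hpt hKne hKdim hKunb w' hw'C hw'0 f hfC hfw hfray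
  obtain ⟨A1, hA1⟩ := hedge w1 hw1ext
  obtain ⟨A2, hA2⟩ := hedge w2 hw2extB
  refine ⟨A1, A2, w1, w2, hA1, hA2, ?_⟩
  rw [linearIndependent_fin2]
  simp only [Matrix.cons_val_one, Matrix.head_cons, Matrix.cons_val_zero]
  constructor
  · intro h0
    have hφ0 : φ (0 : Fin 3 → ℝ) = 1 := by rw [← h0]; exact hw2X2.2.1
    rw [map_zero] at hφ0
    exact zero_ne_one hφ0
  · intro a ha
    have hφw1 : φ w1 = 1 := hw1B.2
    have hφw2 : φ w2 = 1 := hw2X2.2.1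
    have : φ (a • w2) = a := by
      simp [map_smul, smul_eq_mul, hφw2]
    rw [ha, hφw1] at this
    rw [← this, one_smul] at ha
    exact hw2ne ha
set_option maxHeartbeats 1000000 in
private lemma functional_bounded {m : ℕ} (L : Fin m → ((Fin 3 → ℝ) →ₗ[ℝ] ℝ)) (c : Fin m → ℝ)
    (u : Fin 3 → ℝ) (hu0 : u ≠ 0)
    (hCline : ∀ x ∈ pC L, ∃ r : ℝ, x = r • u)
    (g : (Fin 3 → ℝ) →ₗ[ℝ] ℝ) (hgu : g u = 0) :
    ∃ Cb : ℝ, ∀ x ∈ pK L c, g x ≤ Cb := by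
  classical
  set combo : Fin m × Fin m → ((Fin 3 → ℝ) →ₗ[ℝ] ℝ) :=
    fun p => (-(L p.2 u)) • L p.1 + (L p.1 u) • L p.2 with hcombo
  set comboC : Fin m × Fin m → ℝ :=
    fun p => (-(L p.2 u)) * c p.1 + (L p.1 u) * c p.2 with hcomboC
  have hcombo_apply : ∀ p y, combo p y = (-(L p.2 u)) * L p.1 y + (L p.1 u) * L p.2 y := by
    intro p y; simp [hcombo, smul_eq_mul]
  set Q : Set (Fin 3 → ℝ) :=
    {y | (∀ i, L i u = 0 → L i y ≤ c i) ∧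
      (∀ p : Fin m × Fin m, 0 < L p.1 u → L p.2 u < 0 → combo p y ≤ comboC p)} with hQ
  have hKQ : pK L c ⊆ Q := by
    intro x hx
    constructor
    · intro i _; exact hx i
    · intro p hp1 hp2
      rw [hcombo_apply]
      simp only [hcomboC]
      have h1 : (-(L p.2 u)) * L p.1 x ≤ (-(L p.2 u)) * c p.1 :=
        mul_le_mul_of_nonneg_left (hx p.1) (by linarith)
      have h2 : (L p.1 u) * L p.2 x ≤ (L p.1 u) * c p.2 :=
        mul_le_mul_of_nonneg_left (hx p.2) (by linarith)
      linarith
  have hQinv : ∀ y ∈ Q, ∀ s : ℝ, y + s • u ∈ Q := by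
    rintro y ⟨hy1, hy2⟩ s
    constructor
    · intro i hi
      have : L i (y + s • u) = L i y + s * L i u := by
        simp [map_add, map_smul, smul_eq_mul]
      rw [this, hi, mul_zero, add_zero]
      exact hy1 i hi
    · intro p hp1 hp2
      have : combo p (y + s • u) = combo p y + s * combo p u := by
        simp [map_add, map_smul, smul_eq_mul]
      rw [this]
      have hzero : combo p u = 0 := by
        rw [hcombo_apply]; ring
      rw [hzero, mul_zero, add_zero]
      exact hy2 p hp1 hp2
  set ψ : (Fin 3 → ℝ) →ₗ[ℝ] ℝ := dotL u with hψ
  have hψu : 0 < ψ u := by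
    rw [hψ, dotL_apply]
    obtain ⟨i, hi⟩ := Function.ne_iff.1 hu0
    apply Finset.sum_pos' (fun j _ => mul_self_nonneg _)
    refine ⟨i, Finset.mem_univ i, ?_⟩
    have habs : 0 < |u i| := abs_pos.2 hi
    nlinarith [sq_abs (u i), sq (u i)]
  set S : Set (Fin 3 → ℝ) := Q ∩ {y | ψ y = 0} with hSdef
  have hproj : ∀ x ∈ pK L c, ∃ y ∈ S, g y = g x := by
    intro x hx
    refine ⟨x + (-(ψ x / ψ u)) • u, ⟨hQinv x (hKQ hx) _, ?_⟩, ?_⟩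
    · show ψ (x + (-(ψ x / ψ u)) • u) = 0
      have : ψ (x + (-(ψ x / ψ u)) • u) = ψ x + (-(ψ x / ψ u)) * ψ u := by
        simp [map_add, map_smul, smul_eq_mul]
      rw [this]
      field_simp
      ring
    · have : g (x + (-(ψ x / ψ u)) • u) = g x + (-(ψ x / ψ u)) * g u := by
        simp [map_add, map_smul, smul_eq_mul]
      rw [this, hgu, mul_zero, add_zero]
  by_contra hnb
  push_neg at hnb
  have hSne : S.Nonempty := by
    obtain ⟨x, hx, _⟩ := hnb 0
    obtain ⟨y, hy, _⟩ := hproj x hx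
    exact ⟨y, hy⟩
  have hQc : IsClosed Q := by
    have h1 : IsClosed {y : Fin 3 → ℝ | ∀ i, L i u = 0 → L i y ≤ c i} := by
      have : {y : Fin 3 → ℝ | ∀ i, L i u = 0 → L i y ≤ c i} =
          ⋂ i, {y | L i u = 0 → L i y ≤ c i} := by ext y; simp [Set.mem_iInter]
      rw [this]
      refine isClosed_iInter fun i => ?_
      by_cases h : L i u = 0
      · have : {y : Fin 3 → ℝ | L i u = 0 → L i y ≤ c i} = (L i) ⁻¹' Set.Iic (c i) := by
          ext y; simp [h]
        rw [this]
        exact IsClosed.preimage (L i).continuous_of_finiteDimensional isClosed_Iic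
      · have : {y : Fin 3 → ℝ | L i u = 0 → L i y ≤ c i} = Set.univ := by
          ext y; simp [h]
        rw [this]; exact isClosed_univ
    have h2 : IsClosed {y : Fin 3 → ℝ |
        ∀ p : Fin m × Fin m, 0 < L p.1 u → L p.2 u < 0 → combo p y ≤ comboC p} := by
      have : {y : Fin 3 → ℝ |
          ∀ p : Fin m × Fin m, 0 < L p.1 u → L p.2 u < 0 → combo p y ≤ comboC p} =
          ⋂ p : Fin m × Fin m, {y | 0 < L p.1 u → L p.2 u < 0 → combo p y ≤ comboC p} := by
        ext y; simp [Set.mem_iInter]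
      rw [this]
      refine isClosed_iInter fun p => ?_
      by_cases hp1 : 0 < L p.1 u
      · by_cases hp2 : L p.2 u < 0
        · have : {y : Fin 3 → ℝ | 0 < L p.1 u → L p.2 u < 0 → combo p y ≤ comboC p} =
              (combo p) ⁻¹' Set.Iic (comboC p) := by ext y; simp [hp1, hp2]
          rw [this]
          exact IsClosed.preimage (combo p).continuous_of_finiteDimensional isClosed_Iic
        · have : {y : Fin 3 → ℝ | 0 < L p.1 u → L p.2 u < 0 → combo p y ≤ comboC p} =
              Set.univ := by ext y; simp [hp2]
          rw [this]; exact isClosed_univ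
      · have : {y : Fin 3 → ℝ | 0 < L p.1 u → L p.2 u < 0 → combo p y ≤ comboC p} =
            Set.univ := by ext y; simp [hp1]
        rw [this]; exact isClosed_univ
    have hsplit : Q = {y : Fin 3 → ℝ | ∀ i, L i u = 0 → L i y ≤ c i} ∩
        {y : Fin 3 → ℝ |
          ∀ p : Fin m × Fin m, 0 < L p.1 u → L p.2 u < 0 → combo p y ≤ comboC p} := by
      ext y
      simp only [hQ, Set.mem_setOf_eq, Set.mem_inter_iff]
    rw [hsplit]
    exact h1.inter h2
  have hSc : IsClosed S :=
    hQc.inter (IsClosed.preimage ψ.continuous_of_finiteDimensional isClosed_singleton)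
  have hSunb : ¬ IsBounded S := by
    intro hSb
    obtain ⟨ymax, hymax, hmax⟩ := (Metric.isCompact_of_isClosed_isBounded hSc hSb).exists_isMaxOn
      hSne g.continuous_of_finiteDimensional.continuousOn
    obtain ⟨x, hx, hgx⟩ := hnb (g ymax)
    obtain ⟨y, hy, hgy⟩ := hproj x hx
    have := hmax hy
    simp only [Set.mem_setOf_eq] at this
    rw [hgy] at this
    linarith
  -- blow up along S
  have hSprop : ∀ y ∈ S, ∀ j : Fin m ⊕ Fin m × Fin m,
      (fun j : Fin m ⊕ Fin m × Fin m => Sum.elim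
        (fun i => if L i u = 0 then L i else 0)
        (fun p => if 0 < L p.1 u ∧ L p.2 u < 0 then combo p else 0) j) j y ≤
      (fun j => Sum.elim
        (fun i => if L i u = 0 then c i else 0)
        (fun p => if 0 < L p.1 u ∧ L p.2 u < 0 then comboC p else 0) j) j := by
    rintro y ⟨hy1, hy2⟩ (i | p)
    · by_cases h : L i u = 0
      · simpa [h] using hy1.1 i h
      · simp [h]
    · by_cases h : 0 < L p.1 u ∧ L p.2 u < 0
      · simpa [h] using hy1.2 p h.1 h.2
      · simp [h]
  have hSV : S ⊆ (LinearMap.ker ψ : Submodule ℝ (Fin 3 → ℝ)) := by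
    rintro y ⟨_, hy2⟩
    exact LinearMap.mem_ker.2 hy2
  obtain ⟨w, hwn, hwle, hwV⟩ := blowup
    (fun j : Fin m ⊕ Fin m × Fin m => Sum.elim
      (fun i => if L i u = 0 then L i else 0)
      (fun p => if 0 < L p.1 u ∧ L p.2 u < 0 then combo p else 0) j)
    (fun j => Sum.elim
      (fun i => if L i u = 0 then c i else 0)
      (fun p => if 0 < L p.1 u ∧ L p.2 u < 0 then comboC p else 0) j)
    S hSprop (LinearMap.ker ψ) hSV hSunb
  have hwI0 : ∀ i, L i u = 0 → L i w ≤ 0 := by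
    intro i hi
    have := hwle (Sum.inl i)
    simpa [hi] using this
  have hwcombo : ∀ p : Fin m × Fin m, 0 < L p.1 u → L p.2 u < 0 → combo p w ≤ 0 := by
    intro p hp1 hp2
    have := hwle (Sum.inr p)
    simpa [hp1, hp2] using this
  have hψw : ψ w = 0 := LinearMap.mem_ker.1 hwV
  -- find t with w + t u in the cone
  have hcone : ∃ t : ℝ, w + t • u ∈ pC L := by
    by_cases hIp : ∃ i, 0 < L i u
    · obtain ⟨ip, hip⟩ := hIp
      set Ip : Finset (Fin m) := Finset.univ.filter (fun i => 0 < L i u) with hIpdef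
      have hIpne : Ip.Nonempty := ⟨ip, by simp [hIpdef, hip]⟩
      obtain ⟨i1, hi1Ip, hi1min⟩ :=
        Finset.exists_min_image Ip (fun i => -(L i w) / (L i u)) hIpne
      have hi1pos : 0 < L i1 u := (Finset.mem_filter.1 hi1Ip).2
      set t : ℝ := -(L i1 w) / (L i1 u) with htdef
      have htu : t * L i1 u = -(L i1 w) := div_mul_cancel₀ _ (ne_of_gt hi1pos)
      refine ⟨t, fun i => ?_⟩
      have hval : L i (w + t • u) = L i w + t * L i u := by
        simp [map_add, map_smul, smul_eq_mul]
      rw [hval]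
      rcases lt_trichotomy (L i u) 0 with hiu | hiu | hiu
      · -- use the combo constraint for (i1, i)
        have hc := hwcombo (i1, i) hi1pos hiu
        rw [hcombo_apply] at hc
        simp only at hc
        by_contra hcon
        push_neg at hcon
        have := mul_pos hi1pos hcon
        nlinarith [htu]
      · rw [hiu, mul_zero, add_zero]
        exact hwI0 i hiu
      · have hiIp : i ∈ Ip := by simp [hIpdef, hiu]
        have hle := hi1min i hiIp
        have h2 : t * L i u ≤ (-(L i w) / (L i u)) * L i u :=
          mul_le_mul_of_nonneg_right hle (le_of_lt hiu)
        rw [div_mul_cancel₀ _ (ne_of_gt hiu)] at h2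
        linarith
    · by_cases hIn : ∃ i, L i u < 0
      · obtain ⟨jn, hjn⟩ := hIn
        set In : Finset (Fin m) := Finset.univ.filter (fun i => L i u < 0) with hIndef
        have hInne : In.Nonempty := ⟨jn, by simp [hIndef, hjn]⟩
        obtain ⟨j1, hj1In, hj1max⟩ :=
          Finset.exists_max_image In (fun i => -(L i w) / (L i u)) hInne
        have hj1neg : L j1 u < 0 := (Finset.mem_filter.1 hj1In).2
        set t : ℝ := -(L j1 w) / (L j1 u) with htdef
        refine ⟨t, fun i => ?_⟩
        have hval : L i (w + t • u) = L i w + t * L i u := by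
          simp [map_add, map_smul, smul_eq_mul]
        rw [hval]
        rcases lt_trichotomy (L i u) 0 with hiu | hiu | hiu
        · have hiIn : i ∈ In := by simp [hIndef, hiu]
          have hle := hj1max i hiIn
          have h2 : t * L i u ≤ (-(L i w) / (L i u)) * L i u :=
            mul_le_mul_of_nonpos_right hle (le_of_lt hiu)
          rw [div_mul_cancel₀ _ (ne_of_lt hiu)] at h2
          linarith
        · rw [hiu, mul_zero, add_zero]
          exact hwI0 i hiu
        · exact absurd ⟨i, hiu⟩ hIp
      · push_neg at hIp hIn
        refine ⟨0, fun i => ?_⟩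
        have hiu : L i u = 0 := le_antisymm (hIp i) (hIn i)
        have hval : L i (w + (0:ℝ) • u) = L i w := by
          simp [map_add, map_smul, smul_eq_mul]
        rw [hval]
        exact hwI0 i hiu
  obtain ⟨t, htC⟩ := hcone
  obtain ⟨r, hr⟩ := hCline _ htC
  have hw' : w = (r - t) • u := by
    have : w = w + t • u - t • u := by abel
    rw [this, hr, sub_smul]
  have hψ0 : ψ w = (r - t) * ψ u := by
    rw [hw', map_smul, smul_eq_mul]
  rw [hψw] at hψ0
  have hrt : r - t = 0 := by
    rcases mul_eq_zero.1 hψ0.symm with h | h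
    · exact h
    · exact absurd h (ne_of_gt hψu)
  rw [hrt, zero_smul] at hw'
  rw [hw'] at hwn
  simp at hwn

set_option maxHeartbeats 1600000

/-- Proposition 2 (ii): if all unbounded edges of a non-degenerate 3-dimensional
unbounded convex polyhedron are parallel, then it can be placed in second trimming
position with respect to any of its bounded facets. -/
theorem placed_second_trimming_of_parallel_unbounded_edges
    (K : Set (Fin 3 → ℝ)) (hpoly : IsConvexPolyhedron 3 K)
    (hdim : polyDim 3 K = 3) (hunb : ¬ IsBounded K)
    (hnd : ∃ p, IsVertexOf 3 K p)
    (hpar : ∀ (A₁ A₂ : Set (Fin 3 → ℝ)) (v₁ v₂ : Fin 3 → ℝ),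
      IsUnboundedEdgeWithDir 3 K A₁ v₁ → IsUnboundedEdgeWithDir 3 K A₂ v₂ →
      ¬ LinearIndependent ℝ ![v₁, v₂]) :
    ∀ F, IsFacetOf 3 K F → IsBounded F →
      ∃ T : (Fin 3 → ℝ) ≃ᵃ[ℝ] (Fin 3 → ℝ),
        SecondTrimmingPosition 3 (T '' K) (T '' F) := by
  classical
  intro F hF hFb
  obtain ⟨m, L, c, hL0, hKeq⟩ := hpoly
  have hKpk : K = pK L c := hKeq
  subst hKpk
  -- pointedness of the recession cone
  obtain ⟨p, hp⟩ := hnd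
  obtain ⟨Lv, cv, hLv0, hvne, hvle, hveq⟩ := hp
  have hpmem : p ∈ pK L c ∩ {x | Lv x = cv} := by
    rw [← hveq]; rfl
  have hpt : ∀ x ∈ pC L, -x ∈ pC L → x = (0 : Fin 3 → ℝ) := by
    intro x hx hnx
    have h1 : p + x ∈ pK L c := by
      intro i
      have : L i (p + x) = L i p + L i x := by simp [map_add]
      rw [this]
      have := hpmem.1 i
      have := hx i
      linarith
    have h2 : p - x ∈ pK L c := by
      intro i
      have : L i (p - x) = L i p - L i x := by simp [map_sub]
      rw [this]
      have := hpmem.1 i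
      have h3 := hnx i
      rw [map_neg] at h3
      linarith
    have h3 : Lv (p + x) ≤ cv := hvle _ h1
    have h4 : Lv (p - x) ≤ cv := hvle _ h2
    have h5 : Lv p = cv := hpmem.2
    have h6 : Lv x = 0 := by
      rw [map_add] at h3
      rw [map_sub] at h4
      linarith
    have h7 : p + x ∈ ({p} : Set (Fin 3 → ℝ)) := by
      rw [hveq]
      exact ⟨h1, by rw [Set.mem_setOf_eq, map_add, h5, h6, add_zero]⟩
    have := Set.mem_singleton_iff.1 h7
    have := congrArg (fun y => y - p) this
    simpa using this
  have hKne : (pK L c).Nonempty := ⟨p, hpmem.1⟩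
  -- recession direction u
  obtain ⟨u, hun, huC, -⟩ := blowup L c (pK L c) (fun x hx j => hx j) ⊤
    (fun x _ => Submodule.mem_top) hunb
  have hu0 : u ≠ 0 := by
    intro h; rw [h] at hun; simp at hun
  -- all recession directions are parallel to u
  have hCline : ∀ x ∈ pC L, ∃ r : ℝ, x = r • u := by
    intro x hx
    by_cases hdep : LinearIndependent ℝ ![u, x]
    · exfalso
      obtain ⟨A1, A2, w1, w2, e1, e2, hw⟩ :=
        two_edges L c hpt hKne hdim hunb u x huC hx hdep
      exact hpar A1 A2 w1 w2 e1 e2 hw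
    · rw [linearIndependent_fin2] at hdep
      push_neg at hdep
      simp only [Matrix.cons_val_one, Matrix.head_cons, Matrix.cons_val_zero] at hdep
      by_cases hx0 : x = 0
      · exact ⟨0, by rw [hx0, zero_smul]⟩
      · obtain ⟨a, ha⟩ := hdep hx0
        have ha0 : a ≠ 0 := by
          intro h; rw [h, zero_smul] at ha; exact hu0 ha.symm
        refine ⟨a⁻¹, ?_⟩
        rw [← ha, smul_smul, inv_mul_cancel₀ ha0, one_smul]
  -- data of the bounded facet F
  obtain ⟨⟨ℓ, c₀, hℓ0, hFne, hKle, hFeq⟩, hFdim⟩ := hF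
  obtain ⟨xb, hxbK, hxbl⟩ := hFne
  have hxbF : xb ∈ F := by rw [hFeq]; exact ⟨hxbK, hxbl⟩
  have hrecK : ∀ x ∈ pK L c, ∀ t : ℝ, 0 ≤ t → x + t • u ∈ pK L c := by
    intro x hx t ht i
    have : L i (x + t • u) = L i x + t * L i u := by simp [map_add, map_smul, smul_eq_mul]
    rw [this]
    nlinarith [hx i, huC i]
  have hℓu : ℓ u < 0 := by
    rcases lt_trichotomy (ℓ u) 0 with h | h | h
    · exact h
    · exfalso
      have hray : {x | ∃ t : ℝ, 0 ≤ t ∧ x = xb + t • u} ⊆ F := by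
        rintro x ⟨t, ht, rfl⟩
        rw [hFeq]
        refine ⟨hrecK xb hxbK t ht, ?_⟩
        rw [Set.mem_setOf_eq, map_add, map_smul, smul_eq_mul, h, mul_zero, add_zero]
        exact hxbl
      exact ray_not_bounded hu0 (hFb.subset hray)
    · exfalso
      have h1 := hrecK xb hxbK (1 / ℓ u) (by positivity)
      have h2 := hKle _ h1
      rw [map_add, map_smul, smul_eq_mul] at h2
      have : ℓ xb = c₀ := hxbl
      rw [this] at h2
      have : (1 / ℓ u) * ℓ u = 1 := by field_simp
      rw [this] at h2
      linarith
  -- choose coordinates adapted to ℓ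
  have hij : ∃ j0 j1 : Fin 3, ∀ x : Fin 3 → ℝ, x j0 = 0 → x j1 = 0 → ℓ x = 0 → x = 0 := by
    have hex : ∃ i2 : Fin 3, ℓ (fun j => if i2 = j then (1:ℝ) else 0) ≠ 0 := by
      by_contra hcon
      push_neg at hcon
      apply hℓ0
      apply LinearMap.ext
      intro x
      rw [LinearMap.pi_apply_eq_sum_univ ℓ x]
      simp only [LinearMap.zero_apply]
      apply Finset.sum_eq_zero
      intro i _
      rw [hcon i, smul_zero]
    obtain ⟨i2, hi2⟩ := hex
    have hsum : ∀ x : Fin 3 → ℝ, ℓ x =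
        x 0 * ℓ (fun j => if (0:Fin 3) = j then (1:ℝ) else 0) +
        x 1 * ℓ (fun j => if (1:Fin 3) = j then (1:ℝ) else 0) +
        x 2 * ℓ (fun j => if (2:Fin 3) = j then (1:ℝ) else 0) := by
      intro x
      rw [LinearMap.pi_apply_eq_sum_univ ℓ x, Fin.sum_univ_three]
      simp [smul_eq_mul]
    fin_cases i2
    · refine ⟨1, 2, fun x h1 h2 hl => ?_⟩
      rw [hsum x, h1, h2] at hl
      simp only [zero_mul, add_zero] at hl
      have hx0 : x 0 = 0 := by
        rcases mul_eq_zero.1 hl with h | h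
        · exact h
        · exact absurd h hi2
      funext j; fin_cases j <;> assumption
    · refine ⟨0, 2, fun x h1 h2 hl => ?_⟩
      rw [hsum x, h1, h2] at hl
      simp only [zero_mul, add_zero, zero_add] at hl
      have hx0 : x 1 = 0 := by
        rcases mul_eq_zero.1 hl with h | h
        · exact h
        · exact absurd h hi2
      funext j; fin_cases j <;> assumption
    · refine ⟨0, 1, fun x h1 h2 hl => ?_⟩
      rw [hsum x, h1, h2] at hl
      simp only [zero_mul, add_zero, zero_add] at hl
      have hx0 : x 2 = 0 := by
        rcases mul_eq_zero.1 hl with h | h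
        · exact h
        · exact absurd h hi2
      funext j; fin_cases j <;> assumption
  obtain ⟨j0, j1, hij⟩ := hij
  set g0 : (Fin 3 → ℝ) →ₗ[ℝ] ℝ := LinearMap.proj j0 - (u j0 / ℓ u) • ℓ with hg0
  set g1 : (Fin 3 → ℝ) →ₗ[ℝ] ℝ := LinearMap.proj j1 - (u j1 / ℓ u) • ℓ with hg1
  have hg0x : ∀ x, g0 x = x j0 - (u j0 / ℓ u) * ℓ x := by
    intro x; simp [hg0, smul_eq_mul]
  have hg1x : ∀ x, g1 x = x j1 - (u j1 / ℓ u) * ℓ x := by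
    intro x; simp [hg1, smul_eq_mul]
  have hℓune : ℓ u ≠ 0 := ne_of_lt hℓu
  have hg0u : g0 u = 0 := by
    rw [hg0x, div_mul_cancel₀ _ hℓune, sub_self]
  have hg1u : g1 u = 0 := by
    rw [hg1x, div_mul_cancel₀ _ hℓune, sub_self]
  set P : (Fin 3 → ℝ) →ₗ[ℝ] (Fin 3 → ℝ) := LinearMap.pi
    (fun k : Fin 3 => if k = 2 then ℓ else (if k = 0 then g0 else g1)) with hP
  have hP2 : ∀ x, P x 2 = ℓ x := by intro x; simp [hP, LinearMap.pi_apply]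
  have hP0 : ∀ x, P x 0 = g0 x := by intro x; simp [hP, LinearMap.pi_apply]
  have hP1 : ∀ x, P x 1 = g1 x := by intro x; simp [hP, LinearMap.pi_apply]
  have hPinj : Function.Injective P := by
    rw [← LinearMap.ker_eq_bot, LinearMap.ker_eq_bot']
    intro x hx
    have hx2 : ℓ x = 0 := by rw [← hP2 x, hx]; rfl
    have hx0 : x j0 = 0 := by
      have := hP0 x
      rw [hx] at this
      rw [hg0x, hx2, mul_zero, sub_zero] at this
      exact this.symm
    have hx1 : x j1 = 0 := by
      have := hP1 x
      rw [hx] at this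
      rw [hg1x, hx2, mul_zero, sub_zero] at this
      exact this.symm
    exact hij x hx0 hx1 hx2
  have hPbij : Function.Bijective P :=
    ⟨hPinj, (LinearMap.injective_iff_surjective).1 hPinj⟩
  set Pe : (Fin 3 → ℝ) ≃ₗ[ℝ] (Fin 3 → ℝ) := LinearEquiv.ofBijective P hPbij with hPe
  set w0 : Fin 3 → ℝ := fun k => if k = 2 then -c₀ else 0 with hw0
  set T : (Fin 3 → ℝ) ≃ᵃ[ℝ] (Fin 3 → ℝ) :=
    Pe.toAffineEquiv.trans (AffineEquiv.constVAdd ℝ (Fin 3 → ℝ) w0) with hT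
  have hTx : ∀ x, T x = w0 + P x := by
    intro x
    simp only [hT, AffineEquiv.trans_apply, LinearEquiv.coe_toAffineEquiv, hPe,
      AffineEquiv.constVAdd_apply, vadd_eq_add]
    rfl
  have hT2 : ∀ x, T x 2 = ℓ x - c₀ := by
    intro x
    have h' : T x 2 = w0 2 + P x 2 := by rw [hTx]; rfl
    rw [h', hP2]
    show (if (2:Fin 3) = 2 then -c₀ else 0) + ℓ x = ℓ x - c₀
    rw [if_pos rfl]; ring
  have hT0 : ∀ x, T x 0 = g0 x := by
    intro x
    have h' : T x 0 = w0 0 + P x 0 := by rw [hTx]; rfl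
    rw [h', hP0]
    show (if (0:Fin 3) = 2 then -c₀ else 0) + g0 x = g0 x
    rw [if_neg (by decide)]; ring
  have hT1 : ∀ x, T x 1 = g1 x := by
    intro x
    have h' : T x 1 = w0 1 + P x 1 := by rw [hTx]; rfl
    rw [h', hP1]
    show (if (1:Fin 3) = 2 then -c₀ else 0) + g1 x = g1 x
    rw [if_neg (by decide)]; ring
  have hTinj : Function.Injective T := T.toEquiv.injective
  -- bounds on g0, g1 over K
  obtain ⟨C0, hC0⟩ := functional_bounded L c u hu0 hCline g0 hg0u
  obtain ⟨C0', hC0'⟩ := functional_bounded L c u hu0 hCline (-g0)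
    (by rw [LinearMap.neg_apply, hg0u, neg_zero])
  obtain ⟨C1, hC1⟩ := functional_bounded L c u hu0 hCline g1 hg1u
  obtain ⟨C1', hC1'⟩ := functional_bounded L c u hu0 hCline (-g1)
    (by rw [LinearMap.neg_apply, hg1u, neg_zero])
  -- invariance of polyDim under T
  have hpolyDim : ∀ S : Set (Fin 3 → ℝ), polyDim 3 (T '' S) = polyDim 3 S := by
    intro S
    rw [polyDim, polyDim]
    have h1 : (affineSpan ℝ S).map (T : (Fin 3 → ℝ) →ᵃ[ℝ] (Fin 3 → ℝ)) =
        affineSpan ℝ ((T : (Fin 3 → ℝ) →ᵃ[ℝ] (Fin 3 → ℝ)) '' S) :=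
      AffineSubspace.map_span _ S
    have h2 : ((T : (Fin 3 → ℝ) →ᵃ[ℝ] (Fin 3 → ℝ)) '' S) = T '' S := rfl
    rw [h2] at h1
    rw [← h1, AffineSubspace.map_direction]
    exact LinearEquiv.finrank_map_eq (AffineEquiv.linear T) _
  refine ⟨T, ?_, ?_, ?_, ?_⟩
  · -- facet
    constructor
    · refine ⟨LinearMap.proj 2, 0, ?_, ⟨T xb, ?_⟩, ?_, ?_⟩
      · intro h
        have := LinearMap.ext_iff.1 h (fun k => if k = 2 then (1:ℝ) else 0)
        simp [LinearMap.proj_apply] at this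
      · refine ⟨⟨xb, hxbK, rfl⟩, ?_⟩
        rw [Set.mem_setOf_eq, LinearMap.proj_apply, hT2, hxbl, sub_self]
      · rintro y ⟨x, hx, rfl⟩
        rw [LinearMap.proj_apply, hT2]
        have := hKle x hx
        linarith
      · ext y
        constructor
        · rintro ⟨x, hxF, rfl⟩
          rw [hFeq] at hxF
          refine ⟨⟨x, hxF.1, rfl⟩, ?_⟩
          rw [Set.mem_setOf_eq, LinearMap.proj_apply, hT2]
          have : ℓ x = c₀ := hxF.2
          rw [this, sub_self]
        · rintro ⟨⟨x, hx, rfl⟩, hy2⟩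
          refine ⟨x, ?_, rfl⟩
          rw [hFeq]
          refine ⟨hx, ?_⟩
          rw [Set.mem_setOf_eq, LinearMap.proj_apply, hT2] at hy2
          have : ℓ x = c₀ := by linarith
          exact this
    · rw [hpolyDim, hpolyDim]
      exact hFdim
  · -- F goes to the hyperplane
    rintro x ⟨z, hzF, rfl⟩ i hi
    have : i = 2 := Fin.ext hi
    subst this
    rw [hT2]
    rw [hFeq] at hzF
    have : ℓ z = c₀ := hzF.2
    rw [this, sub_self]
  · -- K below
    rintro x ⟨z, hzK, rfl⟩ i hi
    have : i = 2 := Fin.ext hi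
    subst this
    rw [hT2]
    have := hKle z hzK
    linarith
  · -- A_K is bounded
    set R : ℝ := max (max C0 C0') (max C1 C1') with hR
    have hRR : 0 ≤ max R 0 := le_max_right _ _
    rw [isBounded_iff_forall_norm_le]
    refine ⟨max R 0, ?_⟩
    rintro y ⟨hy1, ⟨z, hz1, hz2⟩, _⟩
    obtain ⟨x, hxK, rfl⟩ := hz2
    have hy0 : y 0 = g0 x := by
      have h0 : projLast 3 (T x) 0 = T x 0 := by
        rw [projLast]; norm_num
      rw [← hz1, h0, hT0]
    have hy1' : y 1 = g1 x := by
      have h0 : projLast 3 (T x) 1 = T x 1 := by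
        rw [projLast]; norm_num
      rw [← hz1, h0, hT1]
    have hy2' : y 2 = 0 := hy1 2 rfl
    rw [pi_norm_le_iff_of_nonneg hRR]
    intro i
    fin_cases i
    · show ‖y 0‖ ≤ max R 0
      rw [Real.norm_eq_abs, hy0, abs_le]
      constructor
      · have := hC0' x hxK
        rw [LinearMap.neg_apply] at this
        have h1 : C0' ≤ max C0 C0' := le_max_right _ _
        have h2 : max C0 C0' ≤ R := le_max_left _ _
        have h3 : R ≤ max R 0 := le_max_left _ _
        linarith
      · have := hC0 x hxK
        have h1 : C0 ≤ max C0 C0' := le_max_left _ _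
        have h2 : max C0 C0' ≤ R := le_max_left _ _
        have h3 : R ≤ max R 0 := le_max_left _ _
        linarith
    · show ‖y 1‖ ≤ max R 0
      rw [Real.norm_eq_abs, hy1', abs_le]
      constructor
      · have := hC1' x hxK
        rw [LinearMap.neg_apply] at this
        have h1 : C1' ≤ max C1 C1' := le_max_right _ _
        have h2 : max C1 C1' ≤ R := le_max_right _ _
        have h3 : R ≤ max R 0 := le_max_left _ _
        linarith
      · have := hC1 x hxK
        have h1 : C1 ≤ max C1 C1' := le_max_left _ _
        have h2 : max C1 C1' ≤ R := le_max_right _ _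
        have h3 : R ≤ max R 0 := le_max_left _ _
        linarith
    · show ‖y 2‖ ≤ max R 0
      rw [Real.norm_eq_abs, hy2', abs_zero]
      exact hRR
end
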